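/- arXiv:2212.12241 — 4 statements merged into one kernel-verified Lean document; each statement's English description precedes it below -/
import Mathlib

section
/- Let r > 1 be an integer and {X_n, n ≥ 1} a sequence of real random variables stochastically dominated by a random variable X with E|X| < ∞. Let {b_n} be a nondecreasing sequence of positive constants and {a_{n,k} : 1 ≤ k ≤ n+1, n ≥ 1} an array of positive constants satisfying: (a) Σ_{k=1}^{n+1} a_{n,k} = O(b_{r^n}) as n → ∞; and (b') Σ_{k=1}^{n+1} r^k E[|X| 1{|X| > b_{r^{k−1}}}] = o(b_{r^n}) as n → ∞. Then, for every ε > 0, there exist a positive integer n₀ and a constant C(r) > 0 such that for all n ≥ n₀: P{ max_{1 ≤ m < r^{n+1}} |Σ_{k=1}^{m} (X_k − E X_k)| > ε b_{r^n} } ≤ C(r) r^n P{|X| > b_{r^{n+1}}} + (C(r) r^n/ε²) Σ_{k=1}^{n+1} a_{n,k}^{−2} E[X² 1{|X| ≤ b_{r^k}}] + (C(r) r^n/ε²) Σ_{k=1}^{n+1} (b_{r^k}²/a_{n,k}²) P{|X| > b_{r^{k−1}}} + (C(r)/ε²) Σ_{k=1}^{n+1} a_{n,k}^{−2} max_{1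 ≤ ℓ ≤ r−1} Σ_{h=0}^{r^{n−k+1}−1} [ Σ_{1+h r^k ≤ i < j ≤ h r^k + ℓ r^{k−1}} G_{X_i,X_j}(b_{r^{k−1}}) ]⁺ + (C(r)/ε²) Σ_{k=1}^{n+1} a_{n,k}^{−2} Σ_{h=0}^{r^{n−k+1}−1} [ Σ_{1+h r^k ≤ i < j ≤ h r^k + r^k} H_{X_i,X_j}(b_{r^{k−1}}, b_{r^k}) ]⁺. -/
open MeasureTheory Finset Filter

noncomputable section

variable {Ω : Type*} [MeasurableSpace Ω]

/-- Truncation at level `L`: `g_L(t) = max (-L) (min t L)`. -/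
def gtr (L t : ℝ) : ℝ := max (-L) (min t L)

/-- `h_{L,K}(t) = |g_K(t) - g_L(t)|`. -/
def htr (L K t : ℝ) : ℝ := |gtr K t - gtr L t|

/-- Covariance `Cov(U,V) = E[UV] - E[U] E[V]`. -/
def cov (μ : Measure Ω) (U V : Ω → ℝ) : ℝ :=
  (∫ ω, U ω * V ω ∂μ) - (∫ ω, U ω ∂μ) * (∫ ω, V ω ∂μ)

/-- `G_{X,Y}(L) = Cov(g_L(X), g_L(Y))`. -/
def Gcov (μ : Measure Ω) (X Y : Ω → ℝ) (L : ℝ) : ℝ :=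
  cov μ (fun ω => gtr L (X ω)) (fun ω => gtr L (Y ω))

/-- `H_{X,Y}(L,K) = Cov(h_{L,K}(X), h_{L,K}(Y))`. -/
def Hcov (μ : Measure Ω) (X Y : Ω → ℝ) (L K : ℝ) : ℝ :=
  cov μ (fun ω => htr L K (X ω)) (fun ω => htr L K (Y ω))

/-- Maximum of `f 0, f 1, ..., f N`. -/
def fmax (N : ℕ) (f : ℕ → ℝ) : ℝ :=
  (Finset.range (N + 1)).sup' Finset.nonempty_range_add_one f

/-- Sum over pairs `a ≤ i < j ≤ b` of `f i j`. -/
def pairSum (a b : ℕ) (f : ℕ → ℕ → ℝ) : ℝ :=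
  ∑ i ∈ Finset.Icc a b, ∑ j ∈ Finset.Icc (i + 1) b, f i j

/-- `{X_n}` is stochastically dominated by `Y`. -/
def StochDom (μ : Measure Ω) (X : ℕ → Ω → ℝ) (Y : Ω → ℝ) : Prop :=
  ∃ C : ℝ, 0 < C ∧ ∀ n : ℕ, 1 ≤ n → ∀ t : ℝ, 0 < t →
    μ {ω | t < |X n ω|} ≤ ENNReal.ofReal C * μ {ω | t < |Y ω|}


section Prelude
set_option linter.unusedSectionVars false
set_option linter.unusedVariables false
open ProbabilityTheory
open scoped ProbabilityTheory

lemma gtr_abs_le {L : ℝ} (hL : 0 ≤ L) (t : ℝ) : |gtr L t| ≤ L := by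
  unfold gtr; rw [abs_le]
  rcases abs_cases t with ⟨h1, h2⟩ | ⟨h1, h2⟩ <;>
    constructor <;> simp only [min_def, max_def] <;> split_ifs <;> linarith

lemma gtr_abs_le_abs {L : ℝ} (hL : 0 ≤ L) (t : ℝ) : |gtr L t| ≤ |t| := by
  unfold gtr; rw [abs_le]
  rcases abs_cases t with ⟨h1, h2⟩ | ⟨h1, h2⟩ <;> rw [h1] <;>
    constructor <;> simp only [min_def, max_def] <;> split_ifs <;> linarith

lemma gtr_eq_self {K t : ℝ} (h : |t| ≤ K) : gtr K t = t := by
  rw [abs_le] at h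
  unfold gtr
  rw [min_eq_left h.2, max_eq_right h.1]

lemma sub_gtr_abs_le {K : ℝ} (hK : 0 ≤ K) (t : ℝ) : |t - gtr K t| ≤ max (|t| - K) 0 := by
  unfold gtr; rw [abs_le]
  rcases abs_cases t with ⟨h1, h2⟩ | ⟨h1, h2⟩ <;> rw [h1] <;>
    constructor <;> simp only [min_def, max_def] <;> split_ifs <;> linarith

lemma htr_nonneg (L K t : ℝ) : 0 ≤ htr L K t := abs_nonneg _

lemma htr_le_sub {L K : ℝ} (hL : 0 ≤ L) (hLK : L ≤ K) (t : ℝ) :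
    htr L K t ≤ max (|t| - L) 0 := by
  unfold htr gtr; rw [abs_le]
  rcases abs_cases t with ⟨h1, h2⟩ | ⟨h1, h2⟩ <;> rw [h1] <;>
    constructor <;> simp only [min_def, max_def] <;> split_ifs <;> linarith

lemma htr_le {L K : ℝ} (hL : 0 ≤ L) (hLK : L ≤ K) (t : ℝ) : htr L K t ≤ K := by
  unfold htr gtr; rw [abs_le]
  constructor <;> simp only [min_def, max_def] <;> split_ifs <;> linarith

lemma htr_eq_zero {L K t : ℝ} (hLK : L ≤ K) (h : |t| ≤ L) : htr L K t = 0 := by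
  rw [htr, gtr_eq_self (le_trans h hLK), gtr_eq_self h, sub_self, abs_zero]

lemma measurable_gtr (L : ℝ) {X : Ω → ℝ} (hX : Measurable X) :
    Measurable (fun ω => gtr L (X ω)) :=
  measurable_const.max ((hX.min measurable_const))

lemma measurable_htr (L K : ℝ) {X : Ω → ℝ} (hX : Measurable X) :
    Measurable (fun ω => htr L K (X ω)) :=
  ((measurable_gtr K hX).sub (measurable_gtr L hX)).abs

lemma integrable_of_bounded {μ : Measure Ω} [IsFiniteMeasure μ] {f : Ω → ℝ} {B : ℝ}
    (hf : Measurable f) (hB : ∀ ω, |f ω| ≤ B) : Integrable f μ := by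
  rw [← memLp_one_iff_integrable]
  exact MemLp.of_bound hf.aestronglyMeasurable B (ae_of_all _ (by simpa [Real.norm_eq_abs] using hB))

/-- key layercake comparison -/
lemma dom_lintegral_aux {μ : Measure Ω} (Cd : ℝ) {W V : Ω → ℝ}
    (hW : Measurable W) (hV : Measurable V) (hWnn : ∀ ω, 0 ≤ W ω) (hVnn : ∀ ω, 0 ≤ V ω)
    (hcomp : ∀ t : ℝ, 0 < t → μ {ω | t < W ω} ≤ ENNReal.ofReal Cd * μ {ω | t < V ω}) :
    ∫⁻ ω, ENNReal.ofReal (W ω) ∂μ ≤ ENNReal.ofReal Cd * ∫⁻ ω, ENNReal.ofReal (V ω) ∂μ := by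
  rw [lintegral_eq_lintegral_meas_lt μ (ae_of_all _ hWnn) hW.aemeasurable,
      lintegral_eq_lintegral_meas_lt μ (ae_of_all _ hVnn) hV.aemeasurable,
      ← lintegral_const_mul' _ _ ENNReal.ofReal_ne_top]
  apply lintegral_mono_ae
  rw [ae_restrict_iff' measurableSet_Ioi]
  exact ae_of_all _ (fun t ht => hcomp t ht)

section Dom
variable {μ : Measure Ω} [IsProbabilityMeasure μ] {Cd : ℝ} {X Y : Ω → ℝ}

lemma dom_meas (hCd : 0 < Cd)
    (hcomp : ∀ t : ℝ, 0 < t → μ {ω | t < |X ω|} ≤ ENNReal.ofReal Cd * μ {ω | t < |Y ω|})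
    {t : ℝ} (ht : 0 < t) :
    (μ {ω | t < |X ω|}).toReal ≤ Cd * (μ {ω | t < |Y ω|}).toReal := by
  have h := hcomp t ht
  have hne : ENNReal.ofReal Cd * μ {ω | t < |Y ω|} ≠ ⊤ :=
    ENNReal.mul_ne_top ENNReal.ofReal_ne_top (measure_ne_top _ _)
  calc (μ {ω | t < |X ω|}).toReal ≤ (ENNReal.ofReal Cd * μ {ω | t < |Y ω|}).toReal :=
        ENNReal.toReal_mono hne h
    _ = Cd * (μ {ω | t < |Y ω|}).toReal := by
        rw [ENNReal.toReal_mul, ENNReal.toReal_ofReal hCd.le]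

lemma dom_integrable (hCd : 0 < Cd) (hX : Measurable X) (hY : Measurable Y)
    (hYint : Integrable Y μ)
    (hcomp : ∀ t : ℝ, 0 < t → μ {ω | t < |X ω|} ≤ ENNReal.ofReal Cd * μ {ω | t < |Y ω|}) :
    Integrable X μ := by
  refine ⟨hX.aestronglyMeasurable, ?_⟩
  rw [hasFiniteIntegral_iff_norm]
  have key : ∫⁻ ω, ENNReal.ofReal (|X ω|) ∂μ ≤
      ENNReal.ofReal Cd * ∫⁻ ω, ENNReal.ofReal (|Y ω|) ∂μ := by
    apply dom_lintegral_aux Cd hX.abs hY.abs (fun ω => abs_nonneg _) (fun ω => abs_nonneg _)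
    exact hcomp
  have hY2 : ∫⁻ ω, ENNReal.ofReal (|Y ω|) ∂μ < ⊤ := by
    have := hYint.hasFiniteIntegral
    rwa [hasFiniteIntegral_iff_norm] at this
  simp only [Real.norm_eq_abs]
  exact lt_of_le_of_lt key (ENNReal.mul_lt_top ENNReal.ofReal_lt_top hY2)

lemma dom_tail_integral (hCd : 0 < Cd) (hX : Measurable X) (hY : Measurable Y)
    (hYint : Integrable Y μ) (hXint : Integrable X μ)
    (hcomp : ∀ t : ℝ, 0 < t → μ {ω | t < |X ω|} ≤ ENNReal.ofReal Cd * μ {ω | t < |Y ω|})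
    {K : ℝ} (hK : 0 ≤ K) :
    ∫ ω, max (|X ω| - K) 0 ∂μ ≤ Cd * ∫ ω in {ω | K < |Y ω|}, |Y ω| ∂μ := by
  have hWmeas : Measurable (fun ω => max (|X ω| - K) 0) :=
    (hX.abs.sub measurable_const).max measurable_const
  have hVmeas : Measurable (fun ω => max (|Y ω| - K) 0) :=
    (hY.abs.sub measurable_const).max measurable_const
  have hWint : Integrable (fun ω => max (|X ω| - K) 0) μ := by
    apply Integrable.mono hXint.abs hWmeas.aestronglyMeasurable
    apply ae_of_all
    intro ω
    rw [Real.norm_eq_abs, Real.norm_eq_abs, abs_abs,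
      abs_of_nonneg (le_max_right _ _)]
    rcases le_total (|X ω| - K) 0 with h | h
    · rw [max_eq_right h]; exact abs_nonneg _
    · rw [max_eq_left h]; linarith
  have hVint : Integrable (fun ω => max (|Y ω| - K) 0) μ := by
    apply Integrable.mono hYint.abs hVmeas.aestronglyMeasurable
    apply ae_of_all
    intro ω
    rw [Real.norm_eq_abs, Real.norm_eq_abs, abs_abs,
      abs_of_nonneg (le_max_right _ _)]
    rcases le_total (|Y ω| - K) 0 with h | h
    · rw [max_eq_right h]; exact abs_nonneg _
    · rw [max_eq_left h]; linarith
  have key : ∫⁻ ω, ENNReal.ofReal (max (|X ω| - K) 0) ∂μ ≤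
      ENNReal.ofReal Cd * ∫⁻ ω, ENNReal.ofReal (max (|Y ω| - K) 0) ∂μ := by
    apply dom_lintegral_aux Cd hWmeas hVmeas (fun ω => le_max_right _ _)
      (fun ω => le_max_right _ _)
    intro t ht
    have hset1 : {ω | t < max (|X ω| - K) 0} = {ω | K + t < |X ω|} := by
      ext ω; simp only [Set.mem_setOf_eq, lt_max_iff]
      constructor
      · rintro (h | h) <;> linarith
      · intro h; left; linarith
    have hset2 : {ω | t < max (|Y ω| - K) 0} = {ω | K + t < |Y ω|} := by
      ext ω; simp only [Set.mem_setOf_eq, lt_max_iff]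
      constructor
      · rintro (h | h) <;> linarith
      · intro h; left; linarith
    rw [hset1, hset2]
    exact hcomp (K + t) (by linarith)
  have h1 : ENNReal.ofReal (∫ ω, max (|X ω| - K) 0 ∂μ) ≤
      ENNReal.ofReal (Cd * ∫ ω, max (|Y ω| - K) 0 ∂μ) := by
    rw [ofReal_integral_eq_lintegral_ofReal hWint (ae_of_all _ (fun ω => le_max_right _ _)),
      ENNReal.ofReal_mul hCd.le,
      ofReal_integral_eq_lintegral_ofReal hVint (ae_of_all _ (fun ω => le_max_right _ _))]
    exact key
  have h2 : ∫ ω, max (|X ω| - K) 0 ∂μ ≤ Cd * ∫ ω, max (|Y ω| - K) 0 ∂μ := by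
    have hnn : 0 ≤ Cd * ∫ ω, max (|Y ω| - K) 0 ∂μ := by
      apply mul_nonneg hCd.le
      apply integral_nonneg
      intro ω; exact le_max_right _ _
    rwa [ENNReal.ofReal_le_ofReal_iff hnn] at h1
  refine le_trans h2 ?_
  apply mul_le_mul_of_nonneg_left ?_ hCd.le
  have hsmeas : MeasurableSet {ω | K < |Y ω|} := measurableSet_lt measurable_const hY.abs
  calc ∫ ω, max (|Y ω| - K) 0 ∂μ ≤ ∫ ω, Set.indicator {ω | K < |Y ω|} (fun ω => |Y ω|) ω ∂μ := by
        apply integral_mono hVint (hYint.abs.indicator hsmeas)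
        intro ω
        by_cases h : K < |Y ω|
        · rw [Set.indicator_of_mem (show ω ∈ {ω | K < |Y ω|} from h)]
          dsimp only
          rcases le_total (|Y ω| - K) 0 with h2 | h2
          · rw [max_eq_right h2]; exact abs_nonneg _
          · rw [max_eq_left h2]; linarith
        · rw [Set.indicator_of_notMem (show ω ∉ {ω | K < |Y ω|} from h)]
          dsimp only
          push_neg at h
          rcases le_total (|Y ω| - K) 0 with h2 | h2
          · rw [max_eq_right h2]
          · rw [max_eq_left h2]; linarith
    _ = ∫ ω in {ω | K < |Y ω|}, |Y ω| ∂μ := integral_indicator hsmeas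

end Dom

section Dom2
variable {μ : Measure Ω} [IsProbabilityMeasure μ] {Cd : ℝ} {X Y : Ω → ℝ}

lemma dom_sq_integral (hCd : 0 < Cd) (hX : Measurable X) (hY : Measurable Y)
    (hcomp : ∀ t : ℝ, 0 < t → μ {ω | t < |X ω|} ≤ ENNReal.ofReal Cd * μ {ω | t < |Y ω|})
    {L K : ℝ} (hL : 0 < L) (hLK : L ≤ K) :
    ∫ ω, min ((X ω) ^ 2) (L ^ 2) ∂μ ≤
      Cd * ((∫ ω in {ω | |Y ω| ≤ K}, (Y ω) ^ 2 ∂μ) + K ^ 2 * (μ {ω | L < |Y ω|}).toReal) := by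
  have hL2 : (0:ℝ) < L ^ 2 := by positivity
  have hWmeas : Measurable (fun ω => min ((X ω) ^ 2) (L ^ 2)) :=
    (hX.pow_const 2).min measurable_const
  have hVmeas : Measurable (fun ω => min ((Y ω) ^ 2) (L ^ 2)) :=
    (hY.pow_const 2).min measurable_const
  have hbd : ∀ (Z : Ω → ℝ) (ω : Ω), |min ((Z ω) ^ 2) (L ^ 2)| ≤ L ^ 2 := by
    intro Z ω
    rw [abs_of_nonneg (le_min (sq_nonneg _) hL2.le)]
    exact min_le_right _ _
  have hWint : Integrable (fun ω => min ((X ω) ^ 2) (L ^ 2)) μ :=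
    integrable_of_bounded hWmeas (hbd X)
  have hVint : Integrable (fun ω => min ((Y ω) ^ 2) (L ^ 2)) μ :=
    integrable_of_bounded hVmeas (hbd Y)
  have hsetgen : ∀ (Z : Ω → ℝ) (t : ℝ), 0 < t → t < L ^ 2 →
      {ω | t < min ((Z ω) ^ 2) (L ^ 2)} = {ω | Real.sqrt t < |Z ω|} := by
    intro Z t ht htL
    ext ω
    simp only [Set.mem_setOf_eq, lt_min_iff]
    constructor
    · rintro ⟨h1, _⟩
      rw [← Real.sqrt_sq_eq_abs]
      exact Real.sqrt_lt_sqrt ht.le h1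
    · intro h
      refine ⟨?_, htL⟩
      calc t = (Real.sqrt t) ^ 2 := (Real.sq_sqrt ht.le).symm
        _ < |Z ω| ^ 2 := by
            apply pow_lt_pow_left₀ h (Real.sqrt_nonneg t) two_ne_zero
        _ = (Z ω) ^ 2 := sq_abs _
  have key : ∫⁻ ω, ENNReal.ofReal (min ((X ω) ^ 2) (L ^ 2)) ∂μ ≤
      ENNReal.ofReal Cd * ∫⁻ ω, ENNReal.ofReal (min ((Y ω) ^ 2) (L ^ 2)) ∂μ := by
    apply dom_lintegral_aux Cd hWmeas hVmeas
      (fun ω => le_min (sq_nonneg _) hL2.le) (fun ω => le_min (sq_nonneg _) hL2.le)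
    intro t ht
    rcases lt_or_ge t (L ^ 2) with htL | htL
    · rw [hsetgen X t ht htL, hsetgen Y t ht htL]
      exact hcomp _ (Real.sqrt_pos.2 ht)
    · have : {ω | t < min ((X ω) ^ 2) (L ^ 2)} = ∅ := by
        ext ω
        simp only [Set.mem_setOf_eq, lt_min_iff, Set.mem_empty_iff_false, iff_false, not_and]
        intro _; linarith
      rw [this]
      simp
  have h2 : ∫ ω, min ((X ω) ^ 2) (L ^ 2) ∂μ ≤ Cd * ∫ ω, min ((Y ω) ^ 2) (L ^ 2) ∂μ := by
    have hnn : 0 ≤ Cd * ∫ ω, min ((Y ω) ^ 2) (L ^ 2) ∂μ := by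
      apply mul_nonneg hCd.le
      exact integral_nonneg (fun ω => le_min (sq_nonneg _) hL2.le)
    have h1 : ENNReal.ofReal (∫ ω, min ((X ω) ^ 2) (L ^ 2) ∂μ) ≤
        ENNReal.ofReal (Cd * ∫ ω, min ((Y ω) ^ 2) (L ^ 2) ∂μ) := by
      rw [ofReal_integral_eq_lintegral_ofReal hWint
            (ae_of_all _ (fun ω => le_min (sq_nonneg _) hL2.le)),
        ENNReal.ofReal_mul hCd.le,
        ofReal_integral_eq_lintegral_ofReal hVint
            (ae_of_all _ (fun ω => le_min (sq_nonneg _) hL2.le))]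
      exact key
    rwa [ENNReal.ofReal_le_ofReal_iff hnn] at h1
  refine le_trans h2 (mul_le_mul_of_nonneg_left ?_ hCd.le)
  have hs1 : MeasurableSet {ω | |Y ω| ≤ K} := measurableSet_le hY.abs measurable_const
  have hs2 : MeasurableSet {ω | L < |Y ω|} := measurableSet_lt measurable_const hY.abs
  have hind1int : Integrable (Set.indicator {ω | |Y ω| ≤ K} (fun ω => (Y ω) ^ 2)) μ := by
    apply integrable_of_bounded ((hY.pow_const 2).indicator hs1)
    intro ω
    by_cases h : ω ∈ {ω | |Y ω| ≤ K}
    · rw [Set.indicator_of_mem h, abs_of_nonneg (sq_nonneg _)]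
      calc (Y ω)^2 = |Y ω|^2 := (sq_abs _).symm
        _ ≤ K^2 := by
            apply pow_le_pow_left₀ (abs_nonneg _) h
    · rw [Set.indicator_of_notMem h, abs_zero]
      positivity
  have hind2int : Integrable (Set.indicator {ω | L < |Y ω|} (fun _ => K ^ 2)) μ :=
    (integrable_const _).indicator hs2
  calc ∫ ω, min ((Y ω) ^ 2) (L ^ 2) ∂μ
      ≤ ∫ ω, (Set.indicator {ω | |Y ω| ≤ K} (fun ω => (Y ω) ^ 2) ω
          + Set.indicator {ω | L < |Y ω|} (fun _ => K ^ 2) ω) ∂μ := by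
        apply integral_mono hVint (hind1int.add hind2int)
        intro ω
        simp only [Pi.add_apply, Set.indicator_apply, Set.mem_setOf_eq]
        have hK2 : L ^ 2 ≤ K ^ 2 := pow_le_pow_left₀ hL.le hLK 2
        split_ifs with hc1 hc2 hc3
        · linarith [min_le_left ((Y ω) ^ 2) (L ^ 2), sq_nonneg K]
        · linarith [min_le_left ((Y ω) ^ 2) (L ^ 2)]
        · linarith [min_le_right ((Y ω) ^ 2) (L ^ 2)]
        · exfalso
          push_neg at hc1
          rcases lt_or_ge L (|Y ω|) with hc | hc
          · exact hc3 hc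
          · linarith
    _ = (∫ ω in {ω | |Y ω| ≤ K}, (Y ω) ^ 2 ∂μ) + K ^ 2 * (μ {ω | L < |Y ω|}).toReal := by
        rw [integral_add hind1int hind2int, integral_indicator hs1,
          integral_indicator hs2, setIntegral_const, smul_eq_mul, mul_comm, Measure.real]

end Dom2

lemma integrable_of_bounded' {μ : Measure Ω} [IsFiniteMeasure μ] {f : Ω → ℝ} {B : ℝ}
    (hf : Measurable f) (hB : ∀ ω, |f ω| ≤ B) : Integrable f μ := by
  rw [← memLp_one_iff_integrable]
  exact MemLp.of_bound hf.aestronglyMeasurable B (ae_of_all _ (by simpa [Real.norm_eq_abs] using hB))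

lemma tri_swap (a b : ℕ) (F : ℕ → ℕ → ℝ) :
    ∑ i ∈ Ioc a b, ∑ j ∈ Ioc a i, F i j = ∑ j ∈ Ioc a b, ∑ i ∈ Icc j b, F i j := by
  have h1 : ∀ i ∈ Ioc a b, ∑ j ∈ Ioc a i, F i j
      = ∑ j ∈ Ioc a b, if j ≤ i then F i j else 0 := by
    intro i hi
    rw [mem_Ioc] at hi
    rw [← Finset.sum_filter]
    congr 1
    ext j
    simp only [mem_filter, mem_Ioc]
    omega
  have h2 : ∀ j ∈ Ioc a b, ∑ i ∈ Icc j b, F i j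
      = ∑ i ∈ Ioc a b, if j ≤ i then F i j else 0 := by
    intro j hj
    rw [mem_Ioc] at hj
    rw [← Finset.sum_filter]
    congr 1
    ext i
    simp only [mem_filter, mem_Ioc, mem_Icc]
    omega
  rw [Finset.sum_congr rfl h1, Finset.sum_congr rfl h2, Finset.sum_comm]

lemma tri_swap2 (K : ℕ) (g : ℕ → ℕ → ℝ) :
    ∑ k ∈ Icc 1 K, ∑ j ∈ Icc k K, g k j = ∑ j ∈ Icc 1 K, ∑ k ∈ Icc 1 j, g k j := by
  have h1 : ∀ k ∈ Icc 1 K, ∑ j ∈ Icc k K, g k j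
      = ∑ j ∈ Icc 1 K, if k ≤ j then g k j else 0 := by
    intro k hk
    rw [mem_Icc] at hk
    rw [← Finset.sum_filter]
    congr 1
    ext j
    simp only [mem_filter, mem_Icc]
    omega
  have h2 : ∀ j ∈ Icc 1 K, ∑ k ∈ Icc 1 j, g k j
      = ∑ k ∈ Icc 1 K, if k ≤ j then g k j else 0 := by
    intro j hj
    rw [mem_Icc] at hj
    rw [← Finset.sum_filter]
    congr 1
    ext k
    simp only [mem_filter, mem_Icc]
    omega
  rw [Finset.sum_congr rfl h1, Finset.sum_congr rfl h2, Finset.sum_comm]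

lemma tele_sum {N : ℕ → ℕ} (hN : ∀ k, N (k + 1) ≤ N k) (f : ℕ → ℝ) (K : ℕ) :
    ∑ k ∈ Icc 1 K, ∑ i ∈ Ioc (N k) (N (k - 1)), f i = ∑ i ∈ Ioc (N K) (N 0), f i := by
  induction K with
  | zero => simp
  | succ K ih =>
    rw [Finset.sum_Icc_succ_top (by omega : 1 ≤ K + 1), ih]
    have hbase' : ∀ m, N m ≤ N 0 := by
      intro m
      induction m with
      | zero => exact le_rfl
      | succ m ih2 => exact le_trans (hN m) ih2
    have hstep : N (K + 1) ≤ N K := hN K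
    have hbase : N K ≤ N 0 := hbase' K
    simp only [Nat.add_sub_cancel]
    rw [add_comm]
    exact Finset.sum_Ioc_consecutive f hstep hbase

lemma tele_pt (v : ℕ → ℝ) (a : ℕ) : ∀ b, a ≤ b →
    ∑ j ∈ Ioc a b, (v j - v (j - 1)) = v b - v a := by
  intro b
  induction b with
  | zero => intro h; interval_cases a <;> simp
  | succ b ih =>
    intro h
    rcases Nat.lt_or_ge a (b + 1) with h2 | h2
    · have hab : a ≤ b := by omega
      rw [Finset.sum_Ioc_succ_top hab, ih hab]
      simp only [Nat.add_sub_cancel]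
      ring
    · have : a = b + 1 := by omega
      subst this
      simp

lemma double_split (a b : ℕ) (F : ℕ → ℕ → ℝ) :
    ∑ i ∈ Ioc a b, ∑ j ∈ Ioc a b, F i j
      = (∑ i ∈ Ioc a b, F i i)
        + ∑ i ∈ Ioc a b, ∑ j ∈ Ioc i b, (F i j + F j i) := by
  have hsplit : ∀ i ∈ Ioc a b, ∑ j ∈ Ioc a b, F i j
      = (∑ j ∈ Ioc a i, F i j) + ∑ j ∈ Ioc i b, F i j := by
    intro i hi
    rw [mem_Ioc] at hi
    exact (Finset.sum_Ioc_consecutive _ (le_of_lt hi.1) hi.2).symm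
  rw [Finset.sum_congr rfl hsplit, Finset.sum_add_distrib, tri_swap]
  have hdiag : ∀ j ∈ Ioc a b, ∑ i ∈ Icc j b, F i j
      = F j j + ∑ i ∈ Ioc j b, F i j := by
    intro j hj
    rw [mem_Ioc] at hj
    rw [Finset.Icc_eq_cons_Ioc hj.2, Finset.sum_cons]
  rw [Finset.sum_congr rfl hdiag, Finset.sum_add_distrib]
  rw [add_assoc]
  congr 1
  rw [← Finset.sum_add_distrib]
  apply Finset.sum_congr rfl
  intro i _
  rw [← Finset.sum_add_distrib]
  apply Finset.sum_congr rfl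
  intro j _
  ring

lemma cov_comm (μ : Measure Ω) (U V : Ω → ℝ) : cov μ U V = cov μ V U := by
  unfold cov
  have : ∀ ω, U ω * V ω = V ω * U ω := fun ω => mul_comm _ _
  rw [show (fun ω => U ω * V ω) = (fun ω => V ω * U ω) from funext this]
  ring

lemma var_sum_le (μ : Measure Ω) [IsProbabilityMeasure μ] (f : ℕ → Ω → ℝ) (B : ℕ → ℝ)
    (a b : ℕ) (hmeas : ∀ i ∈ Ioc a b, Measurable (f i)) (hbd : ∀ i ∈ Ioc a b, ∀ ω, |f i ω| ≤ B i) :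
    variance (fun ω => ∑ i ∈ Ioc a b, f i ω) μ ≤
      (∑ i ∈ Ioc a b, ∫ ω, (f i ω) ^ 2 ∂μ)
        + 2 * max (∑ i ∈ Ioc a b, ∑ j ∈ Ioc i b, cov μ (f i) (f j)) 0 := by
  have hint : ∀ i ∈ Ioc a b, Integrable (f i) μ := fun i hi =>
    integrable_of_bounded' (hmeas i hi) (hbd i hi)
  have hintmul : ∀ i ∈ Ioc a b, ∀ j ∈ Ioc a b, Integrable (fun ω => f i ω * f j ω) μ := by
    intro i hi j hj
    apply integrable_of_bounded' ((hmeas i hi).mul (hmeas j hj)) (B := B i * B j)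
    intro ω
    rw [Pi.mul_apply, abs_mul]
    exact mul_le_mul (hbd i hi ω) (hbd j hj ω) (abs_nonneg _)
      (le_trans (abs_nonneg _) (hbd i hi ω))
  have hl2 : ∀ i ∈ Ioc a b, MemLp (f i) 2 μ := fun i hi =>
    MemLp.of_bound (hmeas i hi).aestronglyMeasurable (B i)
      (ae_of_all _ (by simpa [Real.norm_eq_abs] using hbd i hi))
  have hsum2 : MemLp (fun ω => ∑ i ∈ Ioc a b, f i ω) 2 μ := by
    have h := memLp_finset_sum' (Ioc a b) hl2
    have hfn : (∑ i ∈ Ioc a b, f i) = (fun ω => ∑ i ∈ Ioc a b, f i ω) := by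
      funext ω
      exact Finset.sum_apply ω (Ioc a b) f
    rwa [hfn] at h
  rw [variance_eq_sub hsum2]
  have e1 : μ[(fun ω => ∑ i ∈ Ioc a b, f i ω) ^ 2]
      = ∑ i ∈ Ioc a b, ∑ j ∈ Ioc a b, ∫ ω, f i ω * f j ω ∂μ := by
    have hpt : ∀ ω, ((fun ω => ∑ i ∈ Ioc a b, f i ω) ^ 2) ω
        = ∑ i ∈ Ioc a b, ∑ j ∈ Ioc a b, f i ω * f j ω := by
      intro ω
      simp only [Pi.pow_apply]
      rw [sq, Finset.sum_mul_sum]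
    calc μ[(fun ω => ∑ i ∈ Ioc a b, f i ω) ^ 2]
        = ∫ ω, ∑ i ∈ Ioc a b, ∑ j ∈ Ioc a b, f i ω * f j ω ∂μ := by
          exact integral_congr_ae (ae_of_all _ hpt)
      _ = ∑ i ∈ Ioc a b, ∫ ω, ∑ j ∈ Ioc a b, f i ω * f j ω ∂μ := by
          apply integral_finset_sum
          intro i hi
          exact integrable_finset_sum _ (fun j hj => hintmul i hi j hj)
      _ = ∑ i ∈ Ioc a b, ∑ j ∈ Ioc a b, ∫ ω, f i ω * f j ω ∂μ := by
          apply Finset.sum_congr rfl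
          intro i hi
          exact integral_finset_sum _ (fun j hj => hintmul i hi j hj)
  have e2 : μ[fun ω => ∑ i ∈ Ioc a b, f i ω] = ∑ i ∈ Ioc a b, ∫ ω, f i ω ∂μ :=
    integral_finset_sum _ hint
  rw [e1, e2, sq, Finset.sum_mul_sum, ← Finset.sum_sub_distrib]
  have e3 : ∑ i ∈ Ioc a b, ((∑ j ∈ Ioc a b, ∫ ω, f i ω * f j ω ∂μ)
        - ∑ j ∈ Ioc a b, (∫ ω, f i ω ∂μ) * ∫ ω, f j ω ∂μ)
      = ∑ i ∈ Ioc a b, ∑ j ∈ Ioc a b, cov μ (f i) (f j) := by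
    apply Finset.sum_congr rfl
    intro i _
    rw [← Finset.sum_sub_distrib]
    apply Finset.sum_congr rfl
    intro j _
    rfl
  rw [e3, double_split]
  have hdiag : ∑ i ∈ Ioc a b, cov μ (f i) (f i) ≤ ∑ i ∈ Ioc a b, ∫ ω, (f i ω) ^ 2 ∂μ := by
    apply Finset.sum_le_sum
    intro i _
    unfold cov
    have : ∫ ω, f i ω * f i ω ∂μ = ∫ ω, (f i ω) ^ 2 ∂μ := by
      apply integral_congr_ae (ae_of_all _ _)
      intro ω
      rw [sq]
    rw [this]
    nlinarith [sq_nonneg (∫ ω, f i ω ∂μ)]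
  have hoff : ∑ i ∈ Ioc a b, ∑ j ∈ Ioc i b, (cov μ (f i) (f j) + cov μ (f j) (f i))
      ≤ 2 * max (∑ i ∈ Ioc a b, ∑ j ∈ Ioc i b, cov μ (f i) (f j)) 0 := by
    have : ∀ i ∈ Ioc a b, ∑ j ∈ Ioc i b, (cov μ (f i) (f j) + cov μ (f j) (f i))
        = 2 * ∑ j ∈ Ioc i b, cov μ (f i) (f j) := by
      intro i _
      rw [Finset.mul_sum]
      apply Finset.sum_congr rfl
      intro j _
      rw [cov_comm μ (f j) (f i)]
      ring
    rw [Finset.sum_congr rfl this, ← Finset.mul_sum]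
    apply mul_le_mul_of_nonneg_left (le_max_left _ _) (by norm_num)
  linarith

lemma Ndiv_anti (r M : ℕ) (hr : 2 ≤ r) (k : ℕ) :
    r ^ (k + 1) * (M / r ^ (k + 1)) ≤ r ^ k * (M / r ^ k) := by
  have h1 : M / r ^ (k + 1) = M / r ^ k / r := by
    rw [Nat.div_div_eq_div_mul, pow_succ]
  rw [h1, pow_succ, mul_comm (r ^ k) r, mul_assoc, mul_left_comm]
  apply Nat.mul_le_mul_left
  rw [mul_comm]
  exact Nat.div_mul_le_self _ _

lemma core_decomp (r n M : ℕ) (hr : 2 ≤ r) (hM1 : 1 ≤ M) (hM2 : M < r ^ (n + 1))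
    (w : ℕ → ℕ → ℝ) :
    ∑ i ∈ Icc 1 M, w (n + 1) i
      = (∑ k ∈ Icc 1 (n + 1),
          ∑ i ∈ Ioc (r ^ k * (M / r ^ k)) (r ^ (k - 1) * (M / r ^ (k - 1))), w (k - 1) i)
        + ∑ j ∈ Icc 1 (n + 1),
            ∑ i ∈ Ioc (r ^ j * (M / r ^ j)) M, (w j i - w (j - 1) i) := by
  set N : ℕ → ℕ := fun k => r ^ k * (M / r ^ k) with hNdef
  have hN : ∀ k, N (k + 1) ≤ N k := fun k => Ndiv_anti r M hr k
  have hN0 : N 0 = M := by simp [hNdef]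
  have hNtop : N (n + 1) = 0 := by
    simp only [hNdef]
    rw [Nat.div_eq_of_lt hM2, mul_zero]
  -- step 1
  have step1 : ∑ i ∈ Icc 1 M, w (n + 1) i
      = ∑ k ∈ Icc 1 (n + 1), ∑ i ∈ Ioc (N k) (N (k - 1)), w (n + 1) i := by
    rw [tele_sum hN (w (n + 1)) (n + 1), hN0, hNtop, ← Finset.Icc_add_one_left_eq_Ioc, zero_add]
  rw [step1]
  -- step 2 pointwise identity
  have step2 : ∀ k ∈ Icc 1 (n + 1), ∀ i : ℕ,
      w (n + 1) i = w (k - 1) i + ∑ j ∈ Icc k (n + 1), (w j i - w (j - 1) i) := by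
    intro k hk i
    rw [mem_Icc] at hk
    have hIcc : Icc k (n + 1) = Ioc (k - 1) (n + 1) := by
      have h2 : k - 1 + 1 = k := by omega
      conv_lhs => rw [← h2]
      rw [Finset.Icc_add_one_left_eq_Ioc]
    rw [hIcc, tele_pt (fun j => w j i) (k - 1) (n + 1) (by omega)]
    ring
  have step2' : ∑ k ∈ Icc 1 (n + 1), ∑ i ∈ Ioc (N k) (N (k - 1)), w (n + 1) i
      = (∑ k ∈ Icc 1 (n + 1), ∑ i ∈ Ioc (N k) (N (k - 1)), w (k - 1) i)
        + ∑ k ∈ Icc 1 (n + 1), ∑ j ∈ Icc k (n + 1),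
            ∑ i ∈ Ioc (N k) (N (k - 1)), (w j i - w (j - 1) i) := by
    have hper : ∀ k ∈ Icc 1 (n + 1), ∑ i ∈ Ioc (N k) (N (k - 1)), w (n + 1) i
        = (∑ i ∈ Ioc (N k) (N (k - 1)), w (k - 1) i)
          + ∑ j ∈ Icc k (n + 1), ∑ i ∈ Ioc (N k) (N (k - 1)), (w j i - w (j - 1) i) := by
      intro k hk
      calc ∑ i ∈ Ioc (N k) (N (k - 1)), w (n + 1) i
          = ∑ i ∈ Ioc (N k) (N (k - 1)),
              (w (k - 1) i + ∑ j ∈ Icc k (n + 1), (w j i - w (j - 1) i)) :=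
            Finset.sum_congr rfl (fun i _ => step2 k hk i)
        _ = (∑ i ∈ Ioc (N k) (N (k - 1)), w (k - 1) i)
            + ∑ i ∈ Ioc (N k) (N (k - 1)), ∑ j ∈ Icc k (n + 1), (w j i - w (j - 1) i) :=
            Finset.sum_add_distrib
        _ = (∑ i ∈ Ioc (N k) (N (k - 1)), w (k - 1) i)
            + ∑ j ∈ Icc k (n + 1), ∑ i ∈ Ioc (N k) (N (k - 1)), (w j i - w (j - 1) i) := by
            rw [Finset.sum_comm]
    rw [Finset.sum_congr rfl hper, Finset.sum_add_distrib]
  rw [step2']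
  congr 1
  -- step 3: swap and telescope
  rw [tri_swap2 (n + 1) (fun k j => ∑ i ∈ Ioc (N k) (N (k - 1)), (w j i - w (j - 1) i))]
  apply Finset.sum_congr rfl
  intro j hj
  rw [mem_Icc] at hj
  have := tele_sum hN (fun i => w j i - w (j - 1) i) j
  rw [this, hN0]

end Prelude


section Helpers
set_option linter.unusedSectionVars false
set_option linter.unusedVariables false
open ProbabilityTheory
open scoped ProbabilityTheory

lemma fmax_le {N : ℕ} {f : ℕ → ℝ} {c : ℝ} (h : ∀ m, m ≤ N → f m ≤ c) : fmax N f ≤ c :=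
  Finset.sup'_le _ _ (fun m hm => h m (by simpa [Nat.lt_succ_iff] using Finset.mem_range.1 hm))

lemma le_fmax {N : ℕ} {f : ℕ → ℝ} (m : ℕ) (hm : m ≤ N) : f m ≤ fmax N f :=
  Finset.le_sup' f (Finset.mem_range.2 (Nat.lt_succ_of_le hm))

variable {Ω : Type*} [MeasurableSpace Ω]

lemma cheb_block (μ : Measure Ω) [IsProbabilityMeasure μ] (g : ℕ → Ω → ℝ) (B : ℕ → ℝ)
    (s t : ℕ) (hmeas : ∀ i ∈ Finset.Ioc s t, Measurable (g i))
    (hbd : ∀ i ∈ Finset.Ioc s t, ∀ ω, |g i ω| ≤ B i)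
    {lam : ℝ} (hlam : 0 < lam) :
    (μ {ω | lam ≤ |(∑ i ∈ Finset.Ioc s t, g i ω) - ∫ x, ∑ i ∈ Finset.Ioc s t, g i x ∂μ|}).toReal
      ≤ ((∑ i ∈ Finset.Ioc s t, ∫ ω, (g i ω) ^ 2 ∂μ)
          + 2 * max (∑ i ∈ Finset.Ioc s t, ∑ j ∈ Finset.Ioc i t, cov μ (g i) (g j)) 0)
        / lam ^ 2 := by
  have hvar := var_sum_le μ g B s t hmeas hbd
  have hl2 : ∀ i ∈ Finset.Ioc s t, MemLp (g i) 2 μ := fun i hi =>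
    MemLp.of_bound (hmeas i hi).aestronglyMeasurable (B i)
      (ae_of_all _ (by simpa [Real.norm_eq_abs] using hbd i hi))
  have hsum2 : MemLp (fun ω => ∑ i ∈ Finset.Ioc s t, g i ω) 2 μ := by
    have h := memLp_finset_sum' (Finset.Ioc s t) hl2
    have hfn : (∑ i ∈ Finset.Ioc s t, g i) = (fun ω => ∑ i ∈ Finset.Ioc s t, g i ω) := by
      funext ω
      exact Finset.sum_apply ω (Finset.Ioc s t) g
    rwa [hfn] at h
  have hcheb := meas_ge_le_variance_div_sq (μ := μ) hsum2 hlam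
  have h1 : (μ {ω | lam ≤ |(∑ i ∈ Finset.Ioc s t, g i ω)
        - ∫ x, ∑ i ∈ Finset.Ioc s t, g i x ∂μ|}).toReal
      ≤ variance (fun ω => ∑ i ∈ Finset.Ioc s t, g i ω) μ / lam ^ 2 := by
    have h2 := ENNReal.toReal_mono ENNReal.ofReal_ne_top hcheb
    rw [ENNReal.toReal_ofReal
      (div_nonneg (variance_nonneg _ _) (le_of_lt (pow_pos hlam 2)))] at h2
    exact h2
  refine le_trans h1 ?_
  gcongr

lemma abs_integral_le_integral_abs' {μ : Measure Ω} (f : Ω → ℝ) :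
    |∫ x, f x ∂μ| ≤ ∫ x, |f x| ∂μ := by
  simpa [Real.norm_eq_abs] using norm_integral_le_integral_norm (μ := μ) f

lemma gtr_sq_le {L : ℝ} (hL : 0 ≤ L) (t : ℝ) : (gtr L t) ^ 2 ≤ min (t ^ 2) (L ^ 2) := by
  apply le_min
  · calc (gtr L t) ^ 2 = |gtr L t| ^ 2 := (sq_abs _).symm
      _ ≤ |t| ^ 2 := by
          apply pow_le_pow_left₀ (abs_nonneg _) (gtr_abs_le_abs hL t)
      _ = t ^ 2 := sq_abs _
  · calc (gtr L t) ^ 2 = |gtr L t| ^ 2 := (sq_abs _).symm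
      _ ≤ L ^ 2 := by
          apply pow_le_pow_left₀ (abs_nonneg _) (gtr_abs_le hL t)

lemma htr_sq_int_bound (μ : Measure Ω) [IsProbabilityMeasure μ] {Xi : Ω → ℝ}
    (hXi : Measurable Xi) {L K : ℝ} (hL : 0 < L) (hLK : L ≤ K) :
    ∫ ω, (htr L K (Xi ω)) ^ 2 ∂μ ≤ K ^ 2 * (μ {ω | L < |Xi ω|}).toReal := by
  have hs : MeasurableSet {ω | L < |Xi ω|} := measurableSet_lt measurable_const hXi.abs
  have hint1 : Integrable (fun ω => (htr L K (Xi ω)) ^ 2) μ := by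
    apply integrable_of_bounded ((measurable_htr L K hXi).pow_const 2)
    intro ω
    rw [abs_of_nonneg (sq_nonneg _)]
    calc (htr L K (Xi ω)) ^ 2 = |htr L K (Xi ω)| ^ 2 := (sq_abs _).symm
      _ ≤ K ^ 2 := by
          apply pow_le_pow_left₀ (abs_nonneg _)
          rw [abs_of_nonneg (htr_nonneg _ _ _)]
          exact htr_le hL.le hLK _
  calc ∫ ω, (htr L K (Xi ω)) ^ 2 ∂μ
      ≤ ∫ ω, Set.indicator {ω | L < |Xi ω|} (fun _ => K ^ 2) ω ∂μ := by
        apply integral_mono hint1 ((integrable_const _).indicator hs)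
        intro ω
        by_cases h : L < |Xi ω|
        · rw [Set.indicator_of_mem (show ω ∈ {ω | L < |Xi ω|} from h)]
          calc (htr L K (Xi ω)) ^ 2 = |htr L K (Xi ω)| ^ 2 := (sq_abs _).symm
            _ ≤ K ^ 2 := by
                apply pow_le_pow_left₀ (abs_nonneg _)
                rw [abs_of_nonneg (htr_nonneg _ _ _)]
                exact htr_le hL.le hLK _
        · rw [Set.indicator_of_notMem (show ω ∉ {ω | L < |Xi ω|} from h)]
          push_neg at h
          show htr L K (Xi ω) ^ 2 ≤ 0
          rw [htr_eq_zero hLK h]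
          norm_num
    _ = K ^ 2 * (μ {ω | L < |Xi ω|}).toReal := by
        rw [integral_indicator hs, setIntegral_const, smul_eq_mul, mul_comm, Measure.real]

end Helpers

set_option maxHeartbeats 10000000 in
/-- Corollary 2.1 (maximal inequality under stochastic domination). -/
theorem maximal_inequality_stoch_dom
    (μ : Measure Ω) [IsProbabilityMeasure μ]
    (r : ℕ) (hr : 1 < r)
    (X : ℕ → Ω → ℝ) (Y : Ω → ℝ)
    (hXmeas : ∀ n : ℕ, 1 ≤ n → Measurable (X n)) (hYmeas : Measurable Y)
    (hdom : StochDom μ X Y) (hYint : Integrable Y μ)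
    (b : ℕ → ℝ) (hbpos : ∀ n : ℕ, 1 ≤ n → 0 < b n)
    (hbmono : ∀ m n : ℕ, 1 ≤ m → m ≤ n → b m ≤ b n)
    (a : ℕ → ℕ → ℝ)
    (hapos : ∀ n k : ℕ, 1 ≤ n → 1 ≤ k → k ≤ n + 1 → 0 < a n k)
    -- (a)  ∑_{k=1}^{n+1} a_{n,k} = O(b_{r^n})
    (ha : ∃ Ca : ℝ, 0 < Ca ∧ ∀ᶠ n : ℕ in atTop,
        ∑ k ∈ Finset.Icc 1 (n + 1), a n k ≤ Ca * b (r ^ n))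
    -- (b')  ∑_{k=1}^{n+1} r^k E[|Y| 1{|Y| > b_{r^{k-1}}}] = o(b_{r^n})
    (hb' : Tendsto (fun n : ℕ =>
        (∑ k ∈ Finset.Icc 1 (n + 1),
          (r : ℝ) ^ k * ∫ ω in {ω | b (r ^ (k - 1)) < |Y ω|}, |Y ω| ∂μ) / b (r ^ n))
        atTop (nhds 0)) :
    ∃ C : ℝ, 0 < C ∧ ∀ ε : ℝ, 0 < ε → ∃ n₀ : ℕ, 0 < n₀ ∧ ∀ n : ℕ, n₀ ≤ n →
      (μ {ω | ε * b (r ^ n) <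
          fmax (r ^ (n + 1) - 2) (fun m =>
            |∑ k ∈ Finset.Icc 1 (m + 1), (X k ω - ∫ x, X k x ∂μ)|)}).toReal ≤
        C * (r : ℝ) ^ n * (μ {ω | b (r ^ (n + 1)) < |Y ω|}).toReal
        + C * (r : ℝ) ^ n / ε ^ 2 *
            ∑ k ∈ Finset.Icc 1 (n + 1),
              ((a n k) ^ 2)⁻¹ * ∫ ω in {ω | |Y ω| ≤ b (r ^ k)}, (Y ω) ^ 2 ∂μ
        + C * (r : ℝ) ^ n / ε ^ 2 *
            ∑ k ∈ Finset.Icc 1 (n + 1),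
              (b (r ^ k)) ^ 2 / (a n k) ^ 2 * (μ {ω | b (r ^ (k - 1)) < |Y ω|}).toReal
        + C / ε ^ 2 *
            ∑ k ∈ Finset.Icc 1 (n + 1),
              ((a n k) ^ 2)⁻¹ *
                fmax (r - 2) (fun l =>
                  ∑ h ∈ Finset.range (r ^ (n + 1 - k)),
                    max (pairSum (1 + h * r ^ k) (h * r ^ k + (l + 1) * r ^ (k - 1))
                      (fun i j => Gcov μ (X i) (X j) (b (r ^ (k - 1))))) 0)
        + C / ε ^ 2 *
            ∑ k ∈ Finset.Icc 1 (n + 1),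
              ((a n k) ^ 2)⁻¹ *
                ∑ h ∈ Finset.range (r ^ (n + 1 - k)),
                  max (pairSum (1 + h * r ^ k) (h * r ^ k + r ^ k)

                    (fun i j => Hcov μ (X i) (X j) (b (r ^ (k - 1))) (b (r ^ k)))) 0 := by
  classical
  obtain ⟨Cd, hCd, hdom'⟩ := hdom
  obtain ⟨Ca, hCa, haev⟩ := ha
  have hr2 : 2 ≤ r := hr
  have hrR : (1:ℝ) < (r : ℝ) := by exact_mod_cast hr
  have hrR0 : (0:ℝ) < (r : ℝ) := by linarith
  set C : ℝ := 64 * (Ca + 1) ^ 2 * (Cd + 1) * (r : ℝ) ^ 2 with hCdef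
  have hCpos : 0 < C := by positivity
  refine ⟨C, hCpos, ?_⟩
  intro ε hε
  set δ : ℝ := ε / (6 * Cd + 6) with hδdef
  have hδ : 0 < δ := by positivity
  have hev1 : ∀ᶠ m : ℕ in atTop,
      (∑ k ∈ Finset.Icc 1 (m + 1),
        (r : ℝ) ^ k * ∫ ω in {ω | b (r ^ (k - 1)) < |Y ω|}, |Y ω| ∂μ) / b (r ^ m) < δ :=
    hb'.eventually_lt_const hδ
  obtain ⟨n₁, hn₁⟩ := (hev1.and haev).exists_forall_of_atTop
  refine ⟨max n₁ 1, lt_of_lt_of_le Nat.one_pos (le_max_right _ _), ?_⟩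
  intro n hn
  have hn1 : 1 ≤ n := le_trans (le_max_right n₁ 1) hn
  have hbp : ∀ m : ℕ, (0:ℝ) < b (r ^ m) := fun m => hbpos _ (Nat.one_le_pow _ _ (by omega))
  obtain ⟨hBsum', hAsum⟩ := hn₁ n (le_trans (le_max_left n₁ 1) hn)
  have hBsum : (∑ k ∈ Finset.Icc 1 (n + 1),
      (r : ℝ) ^ k * ∫ ω in {ω | b (r ^ (k - 1)) < |Y ω|}, |Y ω| ∂μ) < δ * b (r ^ n) := by
    rw [div_lt_iff₀ (hbp n)] at hBsum'
    linarith [hBsum']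
  -- basic integrability and measurability facts
  have hXint : ∀ i : ℕ, 1 ≤ i → Integrable (X i) μ := fun i hi =>
    dom_integrable hCd (hXmeas i hi) hYmeas hYint (hdom' i hi)
  have hgtrmeas : ∀ (L : ℝ) (i : ℕ), 1 ≤ i → Measurable (fun ω => gtr L (X i ω)) :=
    fun L i hi => measurable_gtr L (hXmeas i hi)
  have hgtrint : ∀ (m i : ℕ), 1 ≤ i → Integrable (fun ω => gtr (b (r ^ m)) (X i ω)) μ :=
    fun m i hi => integrable_of_bounded (measurable_gtr _ (hXmeas i hi))
      (fun ω => gtr_abs_le (hbp m).le _)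
  have hhtrint : ∀ (m m' i : ℕ), m ≤ m' → 1 ≤ i →
      Integrable (fun ω => htr (b (r ^ m)) (b (r ^ m')) (X i ω)) μ := by
    intro m m' i hmm hi
    apply integrable_of_bounded (measurable_htr _ _ (hXmeas i hi))
    intro ω
    rw [abs_of_nonneg (htr_nonneg _ _ _)]
    exact htr_le (hbp m).le (hbmono _ _ (Nat.one_le_pow _ _ (by omega))
      (Nat.pow_le_pow_right (by omega) hmm)) _
  -- thresholds and events
  set lam : ℕ → ℝ := fun k => ε * a n k / (4 * Ca) with hlamdef
  have hlampos : ∀ k, 1 ≤ k → k ≤ n + 1 → 0 < lam k := by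
    intro k h1 h2
    have := hapos n k hn1 h1 h2
    rw [hlamdef]
    positivity
  set Zf : ℕ → ℕ → ℕ → Ω → ℝ := fun k h l => fun ω =>
    ∑ i ∈ Finset.Ioc (h * r ^ k) (h * r ^ k + (l + 1) * r ^ (k - 1)),
      gtr (b (r ^ (k - 1))) (X i ω) with hZdef
  set Wf : ℕ → ℕ → Ω → ℝ := fun j h => fun ω =>
    ∑ i ∈ Finset.Ioc (h * r ^ j) (h * r ^ j + r ^ j),
      htr (b (r ^ (j - 1))) (b (r ^ j)) (X i ω) with hWdef
  set Aset : Set Ω := ⋃ i ∈ Finset.Icc 1 (r ^ (n + 1) - 1), {ω | b (r ^ (n + 1)) < |X i ω|}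
    with hAdef
  set Eset : ℕ → ℕ → ℕ → Set Ω := fun k h l =>
    {ω | lam k ≤ |Zf k h l ω - ∫ x, Zf k h l x ∂μ|} with hEdef
  set Fset : ℕ → ℕ → Set Ω := fun j h =>
    {ω | lam j ≤ |Wf j h ω - ∫ x, Wf j h x ∂μ|} with hFdef
  set UE : Set Ω := ⋃ k ∈ Finset.Icc 1 (n + 1), ⋃ h ∈ Finset.range (r ^ (n + 1 - k)),
    ⋃ l ∈ Finset.range (r - 1), Eset k h l with hUEdef
  set UF : Set Ω := ⋃ j ∈ Finset.Icc 1 (n + 1), ⋃ h ∈ Finset.range (r ^ (n + 1 - j)),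
    Fset j h with hUFdef
  -- the inclusion
  have hincl : {ω | ε * b (r ^ n) <
      fmax (r ^ (n + 1) - 2) (fun m =>
        |∑ k ∈ Finset.Icc 1 (m + 1), (X k ω - ∫ x, X k x ∂μ)|)} ⊆ Aset ∪ (UE ∪ UF) := by
    intro ω hω
    simp only [Set.mem_setOf_eq] at hω
    by_contra hnot
    simp only [Set.mem_union, not_or] at hnot
    obtain ⟨hnA, hnE, hnF⟩ := hnot
    have hAfact : ∀ i, 1 ≤ i → i ≤ r ^ (n + 1) - 1 → |X i ω| ≤ b (r ^ (n + 1)) := by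
      intro i h1 h2
      by_contra hc
      push_neg at hc
      exact hnA (Set.mem_biUnion (Finset.mem_Icc.2 ⟨h1, h2⟩) hc)
    have hEfact : ∀ k, 1 ≤ k → k ≤ n + 1 → ∀ h, h < r ^ (n + 1 - k) → ∀ l, l < r - 1 →
        |Zf k h l ω - ∫ x, Zf k h l x ∂μ| < lam k := by
      intro k h1 h2 h hh l hl
      by_contra hc
      push_neg at hc
      apply hnE
      refine Set.mem_biUnion (Finset.mem_Icc.2 ⟨h1, h2⟩) ?_
      refine Set.mem_biUnion (Finset.mem_range.2 hh) ?_
      exact Set.mem_biUnion (Finset.mem_range.2 hl) hc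
    have hFfact : ∀ j, 1 ≤ j → j ≤ n + 1 → ∀ h, h < r ^ (n + 1 - j) →
        |Wf j h ω - ∫ x, Wf j h x ∂μ| < lam j := by
      intro j h1 h2 h hh
      by_contra hc
      push_neg at hc
      apply hnF
      refine Set.mem_biUnion (Finset.mem_Icc.2 ⟨h1, h2⟩) ?_
      exact Set.mem_biUnion (Finset.mem_range.2 hh) hc
    refine absurd hω (not_lt.2 ?_)
    apply fmax_le
    intro m hm
    have hR2 : 2 ≤ r ^ (n + 1) := le_trans hr2 (Nat.le_self_pow (by omega) r)
    have hM1 : 1 ≤ m + 1 := by omega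
    have hMR : m + 1 < r ^ (n + 1) := by omega
    set w : ℕ → ℕ → ℝ := fun j i =>
      gtr (b (r ^ j)) (X i ω) - ∫ x, gtr (b (r ^ j)) (X i x) ∂μ with hwdef
    have hsplit : ∑ i ∈ Finset.Icc 1 (m + 1), (X i ω - ∫ x, X i x ∂μ)
        = (∑ i ∈ Finset.Icc 1 (m + 1), w (n + 1) i)
          + ∑ i ∈ Finset.Icc 1 (m + 1),
              ((∫ x, gtr (b (r ^ (n + 1))) (X i x) ∂μ) - ∫ x, X i x ∂μ) := by
      rw [← Finset.sum_add_distrib]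
      apply Finset.sum_congr rfl
      intro i hi
      rw [Finset.mem_Icc] at hi
      have hXeq : X i ω = gtr (b (r ^ (n + 1))) (X i ω) :=
        (gtr_eq_self (hAfact i hi.1 (by omega))).symm
      rw [hwdef]
      dsimp only
      rw [← hXeq]
      ring
    -- bound on the centering error
    have hTnn : (0:ℝ) ≤ ∫ x in {x | b (r ^ n) < |Y x|}, |Y x| ∂μ :=
      setIntegral_nonneg (measurableSet_lt measurable_const hYmeas.abs)
        (fun x _ => abs_nonneg _)
    have hTn : ∀ i, 1 ≤ i → |(∫ x, gtr (b (r ^ (n + 1))) (X i x) ∂μ) - ∫ x, X i x ∂μ|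
        ≤ Cd * ∫ x in {x | b (r ^ n) < |Y x|}, |Y x| ∂μ := by
      intro i hi
      have hint1 := hgtrint (n + 1) i hi
      have hint2 := hXint i hi
      have hintmax : Integrable (fun x => max (|X i x| - b (r ^ (n + 1))) 0) μ := by
        apply Integrable.mono hint2.abs
          (((hXmeas i hi).abs.sub measurable_const).max measurable_const).aestronglyMeasurable
        apply ae_of_all
        intro x
        rw [Real.norm_eq_abs, Real.norm_eq_abs, abs_abs, abs_of_nonneg (le_max_right _ _)]; simp only [Pi.sub_apply]
        rcases le_total (|X i x| - b (r ^ (n + 1))) 0 with h | h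
        · rw [max_eq_right h]; exact abs_nonneg _
        · rw [max_eq_left h]
          have := (hbp (n + 1)).le
          linarith
      calc |(∫ x, gtr (b (r ^ (n + 1))) (X i x) ∂μ) - ∫ x, X i x ∂μ|
          = |∫ x, (gtr (b (r ^ (n + 1))) (X i x) - X i x) ∂μ| := by
            rw [integral_sub hint1 hint2]
        _ ≤ ∫ x, |gtr (b (r ^ (n + 1))) (X i x) - X i x| ∂μ :=
            abs_integral_le_integral_abs' _
        _ ≤ ∫ x, max (|X i x| - b (r ^ (n + 1))) 0 ∂μ := by
            apply integral_mono (hint1.sub hint2).abs hintmax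
            intro x
            show |gtr (b (r ^ (n + 1))) (X i x) - X i x| ≤ max (|X i x| - b (r ^ (n + 1))) 0
            rw [abs_sub_comm]
            exact sub_gtr_abs_le (hbp (n + 1)).le (X i x)
        _ ≤ Cd * ∫ x in {x | b (r ^ (n + 1)) < |Y x|}, |Y x| ∂μ :=
            dom_tail_integral hCd (hXmeas i hi) hYmeas hYint hint2 (hdom' i hi)
              (hbp (n + 1)).le
        _ ≤ Cd * ∫ x in {x | b (r ^ n) < |Y x|}, |Y x| ∂μ := by
            apply mul_le_mul_of_nonneg_left ?_ hCd.le
            apply setIntegral_mono_set hYint.abs.integrableOn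
              (ae_of_all _ (fun x => abs_nonneg _))
            apply HasSubset.Subset.eventuallyLE
            intro x hx
            simp only [Set.mem_setOf_eq] at *
            have hb' : b (r ^ n) ≤ b (r ^ (n + 1)) :=
              hbmono _ _ (Nat.one_le_pow _ _ (by omega))
                (Nat.pow_le_pow_right (by omega) (by omega))
            linarith
    have hthird : |∑ i ∈ Finset.Icc 1 (m + 1),
          ((∫ x, gtr (b (r ^ (n + 1))) (X i x) ∂μ) - ∫ x, X i x ∂μ)|
        ≤ Cd * ∑ k ∈ Finset.Icc 1 (n + 1),
            (r : ℝ) ^ k * ∫ x in {x | b (r ^ (k - 1)) < |Y x|}, |Y x| ∂μ := by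
      calc |∑ i ∈ Finset.Icc 1 (m + 1),
            ((∫ x, gtr (b (r ^ (n + 1))) (X i x) ∂μ) - ∫ x, X i x ∂μ)|
          ≤ ∑ i ∈ Finset.Icc 1 (m + 1),
            |(∫ x, gtr (b (r ^ (n + 1))) (X i x) ∂μ) - ∫ x, X i x ∂μ| :=
          Finset.abs_sum_le_sum_abs _ _
        _ ≤ ∑ i ∈ Finset.Icc 1 (m + 1),
            Cd * ∫ x in {x | b (r ^ n) < |Y x|}, |Y x| ∂μ := by
          apply Finset.sum_le_sum
          intro i hi
          exact hTn i (Finset.mem_Icc.1 hi).1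
        _ = ((m + 1 : ℕ) : ℝ) * (Cd * ∫ x in {x | b (r ^ n) < |Y x|}, |Y x| ∂μ) := by
          rw [Finset.sum_const, Nat.card_Icc, nsmul_eq_mul]
          norm_num
        _ ≤ (r : ℝ) ^ (n + 1) * (Cd * ∫ x in {x | b (r ^ n) < |Y x|}, |Y x| ∂μ) := by
          apply mul_le_mul_of_nonneg_right ?_ (by positivity)
          calc ((m + 1 : ℕ) : ℝ) ≤ ((r ^ (n + 1) : ℕ) : ℝ) := by exact_mod_cast hMR.le
            _ = (r : ℝ) ^ (n + 1) := by push_cast; ring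
        _ = Cd * ((r : ℝ) ^ (n + 1) * ∫ x in {x | b (r ^ n) < |Y x|}, |Y x| ∂μ) := by ring
        _ ≤ Cd * ∑ k ∈ Finset.Icc 1 (n + 1),
            (r : ℝ) ^ k * ∫ x in {x | b (r ^ (k - 1)) < |Y x|}, |Y x| ∂μ := by
          apply mul_le_mul_of_nonneg_left ?_ hCd.le
          have hmem : n + 1 ∈ Finset.Icc 1 (n + 1) := Finset.mem_Icc.2 (by omega)
          have := Finset.single_le_sum (f := fun k =>
            (r : ℝ) ^ k * ∫ x in {x | b (r ^ (k - 1)) < |Y x|}, |Y x| ∂μ)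
            (fun k _ => by
              apply mul_nonneg (by positivity)
              exact setIntegral_nonneg (measurableSet_lt measurable_const hYmeas.abs)
                (fun x _ => abs_nonneg _)) hmem
          simpa using this
    -- block bounds (truncated parts)
    have hUbound : ∀ k ∈ Finset.Icc 1 (n + 1),
        |∑ i ∈ Finset.Ioc (r ^ k * ((m + 1) / r ^ k)) (r ^ (k - 1) * ((m + 1) / r ^ (k - 1))),
            w (k - 1) i| ≤ lam k := by
      intro k hk
      rw [Finset.mem_Icc] at hk
      have hqlt : (m + 1) / r ^ k < r ^ (n + 1 - k) := by
        apply Nat.div_lt_of_lt_mul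
        calc m + 1 < r ^ (n + 1) := hMR
          _ = r ^ k * r ^ (n + 1 - k) := by rw [← pow_add]; congr 1; omega
      have hblk : r ^ (k - 1) * ((m + 1) / r ^ (k - 1))
          = r ^ k * ((m + 1) / r ^ k) + ((m + 1) / r ^ (k - 1)) % r * r ^ (k - 1) := by
        have e1 : (m + 1) / r ^ k = ((m + 1) / r ^ (k - 1)) / r := by
          rw [Nat.div_div_eq_div_mul]
          congr 1
          rw [← pow_succ]
          congr 1
          omega
        have e2 : r ^ k = r ^ (k - 1) * r := by
          rw [← pow_succ]
          congr 1
          omega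
        rw [e1, e2]
        calc r ^ (k - 1) * ((m + 1) / r ^ (k - 1))
            = r ^ (k - 1) * (r * (((m + 1) / r ^ (k - 1)) / r)
                + ((m + 1) / r ^ (k - 1)) % r) := by rw [Nat.div_add_mod]
          _ = r ^ (k - 1) * r * (((m + 1) / r ^ (k - 1)) / r)
              + ((m + 1) / r ^ (k - 1)) % r * r ^ (k - 1) := by ring
      rcases Nat.eq_zero_or_pos (((m + 1) / r ^ (k - 1)) % r) with hl0 | hlpos
      · rw [hblk, hl0]
        simp only [Nat.zero_mul, Nat.add_zero, Finset.Ioc_self, Finset.sum_empty, abs_zero]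
        exact (hlampos k hk.1 hk.2).le
      · have hl'lt : ((m + 1) / r ^ (k - 1)) % r < r := Nat.mod_lt _ (by omega)
        have heq : ∑ i ∈ Finset.Ioc (r ^ k * ((m + 1) / r ^ k))
              (r ^ (k - 1) * ((m + 1) / r ^ (k - 1))), w (k - 1) i
            = Zf k ((m + 1) / r ^ k) (((m + 1) / r ^ (k - 1)) % r - 1) ω
              - ∫ x, Zf k ((m + 1) / r ^ k) (((m + 1) / r ^ (k - 1)) % r - 1) x ∂μ := by
          rw [hZdef]
          dsimp only
          have hset : Finset.Ioc (r ^ k * ((m + 1) / r ^ k))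
                (r ^ (k - 1) * ((m + 1) / r ^ (k - 1)))
              = Finset.Ioc ((m + 1) / r ^ k * r ^ k)
                ((m + 1) / r ^ k * r ^ k
                  + (((m + 1) / r ^ (k - 1)) % r - 1 + 1) * r ^ (k - 1)) := by
            rw [hblk]
            congr 1
            · ring
            · have e3 : ((m + 1) / r ^ (k - 1)) % r - 1 + 1 = ((m + 1) / r ^ (k - 1)) % r := by
                omega
              rw [e3]
              ring
          rw [hset, integral_finset_sum _ (fun i hi => hgtrint (k - 1) i (by
            have := (Finset.mem_Ioc.1 hi).1
            omega))]
          rw [← Finset.sum_sub_distrib]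
        rw [heq]
        exact (hEfact k hk.1 hk.2 ((m + 1) / r ^ k) hqlt
          (((m + 1) / r ^ (k - 1)) % r - 1) (by omega)).le
    -- block bounds (middle truncation parts)
    have hDbound : ∀ j ∈ Finset.Icc 1 (n + 1),
        |∑ i ∈ Finset.Ioc (r ^ j * ((m + 1) / r ^ j)) (m + 1), (w j i - w (j - 1) i)|
          ≤ lam j + 2 * ((r : ℝ) ^ j
              * (Cd * ∫ x in {x | b (r ^ (j - 1)) < |Y x|}, |Y x| ∂μ)) := by
      intro j hj
      rw [Finset.mem_Icc] at hj
      have hLj : (0:ℝ) < b (r ^ (j - 1)) := hbp _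
      have hLKj : b (r ^ (j - 1)) ≤ b (r ^ j) :=
        hbmono _ _ (Nat.one_le_pow _ _ (by omega)) (Nat.pow_le_pow_right (by omega) (by omega))
      have hqlt : (m + 1) / r ^ j < r ^ (n + 1 - j) := by
        apply Nat.div_lt_of_lt_mul
        calc m + 1 < r ^ (n + 1) := hMR
          _ = r ^ j * r ^ (n + 1 - j) := by rw [← pow_add]; congr 1; omega
      have hsub : Finset.Ioc (r ^ j * ((m + 1) / r ^ j)) (m + 1)
          ⊆ Finset.Ioc ((m + 1) / r ^ j * r ^ j) ((m + 1) / r ^ j * r ^ j + r ^ j) := by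
        intro i hi
        rw [Finset.mem_Ioc] at hi ⊢
        rw [Nat.mul_comm ((m + 1) / r ^ j) (r ^ j)]
        have hdm := Nat.div_add_mod (m + 1) (r ^ j)
        have hml := Nat.mod_lt (m + 1) (show 0 < r ^ j from pow_pos (by omega) j)
        omega
      have hper : ∀ i ∈ Finset.Ioc (r ^ j * ((m + 1) / r ^ j)) (m + 1),
          |w j i - w (j - 1) i| ≤ htr (b (r ^ (j - 1))) (b (r ^ j)) (X i ω)
            + ∫ x, htr (b (r ^ (j - 1))) (b (r ^ j)) (X i x) ∂μ := by
        intro i hi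
        have hi1 : 1 ≤ i := by
          have := (Finset.mem_Ioc.1 hi).1
          omega
        have hwd : w j i - w (j - 1) i
            = (gtr (b (r ^ j)) (X i ω) - gtr (b (r ^ (j - 1))) (X i ω))
              - ∫ x, (gtr (b (r ^ j)) (X i x) - gtr (b (r ^ (j - 1))) (X i x)) ∂μ := by
          rw [hwdef]
          dsimp only
          rw [integral_sub (hgtrint j i hi1) (hgtrint (j - 1) i hi1)]
          ring
        rw [hwd]
        have habs : ∀ x : Ω, |gtr (b (r ^ j)) (X i x) - gtr (b (r ^ (j - 1))) (X i x)|
            = htr (b (r ^ (j - 1))) (b (r ^ j)) (X i x) := fun x => rfl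
        calc |(gtr (b (r ^ j)) (X i ω) - gtr (b (r ^ (j - 1))) (X i ω))
              - ∫ x, (gtr (b (r ^ j)) (X i x) - gtr (b (r ^ (j - 1))) (X i x)) ∂μ|
            ≤ |gtr (b (r ^ j)) (X i ω) - gtr (b (r ^ (j - 1))) (X i ω)|
              + |∫ x, (gtr (b (r ^ j)) (X i x) - gtr (b (r ^ (j - 1))) (X i x)) ∂μ| := by
              rw [sub_eq_add_neg]
              refine le_trans (abs_add_le _ _) ?_
              rw [abs_neg]
          _ ≤ htr (b (r ^ (j - 1))) (b (r ^ j)) (X i ω)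
              + ∫ x, htr (b (r ^ (j - 1))) (b (r ^ j)) (X i x) ∂μ := by
              apply add_le_add (le_of_eq (habs ω))
              refine le_trans (abs_integral_le_integral_abs' _) (le_of_eq ?_)
              apply integral_congr_ae
              exact ae_of_all _ (fun x => habs x)
      have hintT : ∀ i, 1 ≤ i → ∫ x, htr (b (r ^ (j - 1))) (b (r ^ j)) (X i x) ∂μ
          ≤ Cd * ∫ x in {x | b (r ^ (j - 1)) < |Y x|}, |Y x| ∂μ := by
        intro i hi1
        have hintmax : Integrable (fun x => max (|X i x| - b (r ^ (j - 1))) 0) μ := by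
          apply Integrable.mono (hXint i hi1).abs
            (((hXmeas i hi1).abs.sub measurable_const).max measurable_const).aestronglyMeasurable
          apply ae_of_all
          intro x
          rw [Real.norm_eq_abs, Real.norm_eq_abs, abs_abs, abs_of_nonneg (le_max_right _ _)]; simp only [Pi.sub_apply]
          rcases le_total (|X i x| - b (r ^ (j - 1))) 0 with h | h
          · rw [max_eq_right h]; exact abs_nonneg _
          · rw [max_eq_left h]
            have := hLj.le
            linarith
        calc ∫ x, htr (b (r ^ (j - 1))) (b (r ^ j)) (X i x) ∂μ
            ≤ ∫ x, max (|X i x| - b (r ^ (j - 1))) 0 ∂μ := by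
              apply integral_mono (hhtrint (j - 1) j i (by omega) hi1) hintmax
              exact fun x => htr_le_sub hLj.le hLKj _
          _ ≤ Cd * ∫ x in {x | b (r ^ (j - 1)) < |Y x|}, |Y x| ∂μ :=
              dom_tail_integral hCd (hXmeas i hi1) hYmeas hYint (hXint i hi1)
                (hdom' i hi1) hLj.le
      calc |∑ i ∈ Finset.Ioc (r ^ j * ((m + 1) / r ^ j)) (m + 1), (w j i - w (j - 1) i)|
          ≤ ∑ i ∈ Finset.Ioc (r ^ j * ((m + 1) / r ^ j)) (m + 1), |w j i - w (j - 1) i| :=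
          Finset.abs_sum_le_sum_abs _ _
        _ ≤ ∑ i ∈ Finset.Ioc (r ^ j * ((m + 1) / r ^ j)) (m + 1),
            (htr (b (r ^ (j - 1))) (b (r ^ j)) (X i ω)
              + ∫ x, htr (b (r ^ (j - 1))) (b (r ^ j)) (X i x) ∂μ) :=
          Finset.sum_le_sum hper
        _ ≤ ∑ i ∈ Finset.Ioc ((m + 1) / r ^ j * r ^ j) ((m + 1) / r ^ j * r ^ j + r ^ j),
            (htr (b (r ^ (j - 1))) (b (r ^ j)) (X i ω)
              + ∫ x, htr (b (r ^ (j - 1))) (b (r ^ j)) (X i x) ∂μ) := by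
          apply Finset.sum_le_sum_of_subset_of_nonneg hsub
          intro i _ _
          exact add_nonneg (htr_nonneg _ _ _) (integral_nonneg (fun x => htr_nonneg _ _ _))
        _ = (Wf j ((m + 1) / r ^ j) ω - ∫ x, Wf j ((m + 1) / r ^ j) x ∂μ)
            + 2 * ∑ i ∈ Finset.Ioc ((m + 1) / r ^ j * r ^ j)
                ((m + 1) / r ^ j * r ^ j + r ^ j),
              ∫ x, htr (b (r ^ (j - 1))) (b (r ^ j)) (X i x) ∂μ := by
          rw [hWdef]
          dsimp only
          rw [integral_finset_sum _ (fun i hi => hhtrint (j - 1) j i (by omega) (by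
            have := (Finset.mem_Ioc.1 hi).1
            omega))]
          rw [Finset.sum_add_distrib]
          ring
        _ ≤ lam j + 2 * ((r : ℝ) ^ j
            * (Cd * ∫ x in {x | b (r ^ (j - 1)) < |Y x|}, |Y x| ∂μ)) := by
          apply add_le_add
          · exact le_trans (le_abs_self _)
              (hFfact j hj.1 hj.2 ((m + 1) / r ^ j) hqlt).le
          · apply mul_le_mul_of_nonneg_left ?_ (by norm_num)
            calc ∑ i ∈ Finset.Ioc ((m + 1) / r ^ j * r ^ j)
                  ((m + 1) / r ^ j * r ^ j + r ^ j),
                ∫ x, htr (b (r ^ (j - 1))) (b (r ^ j)) (X i x) ∂μ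
                ≤ ∑ i ∈ Finset.Ioc ((m + 1) / r ^ j * r ^ j)
                    ((m + 1) / r ^ j * r ^ j + r ^ j),
                  Cd * ∫ x in {x | b (r ^ (j - 1)) < |Y x|}, |Y x| ∂μ := by
                  apply Finset.sum_le_sum
                  intro i hi
                  apply hintT i (by
                    have := (Finset.mem_Ioc.1 hi).1
                    omega)
              _ = ((r ^ j : ℕ) : ℝ)
                  * (Cd * ∫ x in {x | b (r ^ (j - 1)) < |Y x|}, |Y x| ∂μ) := by
                  rw [Finset.sum_const, Nat.card_Ioc, nsmul_eq_mul]
                  norm_num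
              _ ≤ (r : ℝ) ^ j
                  * (Cd * ∫ x in {x | b (r ^ (j - 1)) < |Y x|}, |Y x| ∂μ) := by
                  rw [show ((r ^ j : ℕ) : ℝ) = (r : ℝ) ^ j from by push_cast; ring]
    -- assemble the per-M bound
    have hw_core := core_decomp r n (m + 1) hr2 hM1 hMR w
    have hmain : |∑ i ∈ Finset.Icc 1 (m + 1), w (n + 1) i|
        ≤ (∑ k ∈ Finset.Icc 1 (n + 1), lam k)
          + ((∑ j ∈ Finset.Icc 1 (n + 1), lam j)
            + 2 * (Cd * ∑ k ∈ Finset.Icc 1 (n + 1),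
                (r : ℝ) ^ k * ∫ x in {x | b (r ^ (k - 1)) < |Y x|}, |Y x| ∂μ)) := by
      rw [hw_core]
      calc |(∑ k ∈ Finset.Icc 1 (n + 1),
            ∑ i ∈ Finset.Ioc (r ^ k * ((m + 1) / r ^ k))
              (r ^ (k - 1) * ((m + 1) / r ^ (k - 1))), w (k - 1) i)
          + ∑ j ∈ Finset.Icc 1 (n + 1),
              ∑ i ∈ Finset.Ioc (r ^ j * ((m + 1) / r ^ j)) (m + 1), (w j i - w (j - 1) i)|
          ≤ |∑ k ∈ Finset.Icc 1 (n + 1),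
              ∑ i ∈ Finset.Ioc (r ^ k * ((m + 1) / r ^ k))
                (r ^ (k - 1) * ((m + 1) / r ^ (k - 1))), w (k - 1) i|
            + |∑ j ∈ Finset.Icc 1 (n + 1),
                ∑ i ∈ Finset.Ioc (r ^ j * ((m + 1) / r ^ j)) (m + 1),
                  (w j i - w (j - 1) i)| := abs_add_le _ _
        _ ≤ (∑ k ∈ Finset.Icc 1 (n + 1),
              |∑ i ∈ Finset.Ioc (r ^ k * ((m + 1) / r ^ k))
                (r ^ (k - 1) * ((m + 1) / r ^ (k - 1))), w (k - 1) i|)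
            + ∑ j ∈ Finset.Icc 1 (n + 1),
                |∑ i ∈ Finset.Ioc (r ^ j * ((m + 1) / r ^ j)) (m + 1),
                  (w j i - w (j - 1) i)| :=
          add_le_add (Finset.abs_sum_le_sum_abs _ _) (Finset.abs_sum_le_sum_abs _ _)
        _ ≤ (∑ k ∈ Finset.Icc 1 (n + 1), lam k)
            + ∑ j ∈ Finset.Icc 1 (n + 1), (lam j + 2 * ((r : ℝ) ^ j
                * (Cd * ∫ x in {x | b (r ^ (j - 1)) < |Y x|}, |Y x| ∂μ))) :=
          add_le_add (Finset.sum_le_sum hUbound) (Finset.sum_le_sum hDbound)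
        _ = _ := by
          rw [Finset.sum_add_distrib]
          congr 1
          congr 1
          rw [Finset.mul_sum, Finset.mul_sum]
          apply Finset.sum_congr rfl
          intro k _
          ring
    -- numeric conclusion
    have hlamsum : ∑ k ∈ Finset.Icc 1 (n + 1), lam k ≤ ε * b (r ^ n) / 4 := by
      have e1 : ∑ k ∈ Finset.Icc 1 (n + 1), lam k
          = ε / (4 * Ca) * ∑ k ∈ Finset.Icc 1 (n + 1), a n k := by
        rw [Finset.mul_sum, hlamdef]
        apply Finset.sum_congr rfl
        intro k _
        ring
      rw [e1]
      calc ε / (4 * Ca) * ∑ k ∈ Finset.Icc 1 (n + 1), a n k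
          ≤ ε / (4 * Ca) * (Ca * b (r ^ n)) :=
          mul_le_mul_of_nonneg_left hAsum (by positivity)
        _ = ε * b (r ^ n) / 4 := by
          field_simp
    have hBs : (∑ k ∈ Finset.Icc 1 (n + 1),
        (r : ℝ) ^ k * ∫ x in {x | b (r ^ (k - 1)) < |Y x|}, |Y x| ∂μ) ≤ δ * b (r ^ n) :=
      hBsum.le
    have hdelta : 3 * Cd * (δ * b (r ^ n)) ≤ ε * b (r ^ n) / 2 := by
      have h6 : (0:ℝ) < 6 * Cd + 6 := by linarith
      rw [hδdef, div_mul_eq_mul_div, ← mul_div_assoc, div_le_div_iff₀ h6 (by norm_num)]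
      nlinarith [mul_nonneg (mul_nonneg hCd.le hε.le) (hbp n).le,
        mul_nonneg hε.le (hbp n).le]
    calc |∑ i ∈ Finset.Icc 1 (m + 1), (X i ω - ∫ x, X i x ∂μ)|
        ≤ |∑ i ∈ Finset.Icc 1 (m + 1), w (n + 1) i|
          + |∑ i ∈ Finset.Icc 1 (m + 1),
              ((∫ x, gtr (b (r ^ (n + 1))) (X i x) ∂μ) - ∫ x, X i x ∂μ)| := by
          rw [hsplit]
          exact abs_add_le _ _
      _ ≤ ε * b (r ^ n) := by
          have h1 := hmain
          have h2 := hthird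
          have hCdB : Cd * (∑ k ∈ Finset.Icc 1 (n + 1),
              (r : ℝ) ^ k * ∫ x in {x | b (r ^ (k - 1)) < |Y x|}, |Y x| ∂μ)
              ≤ Cd * (δ * b (r ^ n)) := mul_le_mul_of_nonneg_left hBs hCd.le
          nlinarith [hlamsum, hdelta, hCdB, h1, h2]
  -- measure of the union
  have hmeasure : (μ {ω | ε * b (r ^ n) <
      fmax (r ^ (n + 1) - 2) (fun m =>
        |∑ k ∈ Finset.Icc 1 (m + 1), (X k ω - ∫ x, X k x ∂μ)|)}).toReal
      ≤ (μ Aset).toReal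
        + ((∑ k ∈ Finset.Icc 1 (n + 1), ∑ h ∈ Finset.range (r ^ (n + 1 - k)),
            ∑ l ∈ Finset.range (r - 1), (μ (Eset k h l)).toReal)
          + ∑ j ∈ Finset.Icc 1 (n + 1), ∑ h ∈ Finset.range (r ^ (n + 1 - j)),
              (μ (Fset j h)).toReal) := by
    have hUEle : μ UE ≤ ∑ k ∈ Finset.Icc 1 (n + 1), ∑ h ∈ Finset.range (r ^ (n + 1 - k)),
        ∑ l ∈ Finset.range (r - 1), μ (Eset k h l) := by
      calc μ UE ≤ ∑ k ∈ Finset.Icc 1 (n + 1),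
          μ (⋃ h ∈ Finset.range (r ^ (n + 1 - k)), ⋃ l ∈ Finset.range (r - 1), Eset k h l) :=
          measure_biUnion_finset_le _ _
        _ ≤ ∑ k ∈ Finset.Icc 1 (n + 1), ∑ h ∈ Finset.range (r ^ (n + 1 - k)),
            μ (⋃ l ∈ Finset.range (r - 1), Eset k h l) :=
          Finset.sum_le_sum (fun k _ => measure_biUnion_finset_le _ _)
        _ ≤ ∑ k ∈ Finset.Icc 1 (n + 1), ∑ h ∈ Finset.range (r ^ (n + 1 - k)),
            ∑ l ∈ Finset.range (r - 1), μ (Eset k h l) :=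
          Finset.sum_le_sum (fun k _ =>
            Finset.sum_le_sum (fun h _ => measure_biUnion_finset_le _ _))
    have hUFle : μ UF ≤ ∑ j ∈ Finset.Icc 1 (n + 1), ∑ h ∈ Finset.range (r ^ (n + 1 - j)),
        μ (Fset j h) := by
      calc μ UF ≤ ∑ j ∈ Finset.Icc 1 (n + 1),
          μ (⋃ h ∈ Finset.range (r ^ (n + 1 - j)), Fset j h) := measure_biUnion_finset_le _ _
        _ ≤ _ := Finset.sum_le_sum (fun j _ => measure_biUnion_finset_le _ _)
    have hbig : μ {ω | ε * b (r ^ n) <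
        fmax (r ^ (n + 1) - 2) (fun m =>
          |∑ k ∈ Finset.Icc 1 (m + 1), (X k ω - ∫ x, X k x ∂μ)|)}
        ≤ μ Aset + ((∑ k ∈ Finset.Icc 1 (n + 1), ∑ h ∈ Finset.range (r ^ (n + 1 - k)),
            ∑ l ∈ Finset.range (r - 1), μ (Eset k h l))
          + ∑ j ∈ Finset.Icc 1 (n + 1), ∑ h ∈ Finset.range (r ^ (n + 1 - j)), μ (Fset j h)) := by
      calc μ {ω | ε * b (r ^ n) < fmax (r ^ (n + 1) - 2) (fun m =>
            |∑ k ∈ Finset.Icc 1 (m + 1), (X k ω - ∫ x, X k x ∂μ)|)}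
          ≤ μ (Aset ∪ (UE ∪ UF)) := measure_mono hincl
        _ ≤ μ Aset + μ (UE ∪ UF) := measure_union_le _ _
        _ ≤ μ Aset + (μ UE + μ UF) := add_le_add le_rfl (measure_union_le _ _)
        _ ≤ _ := add_le_add le_rfl (add_le_add hUEle hUFle)
    have hne1 : (∑ k ∈ Finset.Icc 1 (n + 1), ∑ h ∈ Finset.range (r ^ (n + 1 - k)),
        ∑ l ∈ Finset.range (r - 1), μ (Eset k h l)) ≠ ⊤ := by
      refine (ENNReal.sum_lt_top.2 (fun k _ => ?_)).ne
      refine ENNReal.sum_lt_top.2 (fun h _ => ?_)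
      exact ENNReal.sum_lt_top.2 (fun l _ => measure_lt_top μ _)
    have hne2 : (∑ j ∈ Finset.Icc 1 (n + 1), ∑ h ∈ Finset.range (r ^ (n + 1 - j)),
        μ (Fset j h)) ≠ ⊤ := by
      refine (ENNReal.sum_lt_top.2 (fun j _ => ?_)).ne
      exact ENNReal.sum_lt_top.2 (fun h _ => measure_lt_top μ _)
    have hne : μ Aset + ((∑ k ∈ Finset.Icc 1 (n + 1), ∑ h ∈ Finset.range (r ^ (n + 1 - k)),
        ∑ l ∈ Finset.range (r - 1), μ (Eset k h l))
          + ∑ j ∈ Finset.Icc 1 (n + 1), ∑ h ∈ Finset.range (r ^ (n + 1 - j)), μ (Fset j h))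
        ≠ ⊤ := by
      apply ENNReal.add_ne_top.2
      exact ⟨measure_ne_top _ _, ENNReal.add_ne_top.2 ⟨hne1, hne2⟩⟩
    have := ENNReal.toReal_mono hne hbig
    refine le_trans this (le_of_eq ?_)
    rw [ENNReal.toReal_add (measure_ne_top _ _) (ENNReal.add_ne_top.2 ⟨hne1, hne2⟩),
      ENNReal.toReal_add hne1 hne2]
    congr 1
    congr 1
    · rw [ENNReal.toReal_sum (fun k _ => ?_)]
      · apply Finset.sum_congr rfl
        intro k _
        rw [ENNReal.toReal_sum (fun h _ => ?_)]
        · apply Finset.sum_congr rfl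
          intro h _
          rw [ENNReal.toReal_sum (fun l _ => measure_ne_top _ _)]
        · exact (ENNReal.sum_lt_top.2 (fun l _ => measure_lt_top μ _)).ne
      · refine (ENNReal.sum_lt_top.2 (fun h _ => ?_)).ne
        exact ENNReal.sum_lt_top.2 (fun l _ => measure_lt_top μ _)
    · rw [ENNReal.toReal_sum (fun j _ => ?_)]
      · apply Finset.sum_congr rfl
        intro j _
        rw [ENNReal.toReal_sum (fun h _ => measure_ne_top _ _)]
      · exact (ENNReal.sum_lt_top.2 (fun h _ => measure_lt_top μ _)).ne
  -- bound for A
  have hAbound : (μ Aset).toReal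
      ≤ Cd * (r : ℝ) * ((r : ℝ) ^ n * (μ {ω | b (r ^ (n + 1)) < |Y ω|}).toReal) := by
    have h1 : μ Aset ≤ ∑ i ∈ Finset.Icc 1 (r ^ (n + 1) - 1),
        μ {ω | b (r ^ (n + 1)) < |X i ω|} := measure_biUnion_finset_le _ _
    have hne : (∑ i ∈ Finset.Icc 1 (r ^ (n + 1) - 1),
        μ {ω | b (r ^ (n + 1)) < |X i ω|}) ≠ ⊤ :=
      (ENNReal.sum_lt_top.2 (fun i _ => measure_lt_top μ _)).ne
    calc (μ Aset).toReal ≤ (∑ i ∈ Finset.Icc 1 (r ^ (n + 1) - 1),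
          μ {ω | b (r ^ (n + 1)) < |X i ω|}).toReal := ENNReal.toReal_mono hne h1
      _ = ∑ i ∈ Finset.Icc 1 (r ^ (n + 1) - 1),
          (μ {ω | b (r ^ (n + 1)) < |X i ω|}).toReal :=
        ENNReal.toReal_sum (fun i _ => measure_ne_top _ _)
      _ ≤ ∑ i ∈ Finset.Icc 1 (r ^ (n + 1) - 1),
          Cd * (μ {ω | b (r ^ (n + 1)) < |Y ω|}).toReal := by
        apply Finset.sum_le_sum
        intro i hi
        exact dom_meas hCd (hdom' i (Finset.mem_Icc.1 hi).1) (hbp (n + 1))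
      _ = ((r ^ (n + 1) - 1 : ℕ) : ℝ) * (Cd * (μ {ω | b (r ^ (n + 1)) < |Y ω|}).toReal) := by
        rw [Finset.sum_const, Nat.card_Icc, nsmul_eq_mul]
        norm_num
      _ ≤ ((r : ℝ) * (r : ℝ) ^ n) * (Cd * (μ {ω | b (r ^ (n + 1)) < |Y ω|}).toReal) := by
        apply mul_le_mul_of_nonneg_right ?_ (by positivity)
        calc ((r ^ (n + 1) - 1 : ℕ) : ℝ) ≤ ((r ^ (n + 1) : ℕ) : ℝ) := by
              exact_mod_cast Nat.sub_le _ _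
          _ = (r : ℝ) ^ (n + 1) := by push_cast; ring
          _ = (r : ℝ) * (r : ℝ) ^ n := by ring
      _ = Cd * (r : ℝ) * ((r : ℝ) ^ n * (μ {ω | b (r ^ (n + 1)) < |Y ω|}).toReal) := by
        ring
  -- bound for E events
  have hEbound : ∀ k ∈ Finset.Icc 1 (n + 1), ∀ h ∈ Finset.range (r ^ (n + 1 - k)),
      ∀ l ∈ Finset.range (r - 1),
      (μ (Eset k h l)).toReal
        ≤ ((r : ℝ) ^ k * (Cd * ((∫ ω in {ω | |Y ω| ≤ b (r ^ k)}, (Y ω) ^ 2 ∂μ)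
              + (b (r ^ k)) ^ 2 * (μ {ω | b (r ^ (k - 1)) < |Y ω|}).toReal))
            + 2 * max (pairSum (1 + h * r ^ k) (h * r ^ k + (l + 1) * r ^ (k - 1))
                (fun i j => Gcov μ (X i) (X j) (b (r ^ (k - 1))))) 0) / lam k ^ 2 := by
    intro k hk h hh l hl
    rw [Finset.mem_Icc] at hk
    rw [Finset.mem_range] at hh hl
    have hL : (0:ℝ) < b (r ^ (k - 1)) := hbp _
    have hLK : b (r ^ (k - 1)) ≤ b (r ^ k) :=
      hbmono _ _ (Nat.one_le_pow _ _ (by omega)) (Nat.pow_le_pow_right (by omega) (by omega))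
    have hmeas' : ∀ i ∈ Finset.Ioc (h * r ^ k) (h * r ^ k + (l + 1) * r ^ (k - 1)),
        Measurable (fun ω => gtr (b (r ^ (k - 1))) (X i ω)) := by
      intro i hi
      have := (Finset.mem_Ioc.1 hi).1
      exact measurable_gtr _ (hXmeas i (by omega))
    have hbd' : ∀ i ∈ Finset.Ioc (h * r ^ k) (h * r ^ k + (l + 1) * r ^ (k - 1)), ∀ ω,
        |gtr (b (r ^ (k - 1))) (X i ω)| ≤ b (r ^ (k - 1)) :=
      fun i _ ω => gtr_abs_le hL.le _
    have hcheb := cheb_block μ (fun i ω => gtr (b (r ^ (k - 1))) (X i ω))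
      (fun _ => b (r ^ (k - 1))) (h * r ^ k) (h * r ^ k + (l + 1) * r ^ (k - 1))
      hmeas' hbd' (hlampos k hk.1 hk.2)
    refine le_trans hcheb ?_
    rw [div_le_div_iff_of_pos_right (pow_pos (hlampos k hk.1 hk.2) 2)]
    have hI2nn : (0:ℝ) ≤ ∫ ω in {ω | |Y ω| ≤ b (r ^ k)}, (Y ω) ^ 2 ∂μ :=
      setIntegral_nonneg (measurableSet_le hYmeas.abs measurable_const)
        (fun ω _ => sq_nonneg _)
    have hPnn : (0:ℝ) ≤ (μ {ω | b (r ^ (k - 1)) < |Y ω|}).toReal := ENNReal.toReal_nonneg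
    have hcnn : (0:ℝ) ≤ Cd * ((∫ ω in {ω | |Y ω| ≤ b (r ^ k)}, (Y ω) ^ 2 ∂μ)
        + (b (r ^ k)) ^ 2 * (μ {ω | b (r ^ (k - 1)) < |Y ω|}).toReal) := by positivity
    apply add_le_add
    · -- second moment part
      have hper : ∀ i ∈ Finset.Ioc (h * r ^ k) (h * r ^ k + (l + 1) * r ^ (k - 1)),
          ∫ ω, (gtr (b (r ^ (k - 1))) (X i ω)) ^ 2 ∂μ
            ≤ Cd * ((∫ ω in {ω | |Y ω| ≤ b (r ^ k)}, (Y ω) ^ 2 ∂μ)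
              + (b (r ^ k)) ^ 2 * (μ {ω | b (r ^ (k - 1)) < |Y ω|}).toReal) := by
        intro i hi
        have hi1 : 1 ≤ i := by
          have := (Finset.mem_Ioc.1 hi).1
          omega
        calc ∫ ω, (gtr (b (r ^ (k - 1))) (X i ω)) ^ 2 ∂μ
            ≤ ∫ ω, min ((X i ω) ^ 2) ((b (r ^ (k - 1))) ^ 2) ∂μ := by
              apply integral_mono
              · apply integrable_of_bounded ((measurable_gtr _ (hXmeas i hi1)).pow_const 2)
                intro ω
                rw [abs_of_nonneg (sq_nonneg _)]
                calc (gtr (b (r ^ (k - 1))) (X i ω)) ^ 2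
                    ≤ min ((X i ω) ^ 2) ((b (r ^ (k - 1))) ^ 2) := gtr_sq_le hL.le _
                  _ ≤ (b (r ^ (k - 1))) ^ 2 := min_le_right _ _
              · apply integrable_of_bounded (((hXmeas i hi1).pow_const 2).min measurable_const)
                intro ω
                rw [abs_of_nonneg (le_min (sq_nonneg _) (by positivity))]
                exact min_le_right _ _
              · exact fun ω => gtr_sq_le hL.le _
          _ ≤ Cd * ((∫ ω in {ω | |Y ω| ≤ b (r ^ k)}, (Y ω) ^ 2 ∂μ)
              + (b (r ^ k)) ^ 2 * (μ {ω | b (r ^ (k - 1)) < |Y ω|}).toReal) :=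
            dom_sq_integral hCd (hXmeas i hi1) hYmeas (hdom' i hi1) hL hLK
      calc ∑ i ∈ Finset.Ioc (h * r ^ k) (h * r ^ k + (l + 1) * r ^ (k - 1)),
            ∫ ω, (gtr (b (r ^ (k - 1))) (X i ω)) ^ 2 ∂μ
          ≤ ∑ i ∈ Finset.Ioc (h * r ^ k) (h * r ^ k + (l + 1) * r ^ (k - 1)),
            Cd * ((∫ ω in {ω | |Y ω| ≤ b (r ^ k)}, (Y ω) ^ 2 ∂μ)
              + (b (r ^ k)) ^ 2 * (μ {ω | b (r ^ (k - 1)) < |Y ω|}).toReal) :=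
          Finset.sum_le_sum hper
        _ = (((l + 1) * r ^ (k - 1) : ℕ) : ℝ)
            * (Cd * ((∫ ω in {ω | |Y ω| ≤ b (r ^ k)}, (Y ω) ^ 2 ∂μ)
              + (b (r ^ k)) ^ 2 * (μ {ω | b (r ^ (k - 1)) < |Y ω|}).toReal)) := by
          rw [Finset.sum_const, Nat.card_Ioc, nsmul_eq_mul]
          norm_num
        _ ≤ ((r : ℝ) ^ k)
            * (Cd * ((∫ ω in {ω | |Y ω| ≤ b (r ^ k)}, (Y ω) ^ 2 ∂μ)
              + (b (r ^ k)) ^ 2 * (μ {ω | b (r ^ (k - 1)) < |Y ω|}).toReal)) := by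
          apply mul_le_mul_of_nonneg_right ?_ hcnn
          have hnat : (l + 1) * r ^ (k - 1) ≤ r ^ k := by
            calc (l + 1) * r ^ (k - 1) ≤ r * r ^ (k - 1) :=
                Nat.mul_le_mul_right _ (by omega)
              _ = r ^ k := by
                rw [← pow_succ']
                congr 1
                omega
          calc (((l + 1) * r ^ (k - 1) : ℕ) : ℝ) ≤ ((r ^ k : ℕ) : ℝ) := by exact_mod_cast hnat
            _ = (r : ℝ) ^ k := by push_cast; ring
    · -- covariance part
      have hps : pairSum (1 + h * r ^ k) (h * r ^ k + (l + 1) * r ^ (k - 1))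
          (fun i j => Gcov μ (X i) (X j) (b (r ^ (k - 1))))
          = ∑ i ∈ Finset.Ioc (h * r ^ k) (h * r ^ k + (l + 1) * r ^ (k - 1)),
            ∑ j ∈ Finset.Ioc i (h * r ^ k + (l + 1) * r ^ (k - 1)),
              cov μ (fun ω => gtr (b (r ^ (k - 1))) (X i ω))
                (fun ω => gtr (b (r ^ (k - 1))) (X j ω)) := by
        unfold pairSum Gcov
        rw [show 1 + h * r ^ k = h * r ^ k + 1 from by omega, Finset.Icc_add_one_left_eq_Ioc]
        apply Finset.sum_congr rfl
        intro i _
        rw [Finset.Icc_add_one_left_eq_Ioc]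
      rw [hps]
  -- bound for F events
  have hFbound : ∀ j ∈ Finset.Icc 1 (n + 1), ∀ h ∈ Finset.range (r ^ (n + 1 - j)),
      (μ (Fset j h)).toReal
        ≤ ((r : ℝ) ^ j * (Cd * ((b (r ^ j)) ^ 2 * (μ {ω | b (r ^ (j - 1)) < |Y ω|}).toReal))
            + 2 * max (pairSum (1 + h * r ^ j) (h * r ^ j + r ^ j)
                (fun i i' => Hcov μ (X i) (X i') (b (r ^ (j - 1))) (b (r ^ j)))) 0)
          / lam j ^ 2 := by
    intro j hj h hh
    rw [Finset.mem_Icc] at hj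
    rw [Finset.mem_range] at hh
    have hL : (0:ℝ) < b (r ^ (j - 1)) := hbp _
    have hLK : b (r ^ (j - 1)) ≤ b (r ^ j) :=
      hbmono _ _ (Nat.one_le_pow _ _ (by omega)) (Nat.pow_le_pow_right (by omega) (by omega))
    have hmeas' : ∀ i ∈ Finset.Ioc (h * r ^ j) (h * r ^ j + r ^ j),
        Measurable (fun ω => htr (b (r ^ (j - 1))) (b (r ^ j)) (X i ω)) := by
      intro i hi
      have := (Finset.mem_Ioc.1 hi).1
      exact measurable_htr _ _ (hXmeas i (by omega))
    have hbd' : ∀ i ∈ Finset.Ioc (h * r ^ j) (h * r ^ j + r ^ j), ∀ ω,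
        |htr (b (r ^ (j - 1))) (b (r ^ j)) (X i ω)| ≤ b (r ^ j) := by
      intro i _ ω
      rw [abs_of_nonneg (htr_nonneg _ _ _)]
      exact htr_le hL.le hLK _
    have hcheb := cheb_block μ (fun i ω => htr (b (r ^ (j - 1))) (b (r ^ j)) (X i ω))
      (fun _ => b (r ^ j)) (h * r ^ j) (h * r ^ j + r ^ j)
      hmeas' hbd' (hlampos j hj.1 hj.2)
    refine le_trans hcheb ?_
    rw [div_le_div_iff_of_pos_right (pow_pos (hlampos j hj.1 hj.2) 2)]
    have hPnn : (0:ℝ) ≤ (μ {ω | b (r ^ (j - 1)) < |Y ω|}).toReal := ENNReal.toReal_nonneg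
    apply add_le_add
    · -- second moment part
      have hper : ∀ i ∈ Finset.Ioc (h * r ^ j) (h * r ^ j + r ^ j),
          ∫ ω, (htr (b (r ^ (j - 1))) (b (r ^ j)) (X i ω)) ^ 2 ∂μ
            ≤ Cd * ((b (r ^ j)) ^ 2 * (μ {ω | b (r ^ (j - 1)) < |Y ω|}).toReal) := by
        intro i hi
        have hi1 : 1 ≤ i := by
          have := (Finset.mem_Ioc.1 hi).1
          omega
        calc ∫ ω, (htr (b (r ^ (j - 1))) (b (r ^ j)) (X i ω)) ^ 2 ∂μ
            ≤ (b (r ^ j)) ^ 2 * (μ {ω | b (r ^ (j - 1)) < |X i ω|}).toReal :=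
            htr_sq_int_bound μ (hXmeas i hi1) hL hLK
          _ ≤ (b (r ^ j)) ^ 2 * (Cd * (μ {ω | b (r ^ (j - 1)) < |Y ω|}).toReal) :=
            mul_le_mul_of_nonneg_left (dom_meas hCd (hdom' i hi1) hL) (sq_nonneg _)
          _ = Cd * ((b (r ^ j)) ^ 2 * (μ {ω | b (r ^ (j - 1)) < |Y ω|}).toReal) := by ring
      calc ∑ i ∈ Finset.Ioc (h * r ^ j) (h * r ^ j + r ^ j),
            ∫ ω, (htr (b (r ^ (j - 1))) (b (r ^ j)) (X i ω)) ^ 2 ∂μ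
          ≤ ∑ i ∈ Finset.Ioc (h * r ^ j) (h * r ^ j + r ^ j),
            Cd * ((b (r ^ j)) ^ 2 * (μ {ω | b (r ^ (j - 1)) < |Y ω|}).toReal) :=
          Finset.sum_le_sum hper
        _ = ((r ^ j : ℕ) : ℝ)
            * (Cd * ((b (r ^ j)) ^ 2 * (μ {ω | b (r ^ (j - 1)) < |Y ω|}).toReal)) := by
          rw [Finset.sum_const, Nat.card_Ioc, nsmul_eq_mul]
          norm_num
        _ ≤ (r : ℝ) ^ j
            * (Cd * ((b (r ^ j)) ^ 2 * (μ {ω | b (r ^ (j - 1)) < |Y ω|}).toReal)) := by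
          apply mul_le_mul_of_nonneg_right ?_ (by positivity)
          rw [show ((r ^ j : ℕ) : ℝ) = (r : ℝ) ^ j from by push_cast; ring]
    · -- covariance part
      have hps : pairSum (1 + h * r ^ j) (h * r ^ j + r ^ j)
          (fun i i' => Hcov μ (X i) (X i') (b (r ^ (j - 1))) (b (r ^ j)))
          = ∑ i ∈ Finset.Ioc (h * r ^ j) (h * r ^ j + r ^ j),
            ∑ i' ∈ Finset.Ioc i (h * r ^ j + r ^ j),
              cov μ (fun ω => htr (b (r ^ (j - 1))) (b (r ^ j)) (X i ω))
                (fun ω => htr (b (r ^ (j - 1))) (b (r ^ j)) (X i' ω)) := by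
        unfold pairSum Hcov
        rw [show 1 + h * r ^ j = h * r ^ j + 1 from by omega, Finset.Icc_add_one_left_eq_Ioc]
        apply Finset.sum_congr rfl
        intro i _
        rw [Finset.Icc_add_one_left_eq_Ioc]
      rw [hps]
  -- final assembly
  have hrm1 : ((r - 1 : ℕ) : ℝ) = (r : ℝ) - 1 := by
    rw [Nat.cast_sub (by omega)]
    norm_num
  have hrpow : ∀ k, k ≤ n + 1 → ((r : ℝ) ^ (n + 1 - k)) * (r : ℝ) ^ k = (r : ℝ) ^ (n + 1) := by
    intro k hk
    rw [← pow_add]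
    congr 1
    omega
  -- per-k bound on the E double sum
  have hEsumk : ∀ k ∈ Finset.Icc 1 (n + 1),
      ∑ h ∈ Finset.range (r ^ (n + 1 - k)), ∑ l ∈ Finset.range (r - 1),
          (μ (Eset k h l)).toReal
        ≤ 16 * Ca ^ 2 * Cd * (r : ℝ) ^ 2
              * ((r : ℝ) ^ n / ε ^ 2 * (((a n k) ^ 2)⁻¹
                * ∫ ω in {ω | |Y ω| ≤ b (r ^ k)}, (Y ω) ^ 2 ∂μ))
          + 16 * Ca ^ 2 * Cd * (r : ℝ) ^ 2
              * ((r : ℝ) ^ n / ε ^ 2 * ((b (r ^ k)) ^ 2 / (a n k) ^ 2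
                * (μ {ω | b (r ^ (k - 1)) < |Y ω|}).toReal))
          + 32 * Ca ^ 2 * (r : ℝ)
              * ((1 : ℝ) / ε ^ 2 * (((a n k) ^ 2)⁻¹
                * fmax (r - 2) (fun l =>
                    ∑ h ∈ Finset.range (r ^ (n + 1 - k)),
                      max (pairSum (1 + h * r ^ k) (h * r ^ k + (l + 1) * r ^ (k - 1))
                        (fun i j => Gcov μ (X i) (X j) (b (r ^ (k - 1))))) 0))) := by
    intro k hkk
    rw [Finset.mem_Icc] at hkk
    have hak : 0 < a n k := hapos n k hn1 hkk.1 hkk.2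
    have hlampos' : 0 < lam k := hlampos k hkk.1 hkk.2
    have hinv : (lam k ^ 2)⁻¹ = 16 * Ca ^ 2 * ((ε ^ 2)⁻¹ * ((a n k) ^ 2)⁻¹) := by
      rw [hlamdef]
      dsimp only
      field_simp
      ring
    have hI2nn : (0:ℝ) ≤ ∫ ω in {ω | |Y ω| ≤ b (r ^ k)}, (Y ω) ^ 2 ∂μ :=
      setIntegral_nonneg (measurableSet_le hYmeas.abs measurable_const)
        (fun ω _ => sq_nonneg _)
    have hPnn : (0:ℝ) ≤ (μ {ω | b (r ^ (k - 1)) < |Y ω|}).toReal := ENNReal.toReal_nonneg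
    have hGnn : (0:ℝ) ≤ fmax (r - 2) (fun l =>
        ∑ h ∈ Finset.range (r ^ (n + 1 - k)),
          max (pairSum (1 + h * r ^ k) (h * r ^ k + (l + 1) * r ^ (k - 1))
            (fun i j => Gcov μ (X i) (X j) (b (r ^ (k - 1))))) 0) := by
      refine le_trans ?_ (le_fmax (N := r - 2) 0 (by omega))
      exact Finset.sum_nonneg (fun h _ => le_max_right _ _)
    -- split the per-event bound
    have key : ∀ h ∈ Finset.range (r ^ (n + 1 - k)), ∀ l ∈ Finset.range (r - 1),
        (μ (Eset k h l)).toReal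
          ≤ ((r : ℝ) ^ k * (Cd * ((∫ ω in {ω | |Y ω| ≤ b (r ^ k)}, (Y ω) ^ 2 ∂μ)
                + (b (r ^ k)) ^ 2 * (μ {ω | b (r ^ (k - 1)) < |Y ω|}).toReal))) * (lam k ^ 2)⁻¹
            + (2 * max (pairSum (1 + h * r ^ k) (h * r ^ k + (l + 1) * r ^ (k - 1))
                (fun i j => Gcov μ (X i) (X j) (b (r ^ (k - 1))))) 0) * (lam k ^ 2)⁻¹ := by
      intro h hh l hl
      have := hEbound k (Finset.mem_Icc.2 hkk) h hh l hl
      rw [div_eq_mul_inv, add_mul] at this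
      exact this
    have hsum1 : ∑ h ∈ Finset.range (r ^ (n + 1 - k)), ∑ l ∈ Finset.range (r - 1),
        (μ (Eset k h l)).toReal
        ≤ (((r ^ (n + 1 - k) : ℕ) : ℝ) * ((r - 1 : ℕ) : ℝ))
            * (((r : ℝ) ^ k * (Cd * ((∫ ω in {ω | |Y ω| ≤ b (r ^ k)}, (Y ω) ^ 2 ∂μ)
                + (b (r ^ k)) ^ 2 * (μ {ω | b (r ^ (k - 1)) < |Y ω|}).toReal))) * (lam k ^ 2)⁻¹)
          + (2 * (lam k ^ 2)⁻¹) * ∑ l ∈ Finset.range (r - 1),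
              ∑ h ∈ Finset.range (r ^ (n + 1 - k)),
                max (pairSum (1 + h * r ^ k) (h * r ^ k + (l + 1) * r ^ (k - 1))
                  (fun i j => Gcov μ (X i) (X j) (b (r ^ (k - 1))))) 0 := by
      calc ∑ h ∈ Finset.range (r ^ (n + 1 - k)), ∑ l ∈ Finset.range (r - 1),
            (μ (Eset k h l)).toReal
          ≤ ∑ h ∈ Finset.range (r ^ (n + 1 - k)), ∑ l ∈ Finset.range (r - 1),
            (((r : ℝ) ^ k * (Cd * ((∫ ω in {ω | |Y ω| ≤ b (r ^ k)}, (Y ω) ^ 2 ∂μ)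
                + (b (r ^ k)) ^ 2 * (μ {ω | b (r ^ (k - 1)) < |Y ω|}).toReal))) * (lam k ^ 2)⁻¹
              + (2 * max (pairSum (1 + h * r ^ k) (h * r ^ k + (l + 1) * r ^ (k - 1))
                  (fun i j => Gcov μ (X i) (X j) (b (r ^ (k - 1))))) 0) * (lam k ^ 2)⁻¹) := by
            apply Finset.sum_le_sum
            intro h hh
            apply Finset.sum_le_sum
            intro l hl
            exact key h hh l hl
        _ = (((r ^ (n + 1 - k) : ℕ) : ℝ) * ((r - 1 : ℕ) : ℝ))
              * (((r : ℝ) ^ k * (Cd * ((∫ ω in {ω | |Y ω| ≤ b (r ^ k)}, (Y ω) ^ 2 ∂μ)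
                  + (b (r ^ k)) ^ 2 * (μ {ω | b (r ^ (k - 1)) < |Y ω|}).toReal))) * (lam k ^ 2)⁻¹)
            + (2 * (lam k ^ 2)⁻¹) * ∑ h ∈ Finset.range (r ^ (n + 1 - k)),
                ∑ l ∈ Finset.range (r - 1),
                  max (pairSum (1 + h * r ^ k) (h * r ^ k + (l + 1) * r ^ (k - 1))
                    (fun i j => Gcov μ (X i) (X j) (b (r ^ (k - 1))))) 0 := by
            rw [Finset.sum_congr rfl (fun h (_ : h ∈ Finset.range (r ^ (n + 1 - k))) =>
              Finset.sum_add_distrib), Finset.sum_add_distrib]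
            congr 1
            · rw [Finset.sum_congr rfl (fun h (_ : h ∈ Finset.range (r ^ (n + 1 - k))) =>
                Finset.sum_const _), Finset.sum_const]
              simp only [nsmul_eq_mul, Finset.card_range]
              ring
            · rw [Finset.mul_sum]
              apply Finset.sum_congr rfl
              intro h _
              rw [Finset.mul_sum]
              apply Finset.sum_congr rfl
              intro l _
              ring
        _ = _ := by
            rw [Finset.sum_comm]
    refine le_trans hsum1 ?_
    -- bound the two pieces
    have hswap : ∑ l ∈ Finset.range (r - 1), ∑ h ∈ Finset.range (r ^ (n + 1 - k)),
          max (pairSum (1 + h * r ^ k) (h * r ^ k + (l + 1) * r ^ (k - 1))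
            (fun i j => Gcov μ (X i) (X j) (b (r ^ (k - 1))))) 0
        ≤ ((r : ℝ) - 1) * fmax (r - 2) (fun l =>
            ∑ h ∈ Finset.range (r ^ (n + 1 - k)),
              max (pairSum (1 + h * r ^ k) (h * r ^ k + (l + 1) * r ^ (k - 1))
                (fun i j => Gcov μ (X i) (X j) (b (r ^ (k - 1))))) 0) := by
      calc ∑ l ∈ Finset.range (r - 1), ∑ h ∈ Finset.range (r ^ (n + 1 - k)),
            max (pairSum (1 + h * r ^ k) (h * r ^ k + (l + 1) * r ^ (k - 1))
              (fun i j => Gcov μ (X i) (X j) (b (r ^ (k - 1))))) 0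
          ≤ ∑ l ∈ Finset.range (r - 1), fmax (r - 2) (fun l =>
              ∑ h ∈ Finset.range (r ^ (n + 1 - k)),
                max (pairSum (1 + h * r ^ k) (h * r ^ k + (l + 1) * r ^ (k - 1))
                  (fun i j => Gcov μ (X i) (X j) (b (r ^ (k - 1))))) 0) := by
            apply Finset.sum_le_sum
            intro l hl
            rw [Finset.mem_range] at hl
            exact le_fmax (N := r - 2)
              (f := fun l => ∑ h ∈ Finset.range (r ^ (n + 1 - k)),
                max (pairSum (1 + h * r ^ k) (h * r ^ k + (l + 1) * r ^ (k - 1))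
                  (fun i j => Gcov μ (X i) (X j) (b (r ^ (k - 1))))) 0) l (by omega)
        _ = ((r - 1 : ℕ) : ℝ) * fmax (r - 2) (fun l =>
              ∑ h ∈ Finset.range (r ^ (n + 1 - k)),
                max (pairSum (1 + h * r ^ k) (h * r ^ k + (l + 1) * r ^ (k - 1))
                  (fun i j => Gcov μ (X i) (X j) (b (r ^ (k - 1))))) 0) := by
            rw [Finset.sum_const, nsmul_eq_mul, Finset.card_range]
        _ ≤ _ := by
            rw [hrm1]
    have hc1 : ((r ^ (n + 1 - k) : ℕ) : ℝ) * ((r - 1 : ℕ) : ℝ) * (r : ℝ) ^ k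
        ≤ (r : ℝ) ^ n * (r : ℝ) ^ 2 := by
      rw [hrm1]
      have h1 : ((r ^ (n + 1 - k) : ℕ) : ℝ) = (r : ℝ) ^ (n + 1 - k) := by push_cast; ring
      rw [h1]
      calc (r : ℝ) ^ (n + 1 - k) * ((r : ℝ) - 1) * (r : ℝ) ^ k
          ≤ (r : ℝ) ^ (n + 1 - k) * (r : ℝ) * (r : ℝ) ^ k := by
            apply mul_le_mul_of_nonneg_right ?_ (by positivity)
            apply mul_le_mul_of_nonneg_left (by linarith) (by positivity)
        _ = ((r : ℝ) ^ (n + 1 - k) * (r : ℝ) ^ k) * (r : ℝ) := by ring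
        _ = (r : ℝ) ^ (n + 1) * (r : ℝ) := by rw [hrpow k hkk.2]
        _ = (r : ℝ) ^ n * (r : ℝ) ^ 2 := by ring
    have hcnn : (0:ℝ) ≤ Cd * ((∫ ω in {ω | |Y ω| ≤ b (r ^ k)}, (Y ω) ^ 2 ∂μ)
        + (b (r ^ k)) ^ 2 * (μ {ω | b (r ^ (k - 1)) < |Y ω|}).toReal) := by positivity
    have hpart1 : (((r ^ (n + 1 - k) : ℕ) : ℝ) * ((r - 1 : ℕ) : ℝ))
          * (((r : ℝ) ^ k * (Cd * ((∫ ω in {ω | |Y ω| ≤ b (r ^ k)}, (Y ω) ^ 2 ∂μ)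
              + (b (r ^ k)) ^ 2 * (μ {ω | b (r ^ (k - 1)) < |Y ω|}).toReal))) * (lam k ^ 2)⁻¹)
        ≤ ((r : ℝ) ^ n * (r : ℝ) ^ 2)
            * ((Cd * ((∫ ω in {ω | |Y ω| ≤ b (r ^ k)}, (Y ω) ^ 2 ∂μ)
              + (b (r ^ k)) ^ 2 * (μ {ω | b (r ^ (k - 1)) < |Y ω|}).toReal)) * (lam k ^ 2)⁻¹) := by
      have hl2nn : (0:ℝ) ≤ (lam k ^ 2)⁻¹ := by positivity
      calc (((r ^ (n + 1 - k) : ℕ) : ℝ) * ((r - 1 : ℕ) : ℝ))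
            * (((r : ℝ) ^ k * (Cd * ((∫ ω in {ω | |Y ω| ≤ b (r ^ k)}, (Y ω) ^ 2 ∂μ)
                + (b (r ^ k)) ^ 2 * (μ {ω | b (r ^ (k - 1)) < |Y ω|}).toReal))) * (lam k ^ 2)⁻¹)
          = (((r ^ (n + 1 - k) : ℕ) : ℝ) * ((r - 1 : ℕ) : ℝ) * (r : ℝ) ^ k)
              * ((Cd * ((∫ ω in {ω | |Y ω| ≤ b (r ^ k)}, (Y ω) ^ 2 ∂μ)
                + (b (r ^ k)) ^ 2 * (μ {ω | b (r ^ (k - 1)) < |Y ω|}).toReal))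
                  * (lam k ^ 2)⁻¹) := by ring
        _ ≤ _ := by
            apply mul_le_mul_of_nonneg_right hc1
            exact mul_nonneg hcnn hl2nn
    calc (((r ^ (n + 1 - k) : ℕ) : ℝ) * ((r - 1 : ℕ) : ℝ))
            * (((r : ℝ) ^ k * (Cd * ((∫ ω in {ω | |Y ω| ≤ b (r ^ k)}, (Y ω) ^ 2 ∂μ)
                + (b (r ^ k)) ^ 2 * (μ {ω | b (r ^ (k - 1)) < |Y ω|}).toReal))) * (lam k ^ 2)⁻¹)
          + (2 * (lam k ^ 2)⁻¹) * ∑ l ∈ Finset.range (r - 1),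
              ∑ h ∈ Finset.range (r ^ (n + 1 - k)),
                max (pairSum (1 + h * r ^ k) (h * r ^ k + (l + 1) * r ^ (k - 1))
                  (fun i j => Gcov μ (X i) (X j) (b (r ^ (k - 1))))) 0
        ≤ ((r : ℝ) ^ n * (r : ℝ) ^ 2)
            * ((Cd * ((∫ ω in {ω | |Y ω| ≤ b (r ^ k)}, (Y ω) ^ 2 ∂μ)
              + (b (r ^ k)) ^ 2 * (μ {ω | b (r ^ (k - 1)) < |Y ω|}).toReal)) * (lam k ^ 2)⁻¹)
          + (2 * (lam k ^ 2)⁻¹) * (((r : ℝ) - 1) * fmax (r - 2) (fun l =>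
              ∑ h ∈ Finset.range (r ^ (n + 1 - k)),
                max (pairSum (1 + h * r ^ k) (h * r ^ k + (l + 1) * r ^ (k - 1))
                  (fun i j => Gcov μ (X i) (X j) (b (r ^ (k - 1))))) 0)) := by
          apply add_le_add hpart1
          apply mul_le_mul_of_nonneg_left hswap (by positivity)
      _ ≤ _ := by
          rw [hinv]
          have hfactor : ((r : ℝ) - 1) ≤ (r : ℝ) := by linarith
          have hGbd := hGnn
          rw [div_eq_mul_inv, div_eq_mul_inv, div_eq_mul_inv]
          have expand1 : ((r : ℝ) ^ n * (r : ℝ) ^ 2)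
              * ((Cd * ((∫ ω in {ω | |Y ω| ≤ b (r ^ k)}, (Y ω) ^ 2 ∂μ)
                + (b (r ^ k)) ^ 2 * (μ {ω | b (r ^ (k - 1)) < |Y ω|}).toReal))
                  * (16 * Ca ^ 2 * ((ε ^ 2)⁻¹ * ((a n k) ^ 2)⁻¹)))
              = 16 * Ca ^ 2 * Cd * (r : ℝ) ^ 2
                  * ((r : ℝ) ^ n * (ε ^ 2)⁻¹ * (((a n k) ^ 2)⁻¹
                    * ∫ ω in {ω | |Y ω| ≤ b (r ^ k)}, (Y ω) ^ 2 ∂μ))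
                + 16 * Ca ^ 2 * Cd * (r : ℝ) ^ 2
                  * ((r : ℝ) ^ n * (ε ^ 2)⁻¹ * ((b (r ^ k)) ^ 2 * ((a n k) ^ 2)⁻¹
                    * (μ {ω | b (r ^ (k - 1)) < |Y ω|}).toReal)) := by ring
          calc ((r : ℝ) ^ n * (r : ℝ) ^ 2)
              * ((Cd * ((∫ ω in {ω | |Y ω| ≤ b (r ^ k)}, (Y ω) ^ 2 ∂μ)
                + (b (r ^ k)) ^ 2 * (μ {ω | b (r ^ (k - 1)) < |Y ω|}).toReal))
                  * (16 * Ca ^ 2 * ((ε ^ 2)⁻¹ * ((a n k) ^ 2)⁻¹)))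
              + (2 * (16 * Ca ^ 2 * ((ε ^ 2)⁻¹ * ((a n k) ^ 2)⁻¹)))
                  * (((r : ℝ) - 1) * fmax (r - 2) (fun l =>
                      ∑ h ∈ Finset.range (r ^ (n + 1 - k)),
                        max (pairSum (1 + h * r ^ k) (h * r ^ k + (l + 1) * r ^ (k - 1))
                          (fun i j => Gcov μ (X i) (X j) (b (r ^ (k - 1))))) 0))
              ≤ ((r : ℝ) ^ n * (r : ℝ) ^ 2)
                  * ((Cd * ((∫ ω in {ω | |Y ω| ≤ b (r ^ k)}, (Y ω) ^ 2 ∂μ)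
                    + (b (r ^ k)) ^ 2 * (μ {ω | b (r ^ (k - 1)) < |Y ω|}).toReal))
                      * (16 * Ca ^ 2 * ((ε ^ 2)⁻¹ * ((a n k) ^ 2)⁻¹)))
                + (2 * (16 * Ca ^ 2 * ((ε ^ 2)⁻¹ * ((a n k) ^ 2)⁻¹)))
                    * ((r : ℝ) * fmax (r - 2) (fun l =>
                        ∑ h ∈ Finset.range (r ^ (n + 1 - k)),
                          max (pairSum (1 + h * r ^ k) (h * r ^ k + (l + 1) * r ^ (k - 1))
                            (fun i j => Gcov μ (X i) (X j) (b (r ^ (k - 1))))) 0)) := by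
                apply add_le_add le_rfl
                apply mul_le_mul_of_nonneg_left ?_ (by positivity)
                exact mul_le_mul_of_nonneg_right hfactor hGnn
            _ ≤ _ := by
                rw [expand1]
                apply le_of_eq
                ring
  -- per-j bound on the F double sum
  have hFsumk : ∀ j ∈ Finset.Icc 1 (n + 1),
      ∑ h ∈ Finset.range (r ^ (n + 1 - j)), (μ (Fset j h)).toReal
        ≤ 16 * Ca ^ 2 * Cd * (r : ℝ)
              * ((r : ℝ) ^ n / ε ^ 2 * ((b (r ^ j)) ^ 2 / (a n j) ^ 2
                * (μ {ω | b (r ^ (j - 1)) < |Y ω|}).toReal))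
          + 32 * Ca ^ 2
              * ((1 : ℝ) / ε ^ 2 * (((a n j) ^ 2)⁻¹
                * ∑ h ∈ Finset.range (r ^ (n + 1 - j)),
                    max (pairSum (1 + h * r ^ j) (h * r ^ j + r ^ j)
                      (fun i i' => Hcov μ (X i) (X i') (b (r ^ (j - 1))) (b (r ^ j)))) 0)) := by
    intro j hjj
    rw [Finset.mem_Icc] at hjj
    have haj : 0 < a n j := hapos n j hn1 hjj.1 hjj.2
    have hinv : (lam j ^ 2)⁻¹ = 16 * Ca ^ 2 * ((ε ^ 2)⁻¹ * ((a n j) ^ 2)⁻¹) := by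
      rw [hlamdef]
      dsimp only
      field_simp
      ring
    have hPnn : (0:ℝ) ≤ (μ {ω | b (r ^ (j - 1)) < |Y ω|}).toReal := ENNReal.toReal_nonneg
    have key : ∀ h ∈ Finset.range (r ^ (n + 1 - j)),
        (μ (Fset j h)).toReal
          ≤ ((r : ℝ) ^ j * (Cd * ((b (r ^ j)) ^ 2
                * (μ {ω | b (r ^ (j - 1)) < |Y ω|}).toReal))) * (lam j ^ 2)⁻¹
            + (2 * max (pairSum (1 + h * r ^ j) (h * r ^ j + r ^ j)
                (fun i i' => Hcov μ (X i) (X i') (b (r ^ (j - 1))) (b (r ^ j)))) 0)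
              * (lam j ^ 2)⁻¹ := by
      intro h hh
      have := hFbound j (Finset.mem_Icc.2 hjj) h hh
      rw [div_eq_mul_inv, add_mul] at this
      exact this
    calc ∑ h ∈ Finset.range (r ^ (n + 1 - j)), (μ (Fset j h)).toReal
        ≤ ∑ h ∈ Finset.range (r ^ (n + 1 - j)),
            (((r : ℝ) ^ j * (Cd * ((b (r ^ j)) ^ 2
                * (μ {ω | b (r ^ (j - 1)) < |Y ω|}).toReal))) * (lam j ^ 2)⁻¹
              + (2 * max (pairSum (1 + h * r ^ j) (h * r ^ j + r ^ j)
                  (fun i i' => Hcov μ (X i) (X i') (b (r ^ (j - 1))) (b (r ^ j)))) 0)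
                * (lam j ^ 2)⁻¹) := Finset.sum_le_sum key
      _ = ((r ^ (n + 1 - j) : ℕ) : ℝ)
            * (((r : ℝ) ^ j * (Cd * ((b (r ^ j)) ^ 2
                * (μ {ω | b (r ^ (j - 1)) < |Y ω|}).toReal))) * (lam j ^ 2)⁻¹)
          + (2 * (lam j ^ 2)⁻¹) * ∑ h ∈ Finset.range (r ^ (n + 1 - j)),
              max (pairSum (1 + h * r ^ j) (h * r ^ j + r ^ j)
                (fun i i' => Hcov μ (X i) (X i') (b (r ^ (j - 1))) (b (r ^ j)))) 0 := by
          rw [Finset.sum_add_distrib, Finset.sum_const, nsmul_eq_mul, Finset.card_range,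
            Finset.mul_sum]
          congr 1
          apply Finset.sum_congr rfl
          intro h _
          ring
      _ ≤ _ := by
          rw [hinv]
          have hc1 : ((r ^ (n + 1 - j) : ℕ) : ℝ) * (r : ℝ) ^ j ≤ (r : ℝ) ^ n * (r : ℝ) := by
            have h1 : ((r ^ (n + 1 - j) : ℕ) : ℝ) = (r : ℝ) ^ (n + 1 - j) := by push_cast; ring
            rw [h1, hrpow j hjj.2]
            apply le_of_eq
            ring
          have hHnn : (0:ℝ) ≤ ∑ h ∈ Finset.range (r ^ (n + 1 - j)),
              max (pairSum (1 + h * r ^ j) (h * r ^ j + r ^ j)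
                (fun i i' => Hcov μ (X i) (X i') (b (r ^ (j - 1))) (b (r ^ j)))) 0 :=
            Finset.sum_nonneg (fun h _ => le_max_right _ _)
          have hpart1 : ((r ^ (n + 1 - j) : ℕ) : ℝ)
              * (((r : ℝ) ^ j * (Cd * ((b (r ^ j)) ^ 2
                  * (μ {ω | b (r ^ (j - 1)) < |Y ω|}).toReal)))
                * (16 * Ca ^ 2 * ((ε ^ 2)⁻¹ * ((a n j) ^ 2)⁻¹)))
              ≤ ((r : ℝ) ^ n * (r : ℝ))
                * ((Cd * ((b (r ^ j)) ^ 2 * (μ {ω | b (r ^ (j - 1)) < |Y ω|}).toReal))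
                  * (16 * Ca ^ 2 * ((ε ^ 2)⁻¹ * ((a n j) ^ 2)⁻¹))) := by
            have e1 : ((r ^ (n + 1 - j) : ℕ) : ℝ)
                * (((r : ℝ) ^ j * (Cd * ((b (r ^ j)) ^ 2
                    * (μ {ω | b (r ^ (j - 1)) < |Y ω|}).toReal)))
                  * (16 * Ca ^ 2 * ((ε ^ 2)⁻¹ * ((a n j) ^ 2)⁻¹)))
                = (((r ^ (n + 1 - j) : ℕ) : ℝ) * (r : ℝ) ^ j)
                  * ((Cd * ((b (r ^ j)) ^ 2 * (μ {ω | b (r ^ (j - 1)) < |Y ω|}).toReal))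
                    * (16 * Ca ^ 2 * ((ε ^ 2)⁻¹ * ((a n j) ^ 2)⁻¹))) := by ring
            rw [e1]
            apply mul_le_mul_of_nonneg_right hc1
            positivity
          refine le_trans (add_le_add hpart1 le_rfl) ?_
          rw [div_eq_mul_inv, div_eq_mul_inv, div_eq_mul_inv]
          apply le_of_eq
          ring
  -- put the three groups together
  refine le_trans hmeasure ?_
  have hS1nn : (0:ℝ) ≤ (r : ℝ) ^ n * (μ {ω | b (r ^ (n + 1)) < |Y ω|}).toReal := by positivity
  have hS2nn : (0:ℝ) ≤ (r : ℝ) ^ n / ε ^ 2 * ∑ k ∈ Finset.Icc 1 (n + 1),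
      ((a n k) ^ 2)⁻¹ * ∫ ω in {ω | |Y ω| ≤ b (r ^ k)}, (Y ω) ^ 2 ∂μ := by
    apply mul_nonneg (by positivity)
    apply Finset.sum_nonneg
    intro k _
    apply mul_nonneg (by positivity)
    exact setIntegral_nonneg (measurableSet_le hYmeas.abs measurable_const)
      (fun ω _ => sq_nonneg _)
  have hS3nn : (0:ℝ) ≤ (r : ℝ) ^ n / ε ^ 2 * ∑ k ∈ Finset.Icc 1 (n + 1),
      (b (r ^ k)) ^ 2 / (a n k) ^ 2 * (μ {ω | b (r ^ (k - 1)) < |Y ω|}).toReal := by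
    apply mul_nonneg (by positivity)
    apply Finset.sum_nonneg
    intro k _
    apply mul_nonneg (by positivity) ENNReal.toReal_nonneg
  have hS4nn : (0:ℝ) ≤ (1:ℝ) / ε ^ 2 * ∑ k ∈ Finset.Icc 1 (n + 1),
      ((a n k) ^ 2)⁻¹ * fmax (r - 2) (fun l =>
        ∑ h ∈ Finset.range (r ^ (n + 1 - k)),
          max (pairSum (1 + h * r ^ k) (h * r ^ k + (l + 1) * r ^ (k - 1))
            (fun i j => Gcov μ (X i) (X j) (b (r ^ (k - 1))))) 0) := by
    apply mul_nonneg (by positivity)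
    apply Finset.sum_nonneg
    intro k _
    apply mul_nonneg (by positivity)
    refine le_trans ?_ (le_fmax (N := r - 2) 0 (by omega))
    exact Finset.sum_nonneg (fun h _ => le_max_right _ _)
  have hS5nn : (0:ℝ) ≤ (1:ℝ) / ε ^ 2 * ∑ k ∈ Finset.Icc 1 (n + 1),
      ((a n k) ^ 2)⁻¹ * ∑ h ∈ Finset.range (r ^ (n + 1 - k)),
        max (pairSum (1 + h * r ^ k) (h * r ^ k + r ^ k)
          (fun i j => Hcov μ (X i) (X j) (b (r ^ (k - 1))) (b (r ^ k)))) 0 := by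
    apply mul_nonneg (by positivity)
    apply Finset.sum_nonneg
    intro k _
    apply mul_nonneg (by positivity)
    exact Finset.sum_nonneg (fun h _ => le_max_right _ _)
  have hEtotal : ∑ k ∈ Finset.Icc 1 (n + 1), ∑ h ∈ Finset.range (r ^ (n + 1 - k)),
        ∑ l ∈ Finset.range (r - 1), (μ (Eset k h l)).toReal
      ≤ 16 * Ca ^ 2 * Cd * (r : ℝ) ^ 2 * ((r : ℝ) ^ n / ε ^ 2
            * ∑ k ∈ Finset.Icc 1 (n + 1),
              ((a n k) ^ 2)⁻¹ * ∫ ω in {ω | |Y ω| ≤ b (r ^ k)}, (Y ω) ^ 2 ∂μ)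
        + 16 * Ca ^ 2 * Cd * (r : ℝ) ^ 2 * ((r : ℝ) ^ n / ε ^ 2
            * ∑ k ∈ Finset.Icc 1 (n + 1),
              (b (r ^ k)) ^ 2 / (a n k) ^ 2 * (μ {ω | b (r ^ (k - 1)) < |Y ω|}).toReal)
        + 32 * Ca ^ 2 * (r : ℝ) * ((1:ℝ) / ε ^ 2
            * ∑ k ∈ Finset.Icc 1 (n + 1),
              ((a n k) ^ 2)⁻¹ * fmax (r - 2) (fun l =>
                ∑ h ∈ Finset.range (r ^ (n + 1 - k)),
                  max (pairSum (1 + h * r ^ k) (h * r ^ k + (l + 1) * r ^ (k - 1))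
                    (fun i j => Gcov μ (X i) (X j) (b (r ^ (k - 1))))) 0)) := by
    calc ∑ k ∈ Finset.Icc 1 (n + 1), ∑ h ∈ Finset.range (r ^ (n + 1 - k)),
          ∑ l ∈ Finset.range (r - 1), (μ (Eset k h l)).toReal
        ≤ ∑ k ∈ Finset.Icc 1 (n + 1),
          (16 * Ca ^ 2 * Cd * (r : ℝ) ^ 2
              * ((r : ℝ) ^ n / ε ^ 2 * (((a n k) ^ 2)⁻¹
                * ∫ ω in {ω | |Y ω| ≤ b (r ^ k)}, (Y ω) ^ 2 ∂μ))
            + 16 * Ca ^ 2 * Cd * (r : ℝ) ^ 2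
              * ((r : ℝ) ^ n / ε ^ 2 * ((b (r ^ k)) ^ 2 / (a n k) ^ 2
                * (μ {ω | b (r ^ (k - 1)) < |Y ω|}).toReal))
            + 32 * Ca ^ 2 * (r : ℝ)
              * ((1 : ℝ) / ε ^ 2 * (((a n k) ^ 2)⁻¹
                * fmax (r - 2) (fun l =>
                    ∑ h ∈ Finset.range (r ^ (n + 1 - k)),
                      max (pairSum (1 + h * r ^ k) (h * r ^ k + (l + 1) * r ^ (k - 1))
                        (fun i j => Gcov μ (X i) (X j) (b (r ^ (k - 1))))) 0)))) :=
        Finset.sum_le_sum hEsumk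
      _ = _ := by
        simp only [Finset.mul_sum]
        rw [← Finset.sum_add_distrib, ← Finset.sum_add_distrib]
  have hFtotal : ∑ j ∈ Finset.Icc 1 (n + 1), ∑ h ∈ Finset.range (r ^ (n + 1 - j)),
        (μ (Fset j h)).toReal
      ≤ 16 * Ca ^ 2 * Cd * (r : ℝ) * ((r : ℝ) ^ n / ε ^ 2
            * ∑ k ∈ Finset.Icc 1 (n + 1),
              (b (r ^ k)) ^ 2 / (a n k) ^ 2 * (μ {ω | b (r ^ (k - 1)) < |Y ω|}).toReal)
        + 32 * Ca ^ 2 * ((1:ℝ) / ε ^ 2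
            * ∑ k ∈ Finset.Icc 1 (n + 1),
              ((a n k) ^ 2)⁻¹ * ∑ h ∈ Finset.range (r ^ (n + 1 - k)),
                max (pairSum (1 + h * r ^ k) (h * r ^ k + r ^ k)
                  (fun i j => Hcov μ (X i) (X j) (b (r ^ (k - 1))) (b (r ^ k)))) 0) := by
    calc ∑ j ∈ Finset.Icc 1 (n + 1), ∑ h ∈ Finset.range (r ^ (n + 1 - j)),
          (μ (Fset j h)).toReal
        ≤ ∑ j ∈ Finset.Icc 1 (n + 1),
          (16 * Ca ^ 2 * Cd * (r : ℝ)
              * ((r : ℝ) ^ n / ε ^ 2 * ((b (r ^ j)) ^ 2 / (a n j) ^ 2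
                * (μ {ω | b (r ^ (j - 1)) < |Y ω|}).toReal))
            + 32 * Ca ^ 2
              * ((1 : ℝ) / ε ^ 2 * (((a n j) ^ 2)⁻¹
                * ∑ h ∈ Finset.range (r ^ (n + 1 - j)),
                    max (pairSum (1 + h * r ^ j) (h * r ^ j + r ^ j)
                      (fun i i' => Hcov μ (X i) (X i') (b (r ^ (j - 1))) (b (r ^ j)))) 0))) :=
        Finset.sum_le_sum hFsumk
      _ = _ := by
        simp only [Finset.mul_sum]
        rw [← Finset.sum_add_distrib]
  -- coefficient comparisons
  have hr2nn : (0:ℝ) ≤ (r : ℝ) ^ 2 := sq_nonneg _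
  have haux1 : Ca ^ 2 ≤ (Ca + 1) ^ 2 := by nlinarith
  have haux2 : (1:ℝ) ≤ (Ca + 1) ^ 2 := by nlinarith
  have haux3 : (r : ℝ) ≤ (r : ℝ) ^ 2 := by nlinarith
  have haux5 : (1:ℝ) ≤ (r : ℝ) ^ 2 := by nlinarith
  have hd1 : Cd ≤ Cd + 1 := by linarith
  have fAB : Ca ^ 2 * Cd ≤ (Ca + 1) ^ 2 * (Cd + 1) := by
    apply mul_le_mul haux1 hd1 hCd.le (by positivity)
  have fABr : Ca ^ 2 * Cd * (r : ℝ) ^ 2 ≤ (Ca + 1) ^ 2 * (Cd + 1) * (r : ℝ) ^ 2 :=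
    mul_le_mul_of_nonneg_right fAB hr2nn
  have fABr' : Ca ^ 2 * Cd * (r : ℝ) ≤ Ca ^ 2 * Cd * (r : ℝ) ^ 2 :=
    mul_le_mul_of_nonneg_left haux3 (by positivity)
  have gA : (0:ℝ) ≤ (Ca + 1) ^ 2 * (Cd + 1) * (r : ℝ) ^ 2 := by positivity
  have fC : Ca ^ 2 ≤ (Ca + 1) ^ 2 * (Cd + 1) := by nlinarith [mul_nonneg (sq_nonneg (Ca + 1)) hCd.le]
  have fCr : Ca ^ 2 * (r : ℝ) ^ 2 ≤ (Ca + 1) ^ 2 * (Cd + 1) * (r : ℝ) ^ 2 :=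
    mul_le_mul_of_nonneg_right fC hr2nn
  have fCr' : Ca ^ 2 * (r : ℝ) ≤ Ca ^ 2 * (r : ℝ) ^ 2 :=
    mul_le_mul_of_nonneg_left haux3 (by positivity)
  have fC1 : Ca ^ 2 * 1 ≤ ((Ca + 1) ^ 2 * (Cd + 1)) * (r : ℝ) ^ 2 :=
    mul_le_mul fC haux5 zero_le_one (by positivity)
  have fD : Cd ≤ (Ca + 1) ^ 2 * (Cd + 1) := by
    have := mul_le_mul_of_nonneg_right haux2 (show (0:ℝ) ≤ Cd + 1 by linarith)
    nlinarith
  have fDr : Cd * (r : ℝ) ^ 2 ≤ (Ca + 1) ^ 2 * (Cd + 1) * (r : ℝ) ^ 2 :=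
    mul_le_mul_of_nonneg_right fD hr2nn
  have fDr' : Cd * (r : ℝ) ≤ Cd * (r : ℝ) ^ 2 :=
    mul_le_mul_of_nonneg_left haux3 hCd.le
  have hcoef1 : Cd * (r : ℝ) ≤ C := by
    rw [hCdef]
    nlinarith [fDr, fDr', gA]
  have hcoef2 : 16 * Ca ^ 2 * Cd * (r : ℝ) ^ 2 ≤ C := by
    rw [hCdef]
    nlinarith [fABr, gA]
  have hcoef3 : 16 * Ca ^ 2 * Cd * (r : ℝ) ^ 2 + 16 * Ca ^ 2 * Cd * (r : ℝ) ≤ C := by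
    rw [hCdef]
    nlinarith [fABr, fABr', gA]
  have hcoef4 : 32 * Ca ^ 2 * (r : ℝ) ≤ C := by
    rw [hCdef]
    nlinarith [fCr, fCr', gA]
  have hcoef5 : (32 : ℝ) * Ca ^ 2 ≤ C := by
    rw [hCdef]
    nlinarith [fC1, gA]
  have target2 : C * (r : ℝ) ^ n / ε ^ 2 * ∑ k ∈ Finset.Icc 1 (n + 1),
        ((a n k) ^ 2)⁻¹ * ∫ ω in {ω | |Y ω| ≤ b (r ^ k)}, (Y ω) ^ 2 ∂μ
      = C * ((r : ℝ) ^ n / ε ^ 2 * ∑ k ∈ Finset.Icc 1 (n + 1),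
        ((a n k) ^ 2)⁻¹ * ∫ ω in {ω | |Y ω| ≤ b (r ^ k)}, (Y ω) ^ 2 ∂μ) := by ring
  have target3 : C * (r : ℝ) ^ n / ε ^ 2 * ∑ k ∈ Finset.Icc 1 (n + 1),
        (b (r ^ k)) ^ 2 / (a n k) ^ 2 * (μ {ω | b (r ^ (k - 1)) < |Y ω|}).toReal
      = C * ((r : ℝ) ^ n / ε ^ 2 * ∑ k ∈ Finset.Icc 1 (n + 1),
        (b (r ^ k)) ^ 2 / (a n k) ^ 2 * (μ {ω | b (r ^ (k - 1)) < |Y ω|}).toReal) := by ring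
  refine le_trans (add_le_add hAbound (add_le_add hEtotal hFtotal)) ?_
  have e2 : (16 * Ca ^ 2 * Cd * (r : ℝ) ^ 2) * ((r : ℝ) ^ n / ε ^ 2
        * ∑ k ∈ Finset.Icc 1 (n + 1),
          ((a n k) ^ 2)⁻¹ * ∫ ω in {ω | |Y ω| ≤ b (r ^ k)}, (Y ω) ^ 2 ∂μ)
      ≤ C * ((r : ℝ) ^ n / ε ^ 2
        * ∑ k ∈ Finset.Icc 1 (n + 1),
          ((a n k) ^ 2)⁻¹ * ∫ ω in {ω | |Y ω| ≤ b (r ^ k)}, (Y ω) ^ 2 ∂μ) :=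
    mul_le_mul_of_nonneg_right hcoef2 hS2nn
  have e3 : (16 * Ca ^ 2 * Cd * (r : ℝ) ^ 2) * ((r : ℝ) ^ n / ε ^ 2
        * ∑ k ∈ Finset.Icc 1 (n + 1),
          (b (r ^ k)) ^ 2 / (a n k) ^ 2 * (μ {ω | b (r ^ (k - 1)) < |Y ω|}).toReal)
      + (16 * Ca ^ 2 * Cd * (r : ℝ)) * ((r : ℝ) ^ n / ε ^ 2
        * ∑ k ∈ Finset.Icc 1 (n + 1),
          (b (r ^ k)) ^ 2 / (a n k) ^ 2 * (μ {ω | b (r ^ (k - 1)) < |Y ω|}).toReal)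
      ≤ C * ((r : ℝ) ^ n / ε ^ 2
        * ∑ k ∈ Finset.Icc 1 (n + 1),
          (b (r ^ k)) ^ 2 / (a n k) ^ 2 * (μ {ω | b (r ^ (k - 1)) < |Y ω|}).toReal) := by
    rw [← add_mul]
    exact mul_le_mul_of_nonneg_right hcoef3 hS3nn
  have e4 : (32 * Ca ^ 2 * (r : ℝ)) * ((1:ℝ) / ε ^ 2
        * ∑ k ∈ Finset.Icc 1 (n + 1),
          ((a n k) ^ 2)⁻¹ * fmax (r - 2) (fun l =>
            ∑ h ∈ Finset.range (r ^ (n + 1 - k)),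
              max (pairSum (1 + h * r ^ k) (h * r ^ k + (l + 1) * r ^ (k - 1))
                (fun i j => Gcov μ (X i) (X j) (b (r ^ (k - 1))))) 0))
      ≤ C * ((1:ℝ) / ε ^ 2
        * ∑ k ∈ Finset.Icc 1 (n + 1),
          ((a n k) ^ 2)⁻¹ * fmax (r - 2) (fun l =>
            ∑ h ∈ Finset.range (r ^ (n + 1 - k)),
              max (pairSum (1 + h * r ^ k) (h * r ^ k + (l + 1) * r ^ (k - 1))
                (fun i j => Gcov μ (X i) (X j) (b (r ^ (k - 1))))) 0)) :=
    mul_le_mul_of_nonneg_right hcoef4 hS4nn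
  have e5 : (32 * Ca ^ 2) * ((1:ℝ) / ε ^ 2
        * ∑ k ∈ Finset.Icc 1 (n + 1),
          ((a n k) ^ 2)⁻¹ * ∑ h ∈ Finset.range (r ^ (n + 1 - k)),
            max (pairSum (1 + h * r ^ k) (h * r ^ k + r ^ k)
              (fun i j => Hcov μ (X i) (X j) (b (r ^ (k - 1))) (b (r ^ k)))) 0)
      ≤ C * ((1:ℝ) / ε ^ 2
        * ∑ k ∈ Finset.Icc 1 (n + 1),
          ((a n k) ^ 2)⁻¹ * ∑ h ∈ Finset.range (r ^ (n + 1 - k)),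
            max (pairSum (1 + h * r ^ k) (h * r ^ k + r ^ k)
              (fun i j => Hcov μ (X i) (X j) (b (r ^ (k - 1))) (b (r ^ k)))) 0) :=
    mul_le_mul_of_nonneg_right hcoef5 hS5nn
  have e1 : Cd * (r : ℝ) * ((r : ℝ) ^ n * (μ {ω | b (r ^ (n + 1)) < |Y ω|}).toReal)
      ≤ C * ((r : ℝ) ^ n * (μ {ω | b (r ^ (n + 1)) < |Y ω|}).toReal) :=
    mul_le_mul_of_nonneg_right hcoef1 hS1nn
  have hfin : C * ((r : ℝ) ^ n * (μ {ω | b (r ^ (n + 1)) < |Y ω|}).toReal)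
      = C * (r : ℝ) ^ n * (μ {ω | b (r ^ (n + 1)) < |Y ω|}).toReal := by ring
  have hfin4 : C * ((1:ℝ) / ε ^ 2 * ∑ k ∈ Finset.Icc 1 (n + 1),
        ((a n k) ^ 2)⁻¹ * fmax (r - 2) (fun l =>
          ∑ h ∈ Finset.range (r ^ (n + 1 - k)),
            max (pairSum (1 + h * r ^ k) (h * r ^ k + (l + 1) * r ^ (k - 1))
              (fun i j => Gcov μ (X i) (X j) (b (r ^ (k - 1))))) 0))
      = C / ε ^ 2 * ∑ k ∈ Finset.Icc 1 (n + 1),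
        ((a n k) ^ 2)⁻¹ * fmax (r - 2) (fun l =>
          ∑ h ∈ Finset.range (r ^ (n + 1 - k)),
            max (pairSum (1 + h * r ^ k) (h * r ^ k + (l + 1) * r ^ (k - 1))
              (fun i j => Gcov μ (X i) (X j) (b (r ^ (k - 1))))) 0) := by ring
  have hfin5 : C * ((1:ℝ) / ε ^ 2 * ∑ k ∈ Finset.Icc 1 (n + 1),
        ((a n k) ^ 2)⁻¹ * ∑ h ∈ Finset.range (r ^ (n + 1 - k)),
          max (pairSum (1 + h * r ^ k) (h * r ^ k + r ^ k)
            (fun i j => Hcov μ (X i) (X j) (b (r ^ (k - 1))) (b (r ^ k)))) 0)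
      = C / ε ^ 2 * ∑ k ∈ Finset.Icc 1 (n + 1),
        ((a n k) ^ 2)⁻¹ * ∑ h ∈ Finset.range (r ^ (n + 1 - k)),
          max (pairSum (1 + h * r ^ k) (h * r ^ k + r ^ k)
            (fun i j => Hcov μ (X i) (X j) (b (r ^ (k - 1))) (b (r ^ k)))) 0 := by ring
  rw [target2, target3, ← hfin, ← hfin4, ← hfin5]
  linarith [e1, e2, e3, e4, e5]
end
end

section
/- Let r > 1 be an integer, 1 ≤ p < 2, and X a real random variable with E|X|^p < ∞. Then Σ_{k=1}^{∞} r^k P{|X| > r^{(k−1)/p}} ≤ (r²/(r − 1)) E|X|^p; in particular this series converges. -/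
open MeasureTheory Finset Filter
open scoped ENNReal

noncomputable section

variable {Ω : Type*} [MeasurableSpace Ω]

/-- geometric tail series bound. -/
theorem geometric_tail_series_bound
    (μ : Measure Ω) [IsProbabilityMeasure μ]
    (r : ℕ) (hr : 1 < r)
    (p : ℝ) (hp1 : 1 ≤ p) (hp2 : p < 2)
    (X : Ω → ℝ) (hX : Measurable X)
    (hXp : Integrable (fun ω => |X ω| ^ p) μ) :
    Summable (fun k : ℕ =>
        (r : ℝ) ^ (k + 1) * (μ {ω | (r : ℝ) ^ ((k : ℝ) / p) < |X ω|}).toReal) ∧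
      (∑' k : ℕ,
        (r : ℝ) ^ (k + 1) * (μ {ω | (r : ℝ) ^ ((k : ℝ) / p) < |X ω|}).toReal) ≤
        (r : ℝ) ^ 2 / ((r : ℝ) - 1) * ∫ ω, |X ω| ^ p ∂μ := by
  have hr1 : (1:ℝ) < (r:ℝ) := by exact_mod_cast hr
  have hr0 : (0:ℝ) < (r:ℝ) := by linarith
  have hp0 : (0:ℝ) < p := by linarith
  set Y : Ω → ℝ := fun ω => |X ω| ^ p with hYdef
  have hYnn : ∀ ω, 0 ≤ Y ω := fun ω => Real.rpow_nonneg (abs_nonneg _) p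
  have hYmeas : Measurable Y :=
    ((continuous_id.rpow_const (fun x => Or.inr hp0.le)).measurable).comp hX.abs
  -- rewrite the sets
  have hset : ∀ k : ℕ, {ω | (r : ℝ) ^ ((k : ℝ) / p) < |X ω|} = {ω | (r:ℝ)^k < Y ω} := by
    intro k
    ext ω
    simp only [Set.mem_setOf_eq, hYdef]
    rw [← Real.rpow_lt_rpow_iff (Real.rpow_nonneg hr0.le _) (abs_nonneg _) hp0,
      ← Real.rpow_natCast (r:ℝ) k, ← Real.rpow_mul hr0.le, div_mul_cancel₀ _ hp0.ne']
  have hmeas : ∀ k : ℕ, MeasurableSet {ω | (r:ℝ)^k < Y ω} :=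
    fun k => measurableSet_lt measurable_const hYmeas
  set C : ℝ := (r:ℝ)^2/((r:ℝ)-1) with hCdef
  have hCpos : 0 < C := div_pos (by positivity) (by linarith)
  -- key pointwise finite-sum bound
  have key : ∀ y : ℝ, 0 ≤ y → ∀ F : Finset ℕ,
      ∑ k ∈ F, (if (r:ℝ)^k < y then (r:ℝ)^(k+1) else 0) ≤ C * y := by
    intro y hy F
    by_cases h1 : y ≤ 1
    · have hz : ∀ k ∈ F, (if (r:ℝ)^k < y then (r:ℝ)^(k+1) else 0) = 0 := by
        intro k _
        rw [if_neg]
        push_neg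
        exact h1.trans (one_le_pow₀ hr1.le)
      rw [Finset.sum_congr rfl hz, Finset.sum_const_zero]
      positivity
    · push_neg at h1
      have hex : ∃ n : ℕ, y ≤ (r:ℝ)^n := by
        obtain ⟨n, hn⟩ := pow_unbounded_of_one_lt y hr1
        exact ⟨n, hn.le⟩
      set m := Nat.find hex with hm
      have hym : y ≤ (r:ℝ)^m := Nat.find_spec hex
      have hm0 : m ≠ 0 := by
        intro h
        have := hym
        rw [h, pow_zero] at this
        linarith
      have hlt : (r:ℝ)^(m-1) < y := by
        have := Nat.find_min hex (m := m - 1) (Nat.sub_lt (Nat.pos_of_ne_zero hm0) one_pos)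
        linarith [not_le.mp this]
      have hsub : F.filter (fun k => (r:ℝ)^k < y) ⊆ Finset.range m := by
        intro k hk
        simp only [Finset.mem_filter] at hk
        simp only [Finset.mem_range]
        have : (r:ℝ)^k < (r:ℝ)^m := lt_of_lt_of_le hk.2 hym
        exact (pow_lt_pow_iff_right₀ hr1).mp this
      calc ∑ k ∈ F, (if (r:ℝ)^k < y then (r:ℝ)^(k+1) else 0)
          = ∑ k ∈ F.filter (fun k => (r:ℝ)^k < y), (r:ℝ)^(k+1) := by
            rw [Finset.sum_filter]
        _ ≤ ∑ k ∈ Finset.range m, (r:ℝ)^(k+1) := by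
            apply Finset.sum_le_sum_of_subset_of_nonneg hsub
            intro k _ _; positivity
        _ = (∑ k ∈ Finset.range m, (r:ℝ)^k) * r := by
            rw [Finset.sum_mul]
            exact Finset.sum_congr rfl fun k _ => (pow_succ _ _)
        _ = ((r:ℝ)^m - 1)/((r:ℝ)-1) * r := by rw [geom_sum_eq hr1.ne']
        _ ≤ C * y := by
            rw [hCdef, div_mul_eq_mul_div, div_mul_eq_mul_div,
              div_le_div_iff_of_pos_right (by linarith : (0:ℝ) < (r:ℝ)-1)]
            have hmm : (r:ℝ)^m = (r:ℝ)^(m-1) * r := by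
              conv_lhs => rw [show m = (m-1)+1 from (Nat.succ_pred_eq_of_pos (Nat.pos_of_ne_zero hm0)).symm]
              rw [pow_succ]
            rw [hmm]
            nlinarith [mul_lt_mul_of_pos_left hlt (show (0:ℝ) < (r:ℝ)^2 by positivity),
              sq_nonneg ((r:ℝ))]
  -- ENNReal version
  set g : ℕ → ℝ≥0∞ := fun k => ENNReal.ofReal ((r:ℝ)^(k+1)) * μ {ω | (r:ℝ)^k < Y ω} with hgdef
  have hIY : (0:ℝ) ≤ ∫ ω, Y ω ∂μ := integral_nonneg hYnn
  have hTle : ∑' k, g k ≤ ENNReal.ofReal (C * ∫ ω, Y ω ∂μ) := by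
    have h1 : ∀ k : ℕ, g k = ∫⁻ ω, Set.indicator {ω | (r:ℝ)^k < Y ω}
        (fun _ => ENNReal.ofReal ((r:ℝ)^(k+1))) ω ∂μ := by
      intro k
      rw [lintegral_indicator_const (hmeas k)]
    calc ∑' k, g k
        = ∑' k, ∫⁻ ω, Set.indicator {ω | (r:ℝ)^k < Y ω}
            (fun _ => ENNReal.ofReal ((r:ℝ)^(k+1))) ω ∂μ := tsum_congr h1
      _ = ∫⁻ ω, ∑' k, Set.indicator {ω | (r:ℝ)^k < Y ω}
            (fun _ => ENNReal.ofReal ((r:ℝ)^(k+1))) ω ∂μ :=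
          (lintegral_tsum (fun k => (measurable_const.indicator (hmeas k)).aemeasurable)).symm
      _ ≤ ∫⁻ ω, ENNReal.ofReal C * ENNReal.ofReal (Y ω) ∂μ := by
          apply lintegral_mono
          intro ω
          dsimp only
          rw [← ENNReal.ofReal_mul hCpos.le]
          apply Summable.tsum_le_of_sum_le ENNReal.summable
          intro F
          have : ∀ k ∈ F, Set.indicator {ω | (r:ℝ)^k < Y ω}
              (fun _ => ENNReal.ofReal ((r:ℝ)^(k+1))) ω
              = ENNReal.ofReal (if (r:ℝ)^k < Y ω then (r:ℝ)^(k+1) else 0) := by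
            intro k _
            by_cases h : (r:ℝ)^k < Y ω
            · simp [Set.indicator_apply, Set.mem_setOf_eq, h]
            · simp [Set.indicator_apply, Set.mem_setOf_eq, h]
          rw [Finset.sum_congr rfl this,
            ← ENNReal.ofReal_sum_of_nonneg (fun k _ => by positivity)]
          exact ENNReal.ofReal_le_ofReal (key (Y ω) (hYnn ω) F)
      _ = ENNReal.ofReal C * ∫⁻ ω, ENNReal.ofReal (Y ω) ∂μ :=
          lintegral_const_mul _ hYmeas.ennreal_ofReal
      _ = ENNReal.ofReal C * ENNReal.ofReal (∫ ω, Y ω ∂μ) := by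
          rw [← ofReal_integral_eq_lintegral_ofReal hXp (ae_of_all _ hYnn)]
      _ = ENNReal.ofReal (C * ∫ ω, Y ω ∂μ) := (ENNReal.ofReal_mul hCpos.le).symm
  have hTne : ∑' k, g k ≠ ⊤ := (lt_of_le_of_lt hTle ENNReal.ofReal_lt_top).ne
  have hgne : ∀ k, g k ≠ ⊤ :=
    fun k => ENNReal.mul_ne_top ENNReal.ofReal_ne_top (measure_ne_top μ _)
  have hterm : ∀ k : ℕ,
      (r : ℝ) ^ (k + 1) * (μ {ω | (r : ℝ) ^ ((k : ℝ) / p) < |X ω|}).toReal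
      = (g k).toReal := by
    intro k
    rw [hset k, hgdef, ENNReal.toReal_mul, ENNReal.toReal_ofReal (by positivity)]
  constructor
  · rw [show (fun k : ℕ => (r : ℝ) ^ (k + 1) *
      (μ {ω | (r : ℝ) ^ ((k : ℝ) / p) < |X ω|}).toReal) = fun k => (g k).toReal
      from funext hterm]
    exact ENNReal.summable_toReal hTne
  · calc (∑' k : ℕ, (r : ℝ) ^ (k + 1) *
        (μ {ω | (r : ℝ) ^ ((k : ℝ) / p) < |X ω|}).toReal)
        = (∑' k, g k).toReal := by
          rw [ENNReal.tsum_toReal_eq hgne]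
          exact tsum_congr hterm
      _ ≤ (ENNReal.ofReal (C * ∫ ω, Y ω ∂μ)).toReal :=
          ENNReal.toReal_mono ENNReal.ofReal_ne_top hTle
      _ = C * ∫ ω, Y ω ∂μ := ENNReal.toReal_ofReal (by positivity)
end
end

section
/- Let r > 1 be an integer, 1 ≤ p < 2, and X a real random variable with E|X|^p < ∞. Then Σ_{k=1}^{n+1} r^{k − n/p} E[|X| 1{|X| > r^{(k−1)/p}}] → 0 as n → ∞. -/
open MeasureTheory Finset Filter

noncomputable section

variable {Ω : Type*} [MeasurableSpace Ω]

lemma geom_sum_le_inv {c : ℝ} (hc0 : 0 ≤ c) (hc1 : c < 1) (n : ℕ) :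
    ∑ i ∈ Finset.range n, c ^ i ≤ (1 - c)⁻¹ := by
  have h1c : 0 < 1 - c := by linarith
  calc ∑ i ∈ Finset.range n, c ^ i
      ≤ ∑' i : ℕ, c ^ i := Summable.sum_le_tsum _ (fun i _ => pow_nonneg hc0 i)
        (summable_geometric_of_lt_one hc0 hc1)
    _ = (1 - c)⁻¹ := tsum_geometric_of_lt_one hc0 hc1

lemma conv_aux {c : ℝ} (hc0 : 0 ≤ c) (hc1 : c < 1) (b : ℕ → ℝ)
    (hb0 : ∀ k, 0 ≤ b k) (hmono : Antitone b) (hb : Tendsto b atTop (nhds 0)) :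
    Tendsto (fun n : ℕ => ∑ k ∈ Finset.Icc 1 (n + 1), c ^ (n + 1 - k) * b k)
      atTop (nhds 0) := by
  have h1c : 0 < 1 - c := by linarith
  rw [Metric.tendsto_atTop]
  intro ε hε
  obtain ⟨m, hm⟩ : ∃ m : ℕ, b m < (1 - c) * (ε / 2) :=
    (hb.eventually (gt_mem_nhds (by positivity : (0:ℝ) < (1 - c) * (ε / 2)))).exists
  have hpow : Tendsto (fun n : ℕ => ((m : ℝ) + 1) * b 0 * c ^ (n - m)) atTop (nhds 0) := by
    have h1 : Tendsto (fun j : ℕ => c ^ j) atTop (nhds 0) :=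
      tendsto_pow_atTop_nhds_zero_of_lt_one hc0 hc1
    have h2 : Tendsto (fun n : ℕ => n - m) atTop atTop :=
      tendsto_atTop_atTop.2 fun N => ⟨N + m, fun n hn => by omega⟩
    have := (h1.comp h2).const_mul (((m : ℝ) + 1) * b 0)
    simpa using this
  obtain ⟨N, hN⟩ := (Metric.tendsto_atTop.1 hpow) (ε / 2) (by linarith)
  refine ⟨N + m + 1, fun n hn => ?_⟩
  have hmn : m + 1 ≤ n + 1 := by omega
  have hsplit : Finset.Icc 1 (n + 1) = Finset.Icc 1 (m + 1) ∪ Finset.Icc (m + 2) (n + 1) := by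
    ext a; simp only [Finset.mem_Icc, Finset.mem_union]; omega
  have hdisj : Disjoint (Finset.Icc 1 (m + 1)) (Finset.Icc (m + 2) (n + 1)) := by
    simp [Finset.disjoint_left]; intro a h1 h2; omega
  have hterm_nonneg : ∀ k, 0 ≤ c ^ (n + 1 - k) * b k := fun k =>
    mul_nonneg (pow_nonneg hc0 _) (hb0 k)
  have hsum_nonneg : 0 ≤ ∑ k ∈ Finset.Icc 1 (n + 1), c ^ (n + 1 - k) * b k :=
    Finset.sum_nonneg fun k _ => hterm_nonneg k
  rw [Real.dist_eq, sub_zero, abs_of_nonneg hsum_nonneg]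
  rw [hsplit, Finset.sum_union hdisj]
  have hpart1 : ∑ k ∈ Finset.Icc 1 (m + 1), c ^ (n + 1 - k) * b k
      ≤ ((m : ℝ) + 1) * b 0 * c ^ (n - m) := by
    calc ∑ k ∈ Finset.Icc 1 (m + 1), c ^ (n + 1 - k) * b k
        ≤ ∑ k ∈ Finset.Icc 1 (m + 1), c ^ (n - m) * b 0 := by
          refine Finset.sum_le_sum fun k hk => ?_
          simp only [Finset.mem_Icc] at hk
          refine mul_le_mul ?_ (hmono (Nat.zero_le k)) (hb0 k) (pow_nonneg hc0 _)
          exact pow_le_pow_of_le_one hc0 (le_of_lt hc1) (by omega)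
      _ = ((m : ℝ) + 1) * b 0 * c ^ (n - m) := by
          rw [Finset.sum_const, Nat.card_Icc, Nat.add_sub_cancel, nsmul_eq_mul]
          push_cast
          ring
  have hpart2 : ∑ k ∈ Finset.Icc (m + 2) (n + 1), c ^ (n + 1 - k) * b k
      ≤ b m * (1 - c)⁻¹ := by
    calc ∑ k ∈ Finset.Icc (m + 2) (n + 1), c ^ (n + 1 - k) * b k
        ≤ ∑ k ∈ Finset.Icc (m + 2) (n + 1), c ^ (n + 1 - k) * b m := by
          refine Finset.sum_le_sum fun k hk => ?_
          simp only [Finset.mem_Icc] at hk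
          exact mul_le_mul_of_nonneg_left (hmono (by omega)) (pow_nonneg hc0 _)
      _ ≤ ∑ k ∈ Finset.range (n + 2), c ^ (n + 1 - k) * b m := by
          refine Finset.sum_le_sum_of_subset_of_nonneg ?_ fun k _ _ =>
            mul_nonneg (pow_nonneg hc0 _) (hb0 m)
          intro k hk
          simp only [Finset.mem_Icc] at hk
          simp only [Finset.mem_range]; omega
      _ = ∑ k ∈ Finset.range (n + 2), c ^ k * b m := by
          simpa using Finset.sum_range_reflect (fun k => c ^ k * b m) (n + 2)
      _ = (∑ k ∈ Finset.range (n + 2), c ^ k) * b m := by rw [← Finset.sum_mul]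
      _ ≤ (1 - c)⁻¹ * b m :=
          mul_le_mul_of_nonneg_right (geom_sum_le_inv hc0 hc1 _) (hb0 m)
      _ = b m * (1 - c)⁻¹ := by ring
  have h1 : ((m : ℝ) + 1) * b 0 * c ^ (n - m) < ε / 2 := by
    have := hN n (by omega)
    rw [Real.dist_eq, sub_zero] at this
    calc ((m : ℝ) + 1) * b 0 * c ^ (n - m) ≤ |((m : ℝ) + 1) * b 0 * c ^ (n - m)| := le_abs_self _
      _ < ε / 2 := this
  have h2 : b m * (1 - c)⁻¹ < ε / 2 := by
    calc b m * (1 - c)⁻¹ < ((1 - c) * (ε / 2)) * (1 - c)⁻¹ :=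
          mul_lt_mul_of_pos_right hm (inv_pos.2 h1c)
      _ = ε / 2 := by field_simp
  linarith
open MeasureTheory Finset Filter

lemma key_ineq {t x p : ℝ} (ht : 0 < t) (htx : t < x) (hp : 1 ≤ p) :
    x ≤ t ^ (1 - p) * x ^ p := by
  have hx : 0 < x := ht.trans htx
  have hxp : x ^ p = x ^ (p - 1) * x := by
    nth_rewrite 3 [← Real.rpow_one x]
    rw [← Real.rpow_add hx]
    ring_nf
  have h2 : t ^ (p - 1) ≤ x ^ (p - 1) := Real.rpow_le_rpow ht.le htx.le (by linarith)
  calc x = x * (t ^ (1 - p) * t ^ (p - 1)) := by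
        rw [← Real.rpow_add ht]; norm_num
    _ ≤ x * (t ^ (1 - p) * x ^ (p - 1)) := by
        exact mul_le_mul_of_nonneg_left
          (mul_le_mul_of_nonneg_left h2 (Real.rpow_nonneg ht.le _)) hx.le
    _ = t ^ (1 - p) * (x ^ (p - 1) * x) := by ring
    _ = t ^ (1 - p) * x ^ p := by rw [← hxp]


/-- weighted truncated first moment sums tend to zero. -/
theorem weighted_truncated_first_moment_tendsto_zero
    (μ : Measure Ω) [IsProbabilityMeasure μ]
    (r : ℕ) (hr : 1 < r)
    (p : ℝ) (hp1 : 1 ≤ p) (hp2 : p < 2)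
    (X : Ω → ℝ) (hX : Measurable X)
    (hXp : Integrable (fun ω => |X ω| ^ p) μ) :
    Tendsto (fun n : ℕ =>
        ∑ k ∈ Finset.Icc 1 (n + 1),
          (r : ℝ) ^ ((k : ℝ) - (n : ℝ) / p) *
            ∫ ω in {ω | (r : ℝ) ^ (((k : ℝ) - 1) / p) < |X ω|}, |X ω| ∂μ)
      atTop (nhds 0) := by
  have hr1 : (1 : ℝ) < (r : ℝ) := by exact_mod_cast hr
  have hrpos : (0 : ℝ) < (r : ℝ) := by linarith
  have hp0 : 0 < p := by linarith
  set t : ℕ → ℝ := fun k => (r : ℝ) ^ (((k : ℝ) - 1) / p) with ht_def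
  set A : ℕ → Set Ω := fun k => {ω | t k < |X ω|} with hA_def
  set b : ℕ → ℝ := fun k => ∫ ω in A k, |X ω| ^ p ∂μ with hb_def
  set c : ℝ := (r : ℝ) ^ (-(1 / p)) with hc_def
  have hc0 : 0 ≤ c := Real.rpow_nonneg hrpos.le _
  have hc1 : c < 1 := Real.rpow_lt_one_of_one_lt_of_neg hr1 (by positivity |> neg_neg_iff_pos.2)
  have ht_pos : ∀ k, 0 < t k := fun k => Real.rpow_pos_of_pos hrpos _
  have hA_meas : ∀ k, MeasurableSet (A k) :=
    fun k => measurableSet_lt measurable_const hX.abs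
  have hXp_meas : Measurable (fun ω => |X ω| ^ p) := by measurability
  have hb0 : ∀ k, 0 ≤ b k := fun k =>
    setIntegral_nonneg (hA_meas k) fun ω _ => Real.rpow_nonneg (abs_nonneg _) p
  -- antitone
  have ht_mono : Monotone t := fun i j hij => by
    apply Real.rpow_le_rpow_of_exponent_le hr1.le
    have : (i:ℝ) ≤ (j:ℝ) := by exact_mod_cast hij
    gcongr
  have hA_anti : Antitone A := fun i j hij ω hω => lt_of_le_of_lt (ht_mono hij) hω
  have hb_anti : Antitone b := fun i j hij => by
    apply setIntegral_mono_set hXp.integrableOn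
    · exact Filter.Eventually.of_forall fun ω => Real.rpow_nonneg (abs_nonneg _) p
    · exact Filter.Eventually.of_forall (hA_anti hij)
  -- tendsto zero
  have ht_top : Tendsto t atTop atTop := by
    have h1 : Tendsto (fun k : ℕ => ((k : ℝ) - 1) / p) atTop atTop := by
      apply Tendsto.atTop_div_const hp0
      exact tendsto_atTop_add_const_right _ _ tendsto_natCast_atTop_atTop
    have h2 : Tendsto (fun x : ℝ => (r : ℝ) ^ x) atTop atTop := by
      simp_rw [Real.rpow_def_of_pos hrpos]
      exact Real.tendsto_exp_atTop.comp
        (Tendsto.const_mul_atTop (Real.log_pos hr1) tendsto_id)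
    exact h2.comp h1
  have hb_lim : Tendsto b atTop (nhds 0) := by
    have := tendsto_integral_of_dominated_convergence (μ := μ)
      (F := fun n => (A n).indicator (fun ω => |X ω| ^ p))
      (f := fun _ => (0 : ℝ)) (bound := fun ω => |X ω| ^ p)
      (fun n => ((hXp_meas.indicator (hA_meas n)).aestronglyMeasurable))
      hXp
      (fun n => Filter.Eventually.of_forall fun ω => by
        by_cases h : ω ∈ A n
        · simp [Set.indicator_of_mem h, abs_of_nonneg (Real.rpow_nonneg (abs_nonneg _) p)]
        · simp [Set.indicator_of_notMem h, Real.rpow_nonneg (abs_nonneg _) p])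
      (Filter.Eventually.of_forall fun ω => by
        have : ∀ᶠ n in atTop, ω ∉ A n := by
          filter_upwards [ht_top.eventually_gt_atTop (|X ω|)] with n hn
          exact fun h => absurd h (not_lt.2 hn.le)
        apply tendsto_const_nhds.congr'
        filter_upwards [this] with n hn
        simp [Set.indicator_of_notMem hn])
    simp only [integral_zero] at this
    refine this.congr fun n => ?_
    rw [integral_indicator (hA_meas n)]
  -- termwise bound
  have hkey : ∀ n : ℕ, ∀ k ∈ Finset.Icc 1 (n + 1),
      (r : ℝ) ^ ((k : ℝ) - (n : ℝ) / p) * ∫ ω in A k, |X ω| ∂μ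
        ≤ (r : ℝ) * (c ^ (n + 1 - k) * b k) := by
    intro n k hk
    simp only [Finset.mem_Icc] at hk
    have hw : (0 : ℝ) ≤ (r : ℝ) ^ ((k : ℝ) - (n : ℝ) / p) := (Real.rpow_pos_of_pos hrpos _).le
    have hIk : IntegrableOn (fun ω => |X ω|) (A k) μ := by
      refine Integrable.mono' ((hXp.integrableOn (s := A k)).const_mul ((t k) ^ (1 - p)))
        hX.abs.aestronglyMeasurable ?_
      rw [ae_restrict_iff' (hA_meas k)]
      refine Filter.Eventually.of_forall fun ω hω => ?_
      rw [Real.norm_eq_abs, abs_abs]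
      exact key_ineq (ht_pos k) hω hp1
    have hstepA : ∫ ω in A k, |X ω| ∂μ ≤ (t k) ^ (1 - p) * b k := by
      calc ∫ ω in A k, |X ω| ∂μ
          ≤ ∫ ω in A k, (t k) ^ (1 - p) * |X ω| ^ p ∂μ := by
            refine setIntegral_mono_on hIk
              ((hXp.integrableOn (s := A k)).const_mul _) (hA_meas k) fun ω hω =>
              key_ineq (ht_pos k) hω hp1
        _ = (t k) ^ (1 - p) * b k := by rw [integral_const_mul]
    have hexp : (r : ℝ) ^ ((k : ℝ) - (n : ℝ) / p) * (t k) ^ (1 - p)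
        = (r : ℝ) * c ^ (n + 1 - k) := by
      have e1 : t k ^ (1 - p) = (r : ℝ) ^ ((((k : ℝ) - 1) / p) * (1 - p)) := by
        simp only [ht_def]
        exact (Real.rpow_mul hrpos.le _ _).symm
      have e2 : c ^ (n + 1 - k) = (r : ℝ) ^ (-(1 / p) * ((n + 1 - k : ℕ) : ℝ)) := by
        simp only [hc_def]
        rw [Real.rpow_mul hrpos.le, Real.rpow_natCast]
      rw [e1, e2, ← Real.rpow_add hrpos]
      nth_rewrite 2 [← Real.rpow_one (r : ℝ)]
      rw [← Real.rpow_add hrpos]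
      congr 1
      have hcast : ((n + 1 - k : ℕ) : ℝ) = (n : ℝ) + 1 - (k : ℝ) := by
        have := hk.2
        push_cast [Nat.cast_sub (by omega : k ≤ n + 1)]
        ring
      rw [hcast]
      field_simp
      ring
    calc (r : ℝ) ^ ((k : ℝ) - (n : ℝ) / p) * ∫ ω in A k, |X ω| ∂μ
        ≤ (r : ℝ) ^ ((k : ℝ) - (n : ℝ) / p) * ((t k) ^ (1 - p) * b k) :=
          mul_le_mul_of_nonneg_left hstepA hw
      _ = ((r : ℝ) ^ ((k : ℝ) - (n : ℝ) / p) * (t k) ^ (1 - p)) * b k := by ring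
      _ = ((r : ℝ) * c ^ (n + 1 - k)) * b k := by rw [hexp]
      _ = (r : ℝ) * (c ^ (n + 1 - k) * b k) := by ring
  -- conclusion via squeeze
  have hrT : Tendsto (fun n : ℕ =>
      (r : ℝ) * ∑ k ∈ Finset.Icc 1 (n + 1), c ^ (n + 1 - k) * b k) atTop (nhds 0) := by
    have := (conv_aux hc0 hc1 b hb0 hb_anti hb_lim).const_mul (r : ℝ)
    simpa using this
  refine squeeze_zero (fun n => ?_) (fun n => ?_) hrT
  · refine Finset.sum_nonneg fun k _ => mul_nonneg (Real.rpow_pos_of_pos hrpos _).le ?_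
    exact setIntegral_nonneg (hA_meas k) fun ω _ => abs_nonneg _
  · rw [Finset.mul_sum]
    exact Finset.sum_le_sum (hkey n)
end
end

section
/- Let X, Y be real random variables that are positively quadrant dependent, i.e. P{X ≤ u, Y ≤ v} − P{X ≤ u}P{Y ≤ v} ≥ 0 for all reals u, v, and let 0 < L ≤ K with E X² < ∞ and E Y² < ∞. Then G_{X,Y}(L) ≥ 0, G_{X,Y}(L) ≤ G_{X,Y}(K), and (G_{X,Y}(L))⁺ + (H_{X,Y}(L,K))⁺ ≤ G_{X,Y}(K). -/
open MeasureTheory Finset Filter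

noncomputable section

variable {Ω : Type*} [MeasurableSpace Ω]

namespace PQDAux

open Set

/-- One-dimensional layer: `∫⁻ u in Ioi 0, 1_{u < c} du = ofReal c`. -/
lemma layer_one (c : ℝ) :
    ∫⁻ u in Ioi (0:ℝ), (if u < c then (1:ENNReal) else 0) = ENNReal.ofReal c := by
  have h1 : (fun u : ℝ => if u < c then (1:ENNReal) else 0)
      = Set.indicator (Iio c) (fun _ => (1:ENNReal)) := by
    funext u; simp [Set.indicator_apply]
  rw [h1, lintegral_indicator measurableSet_Iio, Measure.restrict_restrict measurableSet_Iio,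
    setLIntegral_one]
  have h2 : Iio c ∩ Ioi (0:ℝ) = Ioo 0 c := by
    ext u; simp [and_comm]
  rw [h2, Real.volume_Ioo]
  by_cases hc : 0 ≤ c
  · simp
  · rw [ENNReal.ofReal_eq_zero.2 (by linarith), ENNReal.ofReal_eq_zero.2 (by linarith)]

lemma key_lintegral (μ : Measure Ω) [IsProbabilityMeasure μ]
    {U V : Ω → ℝ} (hU : Measurable U) (hV : Measurable V)
    (hU0 : ∀ ω, 0 ≤ U ω) (hV0 : ∀ ω, 0 ≤ V ω)
    (hpqd : ∀ u v : ℝ, 0 < u → 0 < v →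
      μ {ω | u < U ω} * μ {ω | v < V ω} ≤ μ {ω | u < U ω ∧ v < V ω}) :
    (∫⁻ ω, ENNReal.ofReal (U ω) ∂μ) * (∫⁻ ω, ENNReal.ofReal (V ω) ∂μ)
      ≤ ∫⁻ ω, ENNReal.ofReal (U ω * V ω) ∂μ := by
  have hFmeas : Measurable fun u : ℝ => μ {ω | u < U ω} := by
    apply Antitone.measurable
    intro u u' huu'
    exact measure_mono (fun ω h => lt_of_le_of_lt huu' h)
  have hGmeas : Measurable fun v : ℝ => μ {ω | v < V ω} := by
    apply Antitone.measurable
    intro v v' hvv'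
    exact measure_mono (fun ω h => lt_of_le_of_lt hvv' h)
  have hLHS : (∫⁻ ω, ENNReal.ofReal (U ω) ∂μ) * (∫⁻ ω, ENNReal.ofReal (V ω) ∂μ)
      = ∫⁻ u in Ioi (0:ℝ), ∫⁻ v in Ioi (0:ℝ), μ {ω | u < U ω} * μ {ω | v < V ω} := by
    rw [lintegral_eq_lintegral_meas_lt μ (ae_of_all _ hU0) hU.aemeasurable,
      lintegral_eq_lintegral_meas_lt μ (ae_of_all _ hV0) hV.aemeasurable,
      ← lintegral_mul_const _ hFmeas]
    exact lintegral_congr fun u => (lintegral_const_mul _ hGmeas).symm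
  have hmeas_pair : Measurable fun p : Ω × ℝ =>
      (if p.2 < U p.1 then (1:ENNReal) else 0) * ENNReal.ofReal (V p.1) := by
    apply Measurable.mul
    · exact Measurable.ite (measurableSet_lt measurable_snd (hU.comp measurable_fst))
        measurable_const measurable_const
    · exact ENNReal.measurable_ofReal.comp (hV.comp measurable_fst)
  have hRHS : (∫⁻ ω, ENNReal.ofReal (U ω * V ω) ∂μ)
      = ∫⁻ u in Ioi (0:ℝ), ∫⁻ v in Ioi (0:ℝ), μ ({ω | v < V ω} ∩ {ω | u < U ω}) := by
    have step1 : ∀ ω, ENNReal.ofReal (U ω * V ω)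
        = ∫⁻ u in Ioi (0:ℝ), (if u < U ω then (1:ENNReal) else 0) * ENNReal.ofReal (V ω) := by
      intro ω
      have hm : Measurable fun u : ℝ => if u < U ω then (1:ENNReal) else 0 :=
        Measurable.ite (measurableSet_lt measurable_id measurable_const)
          measurable_const measurable_const
      have h := lintegral_mul_const (μ := volume.restrict (Ioi (0:ℝ)))
        (ENNReal.ofReal (V ω)) hm
      rw [h, layer_one, ← ENNReal.ofReal_mul (hU0 ω)]
    calc (∫⁻ ω, ENNReal.ofReal (U ω * V ω) ∂μ)
        = ∫⁻ ω, (∫⁻ u in Ioi (0:ℝ),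
            (if u < U ω then (1:ENNReal) else 0) * ENNReal.ofReal (V ω)) ∂μ :=
          lintegral_congr step1
      _ = ∫⁻ u in Ioi (0:ℝ), (∫⁻ ω,
            (if u < U ω then (1:ENNReal) else 0) * ENNReal.ofReal (V ω) ∂μ) :=
          lintegral_lintegral_swap hmeas_pair.aemeasurable
      _ = ∫⁻ u in Ioi (0:ℝ), ∫⁻ v in Ioi (0:ℝ), μ ({ω | v < V ω} ∩ {ω | u < U ω}) := by
          apply lintegral_congr
          intro u
          have hset : MeasurableSet {ω | u < U ω} := measurableSet_lt measurable_const hU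
          have : (fun ω => (if u < U ω then (1:ENNReal) else 0) * ENNReal.ofReal (V ω))
              = Set.indicator {ω | u < U ω} (fun ω => ENNReal.ofReal (V ω)) := by
            funext ω; by_cases h : u < U ω <;> simp [Set.indicator_apply, h]
          rw [this, lintegral_indicator hset,
            lintegral_eq_lintegral_meas_lt _ (ae_of_all _ (fun ω => hV0 ω))
              (hV.aemeasurable.restrict)]
          apply lintegral_congr
          intro v
          rw [Measure.restrict_apply (measurableSet_lt measurable_const hV)]
  rw [hLHS, hRHS]
  apply setLIntegral_mono' measurableSet_Ioi
  intro u hu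
  apply setLIntegral_mono' measurableSet_Ioi
  intro v hv
  calc μ {ω | u < U ω} * μ {ω | v < V ω} ≤ μ {ω | u < U ω ∧ v < V ω} := hpqd u v hu hv
    _ = μ ({ω | v < V ω} ∩ {ω | u < U ω}) := by rw [Set.inter_comm]; rfl

/-- Bounded measurable function. -/
def BM (U : Ω → ℝ) (C : ℝ) : Prop := Measurable U ∧ ∀ ω, |U ω| ≤ C

lemma BM.integrable {U : Ω → ℝ} {C : ℝ} (h : BM U C) (μ : Measure Ω)
    [IsProbabilityMeasure μ] : Integrable U μ :=
  Integrable.mono' (integrable_const C) h.1.aestronglyMeasurable (ae_of_all _ h.2)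

lemma BM.mul {U V : Ω → ℝ} {C D : ℝ} (hU : BM U C) (hV : BM V D) :
    BM (fun ω => U ω * V ω) (C * D) := by
  refine ⟨hU.1.mul hV.1, fun ω => ?_⟩
  rw [abs_mul]
  have h1 := hU.2 ω
  have h2 := hV.2 ω
  nlinarith [abs_nonneg (U ω), abs_nonneg (V ω)]

lemma BM.add {U V : Ω → ℝ} {C D : ℝ} (hU : BM U C) (hV : BM V D) :
    BM (fun ω => U ω + V ω) (C + D) :=
  ⟨hU.1.add hV.1, fun ω => (abs_add_le _ _).trans (add_le_add (hU.2 ω) (hV.2 ω))⟩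

lemma BM.neg {U : Ω → ℝ} {C : ℝ} (hU : BM U C) : BM (fun ω => -(U ω)) C :=
  ⟨hU.1.neg, fun ω => by rw [abs_neg]; exact hU.2 ω⟩

lemma cov_add_add (μ : Measure Ω) [IsProbabilityMeasure μ]
    {U₁ U₂ V₁ V₂ : Ω → ℝ} {C₁ C₂ D₁ D₂ : ℝ}
    (hU₁ : BM U₁ C₁) (hU₂ : BM U₂ C₂) (hV₁ : BM V₁ D₁) (hV₂ : BM V₂ D₂) :
    cov μ (fun ω => U₁ ω + U₂ ω) (fun ω => V₁ ω + V₂ ω)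
      = cov μ U₁ V₁ + cov μ U₁ V₂ + cov μ U₂ V₁ + cov μ U₂ V₂ := by
  unfold cov
  have e1 : (∫ ω, (U₁ ω + U₂ ω) * (V₁ ω + V₂ ω) ∂μ)
      = (∫ ω, U₁ ω * V₁ ω ∂μ) + (∫ ω, U₁ ω * V₂ ω ∂μ)
        + ((∫ ω, U₂ ω * V₁ ω ∂μ) + (∫ ω, U₂ ω * V₂ ω ∂μ)) := by
    rw [← integral_add ((hU₁.mul hV₁).integrable μ) ((hU₁.mul hV₂).integrable μ),
      ← integral_add ((hU₂.mul hV₁).integrable μ) ((hU₂.mul hV₂).integrable μ),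
      ← integral_add (((hU₁.mul hV₁).add (hU₁.mul hV₂)).integrable μ)
        (((hU₂.mul hV₁).add (hU₂.mul hV₂)).integrable μ)]
    apply integral_congr_ae (ae_of_all _ (fun ω => by ring))
  have e2 : (∫ ω, (U₁ ω + U₂ ω) ∂μ) = (∫ ω, U₁ ω ∂μ) + (∫ ω, U₂ ω ∂μ) :=
    integral_add (hU₁.integrable μ) (hU₂.integrable μ)
  have e3 : (∫ ω, (V₁ ω + V₂ ω) ∂μ) = (∫ ω, V₁ ω ∂μ) + (∫ ω, V₂ ω ∂μ) :=
    integral_add (hV₁.integrable μ) (hV₂.integrable μ)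
  rw [e1, e2, e3]; ring

lemma cov_add_left (μ : Measure Ω) [IsProbabilityMeasure μ]
    {U₁ U₂ V : Ω → ℝ} {C₁ C₂ D : ℝ}
    (hU₁ : BM U₁ C₁) (hU₂ : BM U₂ C₂) (hV : BM V D) :
    cov μ (fun ω => U₁ ω + U₂ ω) V = cov μ U₁ V + cov μ U₂ V := by
  unfold cov
  have e1 : (∫ ω, (U₁ ω + U₂ ω) * V ω ∂μ)
      = (∫ ω, U₁ ω * V ω ∂μ) + (∫ ω, U₂ ω * V ω ∂μ) := by
    rw [← integral_add ((hU₁.mul hV).integrable μ) ((hU₂.mul hV).integrable μ)]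
    apply integral_congr_ae (ae_of_all _ (fun ω => by ring))
  have e2 : (∫ ω, (U₁ ω + U₂ ω) ∂μ) = (∫ ω, U₁ ω ∂μ) + (∫ ω, U₂ ω ∂μ) :=
    integral_add (hU₁.integrable μ) (hU₂.integrable μ)
  rw [e1, e2]; ring

lemma cov_add_right (μ : Measure Ω) [IsProbabilityMeasure μ]
    {U V₁ V₂ : Ω → ℝ} {C D₁ D₂ : ℝ}
    (hU : BM U C) (hV₁ : BM V₁ D₁) (hV₂ : BM V₂ D₂) :
    cov μ U (fun ω => V₁ ω + V₂ ω) = cov μ U V₁ + cov μ U V₂ := by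
  unfold cov
  have e1 : (∫ ω, U ω * (V₁ ω + V₂ ω) ∂μ)
      = (∫ ω, U ω * V₁ ω ∂μ) + (∫ ω, U ω * V₂ ω ∂μ) := by
    rw [← integral_add ((hU.mul hV₁).integrable μ) ((hU.mul hV₂).integrable μ)]
    apply integral_congr_ae (ae_of_all _ (fun ω => by ring))
  have e2 : (∫ ω, (V₁ ω + V₂ ω) ∂μ) = (∫ ω, V₁ ω ∂μ) + (∫ ω, V₂ ω ∂μ) :=
    integral_add (hV₁.integrable μ) (hV₂.integrable μ)
  rw [e1, e2]; ring

lemma cov_neg_right (μ : Measure Ω) (U V : Ω → ℝ) :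
    cov μ U (fun ω => -(V ω)) = -cov μ U V := by
  unfold cov
  have : (fun ω => U ω * -(V ω)) = fun ω => -(U ω * V ω) := by funext ω; ring
  rw [this, integral_neg, integral_neg]; ring

lemma cov_neg_left (μ : Measure Ω) (U V : Ω → ℝ) :
    cov μ (fun ω => -(U ω)) V = -cov μ U V := by
  unfold cov
  have : (fun ω => -(U ω) * V ω) = fun ω => -(U ω * V ω) := by funext ω; ring
  rw [this, integral_neg, integral_neg]; ring

/-- covariance is unchanged by adding constants. -/
lemma cov_shift (μ : Measure Ω) [IsProbabilityMeasure μ]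
    {U V : Ω → ℝ} {C D : ℝ} (hU : BM U C) (hV : BM V D) (c d : ℝ) :
    cov μ (fun ω => U ω + c) (fun ω => V ω + d) = cov μ U V := by
  unfold cov
  have e1 : (∫ ω, (U ω + c) * (V ω + d) ∂μ)
      = (∫ ω, U ω * V ω ∂μ) + d * (∫ ω, U ω ∂μ) + c * (∫ ω, V ω ∂μ) + c * d := by
    have : (fun ω => (U ω + c) * (V ω + d))
        = fun ω => U ω * V ω + (d * U ω + (c * V ω + c * d)) := by funext ω; ring
    rw [this, integral_add ((hU.mul hV).integrable μ), integral_add, integral_add,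
      integral_const, integral_const_mul, integral_const_mul]
    · simp; ring
    · exact ((hV.integrable μ).const_mul c)
    · exact integrable_const _
    · exact ((hU.integrable μ).const_mul d)
    · exact Integrable.add ((hV.integrable μ).const_mul c) (integrable_const _)
    · exact Integrable.add ((hU.integrable μ).const_mul d)
        (Integrable.add ((hV.integrable μ).const_mul c) (integrable_const _))
  have e2 : (∫ ω, (U ω + c) ∂μ) = (∫ ω, U ω ∂μ) + c := by
    rw [integral_add (hU.integrable μ) (integrable_const _), integral_const]; simp
  have e3 : (∫ ω, (V ω + d) ∂μ) = (∫ ω, V ω ∂μ) + d := by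
    rw [integral_add (hV.integrable μ) (integrable_const _), integral_const]; simp
  rw [e1, e2, e3]; ring

/-- Sublevel sets of continuous monotone functions are `∅`, `univ` or `Iic c`. -/
lemma sublevel_cases {f : ℝ → ℝ} (hmono : Monotone f) (hcont : Continuous f) (u : ℝ) :
    {x | f x ≤ u} = ∅ ∨ {x | f x ≤ u} = Set.univ ∨ ∃ c, {x | f x ≤ u} = Set.Iic c := by
  set S := {x | f x ≤ u} with hS
  have hclosed : IsClosed S := isClosed_le hcont continuous_const
  have hlower : ∀ x y, x ≤ y → y ∈ S → x ∈ S := fun x y hxy hy =>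
    le_trans (hmono hxy) hy
  by_cases hne : S = ∅
  · exact Or.inl hne
  right
  have hne' : S.Nonempty := nonempty_iff_ne_empty.2 hne
  by_cases hbdd : BddAbove S
  · right
    refine ⟨sSup S, ?_⟩
    have hmem : sSup S ∈ S := hclosed.csSup_mem hne' hbdd
    ext x
    constructor
    · intro hx; exact le_csSup hbdd hx
    · intro hx; exact hlower x (sSup S) hx hmem
  · left
    ext x
    simp only [mem_univ, iff_true]
    obtain ⟨y, hy, hxy⟩ := not_bddAbove_iff.1 hbdd x
    exact hlower x y hxy.le hy

/-- From lower-tail PQD to upper-tail PQD, in `ℝ≥0∞`. -/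
lemma upper_pqd (μ : Measure Ω) [IsProbabilityMeasure μ]
    {U V : Ω → ℝ} (hU : Measurable U) (hV : Measurable V)
    (h : ∀ u v : ℝ, (μ {ω | U ω ≤ u}).toReal * (μ {ω | V ω ≤ v}).toReal ≤
        (μ {ω | U ω ≤ u ∧ V ω ≤ v}).toReal) (u v : ℝ) :
    μ {ω | u < U ω} * μ {ω | v < V ω} ≤ μ {ω | u < U ω ∧ v < V ω} := by
  set A := {ω | U ω ≤ u} with hA
  set B := {ω | V ω ≤ v} with hB
  have hAm : MeasurableSet A := hU measurableSet_Iic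
  have hBm : MeasurableSet B := hV measurableSet_Iic
  have hAc : {ω | u < U ω} = Aᶜ := by ext ω; simp [hA, not_le]
  have hBc : {ω | v < V ω} = Bᶜ := by ext ω; simp [hB, not_le]
  have hABc : {ω | u < U ω ∧ v < V ω} = Aᶜ ∩ Bᶜ := by
    ext ω; simp [hA, hB, not_le, mem_inter_iff]
  rw [hAc, hBc, hABc]
  have fin : ∀ s : Set Ω, μ s ≠ ⊤ := fun s => measure_ne_top μ s
  rw [← ENNReal.ofReal_toReal (fin Aᶜ), ← ENNReal.ofReal_toReal (fin Bᶜ),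
    ← ENNReal.ofReal_toReal (fin (Aᶜ ∩ Bᶜ)), ← ENNReal.ofReal_mul ENNReal.toReal_nonneg]
  apply ENNReal.ofReal_le_ofReal
  have hcompl : ∀ (s : Set Ω), MeasurableSet s → (μ sᶜ).toReal = 1 - (μ s).toReal := by
    intro s hs
    rw [measure_compl hs (fin s)]
    rw [ENNReal.toReal_sub_of_le (measure_mono (subset_univ s)) (fin univ)]
    simp
  have hunion : (μ (A ∪ B)).toReal + (μ (A ∩ B)).toReal = (μ A).toReal + (μ B).toReal := by
    rw [← ENNReal.toReal_add (fin _) (fin _), ← ENNReal.toReal_add (fin _) (fin _),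
      measure_union_add_inter' hAm B]
  have hic : (μ (Aᶜ ∩ Bᶜ)).toReal = 1 - (μ A).toReal - (μ B).toReal + (μ (A ∩ B)).toReal := by
    rw [← compl_union, hcompl _ (hAm.union hBm)]
    linarith
  rw [hcompl A hAm, hcompl B hBm, hic]
  have hABeq : {ω | U ω ≤ u ∧ V ω ≤ v} = A ∩ B := rfl
  have := h u v
  rw [hABeq] at this
  nlinarith [this]

lemma pqd_comp (μ : Measure Ω) [IsProbabilityMeasure μ]
    {X Y : Ω → ℝ}
    (hpqd : ∀ u v : ℝ,
        (μ {ω | X ω ≤ u}).toReal * (μ {ω | Y ω ≤ v}).toReal ≤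
          (μ {ω | X ω ≤ u ∧ Y ω ≤ v}).toReal)
    {f g : ℝ → ℝ} (hfm : Monotone f) (hfc : Continuous f)
    (hgm : Monotone g) (hgc : Continuous g) :
    ∀ u v : ℝ,
      (μ {ω | f (X ω) ≤ u}).toReal * (μ {ω | g (Y ω) ≤ v}).toReal ≤
        (μ {ω | f (X ω) ≤ u ∧ g (Y ω) ≤ v}).toReal := by
  intro u v
  rcases sublevel_cases hfm hfc u with hS | hS | ⟨c, hS⟩
  · have h0 : {ω | f (X ω) ≤ u} = (∅ : Set Ω) := by
      ext ω; simpa using (Set.ext_iff.1 hS (X ω))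
    rw [h0]
    simp [ENNReal.toReal_nonneg]
  · have hall : ∀ x, f x ≤ u := fun x => (Set.ext_iff.1 hS x).2 (mem_univ x)
    have h1 : {ω | f (X ω) ≤ u} = (univ : Set Ω) := by ext ω; simp [hall]
    have h2 : {ω | f (X ω) ≤ u ∧ g (Y ω) ≤ v} = {ω | g (Y ω) ≤ v} := by
      ext ω; simp [hall]
    rw [h1, h2]
    simp
  · rcases sublevel_cases hgm hgc v with hT | hT | ⟨d, hT⟩
    · have h0 : {ω | g (Y ω) ≤ v} = (∅ : Set Ω) := by
        ext ω; simpa using (Set.ext_iff.1 hT (Y ω))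
      rw [h0]
      simp [ENNReal.toReal_nonneg]
    · have hall : ∀ x, g x ≤ v := fun x => (Set.ext_iff.1 hT x).2 (mem_univ x)
      have h1 : {ω | g (Y ω) ≤ v} = (univ : Set Ω) := by ext ω; simp [hall]
      have h2 : {ω | f (X ω) ≤ u ∧ g (Y ω) ≤ v} = {ω | f (X ω) ≤ u} := by
        ext ω; simp [hall]
      rw [h1, h2]
      simp
    · have hfc' : ∀ x, f x ≤ u ↔ x ≤ c := fun x => by
        have := Set.ext_iff.1 hS x; simpa using this
      have hgd : ∀ x, g x ≤ v ↔ x ≤ d := fun x => by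
        have := Set.ext_iff.1 hT x; simpa using this
      have h1 : {ω | f (X ω) ≤ u} = {ω | X ω ≤ c} := by ext ω; simp [hfc']
      have h2 : {ω | g (Y ω) ≤ v} = {ω | Y ω ≤ d} := by ext ω; simp [hgd]
      have h3 : {ω | f (X ω) ≤ u ∧ g (Y ω) ≤ v} = {ω | X ω ≤ c ∧ Y ω ≤ d} := by
        ext ω; simp [hfc', hgd]
      rw [h1, h2, h3]
      exact hpqd c d

lemma cov_nonneg (μ : Measure Ω) [IsProbabilityMeasure μ]
    {U V : Ω → ℝ} {C D : ℝ} (hU : BM U C) (hV : BM V D)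
    (h : ∀ u v : ℝ, (μ {ω | U ω ≤ u}).toReal * (μ {ω | V ω ≤ v}).toReal ≤
        (μ {ω | U ω ≤ u ∧ V ω ≤ v}).toReal) :
    0 ≤ cov μ U V := by
  set U' : Ω → ℝ := fun ω => U ω + C with hU'
  set V' : Ω → ℝ := fun ω => V ω + D with hV'
  have hU'm : Measurable U' := hU.1.add measurable_const
  have hV'm : Measurable V' := hV.1.add measurable_const
  have hU'0 : ∀ ω, 0 ≤ U' ω := fun ω => by
    have := abs_le.1 (hU.2 ω); simp only [hU']; linarith [this.1]
  have hV'0 : ∀ ω, 0 ≤ V' ω := fun ω => by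
    have := abs_le.1 (hV.2 ω); simp only [hV']; linarith [this.1]
  have hU'le : ∀ ω, U' ω ≤ 2 * C := fun ω => by
    have := abs_le.1 (hU.2 ω); simp only [hU']; linarith [this.2]
  have hV'le : ∀ ω, V' ω ≤ 2 * D := fun ω => by
    have := abs_le.1 (hV.2 ω); simp only [hV']; linarith [this.2]
  have h' : ∀ u v : ℝ, (μ {ω | U' ω ≤ u}).toReal * (μ {ω | V' ω ≤ v}).toReal ≤
      (μ {ω | U' ω ≤ u ∧ V' ω ≤ v}).toReal := by
    intro u v
    have e1 : {ω | U' ω ≤ u} = {ω | U ω ≤ u - C} := by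
      ext ω; simp only [hU', mem_setOf_eq]; constructor <;> intro <;> linarith
    have e2 : {ω | V' ω ≤ v} = {ω | V ω ≤ v - D} := by
      ext ω; simp only [hV', mem_setOf_eq]; constructor <;> intro <;> linarith
    have e3 : {ω | U' ω ≤ u ∧ V' ω ≤ v} = {ω | U ω ≤ u - C ∧ V ω ≤ v - D} := by
      ext ω; simp only [hU', hV', mem_setOf_eq]
      constructor <;> rintro ⟨h1, h2⟩ <;> exact ⟨by linarith, by linarith⟩
    rw [e1, e2, e3]; exact h _ _
  have key := key_lintegral μ hU'm hV'm hU'0 hV'0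
    (fun u v _ _ => upper_pqd μ hU'm hV'm h' u v)
  have ha : ∫ ω, U' ω ∂μ = (∫⁻ ω, ENNReal.ofReal (U' ω) ∂μ).toReal :=
    integral_eq_lintegral_of_nonneg_ae (ae_of_all _ hU'0) hU'm.aestronglyMeasurable
  have hb : ∫ ω, V' ω ∂μ = (∫⁻ ω, ENNReal.ofReal (V' ω) ∂μ).toReal :=
    integral_eq_lintegral_of_nonneg_ae (ae_of_all _ hV'0) hV'm.aestronglyMeasurable
  have hc : ∫ ω, U' ω * V' ω ∂μ = (∫⁻ ω, ENNReal.ofReal (U' ω * V' ω) ∂μ).toReal :=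
    integral_eq_lintegral_of_nonneg_ae
      (ae_of_all _ (fun ω => mul_nonneg (hU'0 ω) (hV'0 ω)))
      (hU'm.mul hV'm).aestronglyMeasurable
  have hfin : (∫⁻ ω, ENNReal.ofReal (U' ω * V' ω) ∂μ) ≠ ⊤ := by
    have hbd : (∫⁻ ω, ENNReal.ofReal (U' ω * V' ω) ∂μ)
        ≤ ∫⁻ _, ENNReal.ofReal (2 * C * (2 * D)) ∂μ := by
      apply lintegral_mono
      intro ω
      exact ENNReal.ofReal_le_ofReal
        (mul_le_mul (hU'le ω) (hV'le ω) (hV'0 ω) (by linarith [hU'0 ω, hU'le ω]))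
    rw [lintegral_const] at hbd
    exact ne_top_of_le_ne_top (by simp) hbd
  have hcov' : 0 ≤ cov μ U' V' := by
    unfold cov
    rw [ha, hb, hc, ← ENNReal.toReal_mul]
    have := ENNReal.toReal_mono hfin key
    linarith
  have := cov_shift μ hU hV C D
  simpa [hU', hV'] using this ▸ hcov'

end PQDAux

open PQDAux Set

/-- truncated covariances of a PQD pair. -/
theorem pqd_truncated_cov
    (μ : Measure Ω) [IsProbabilityMeasure μ]
    (X Y : Ω → ℝ) (hX : Measurable X) (hY : Measurable Y)
    (hpqd : ∀ u v : ℝ,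
        (μ {ω | X ω ≤ u}).toReal * (μ {ω | Y ω ≤ v}).toReal ≤
          (μ {ω | X ω ≤ u ∧ Y ω ≤ v}).toReal)
    (L K : ℝ) (hL : 0 < L) (hLK : L ≤ K)
    (hX2 : Integrable (fun ω => (X ω) ^ 2) μ)
    (hY2 : Integrable (fun ω => (Y ω) ^ 2) μ) :
    0 ≤ Gcov μ X Y L ∧ Gcov μ X Y L ≤ Gcov μ X Y K ∧
      max (Gcov μ X Y L) 0 + max (Hcov μ X Y L K) 0 ≤ Gcov μ X Y K := by
  -- positive and negative parts of gtr K - gtr L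
  set p : ℝ → ℝ := fun t => max (min t K - L) 0 with hp
  set n : ℝ → ℝ := fun t => min (max t (-K) + L) 0 with hn
  -- function facts
  have hgm : ∀ M : ℝ, Monotone (gtr M) := fun M =>
    monotone_const.max (monotone_id.min monotone_const)
  have hgc : ∀ M : ℝ, Continuous (gtr M) := fun M => by
    unfold gtr; fun_prop
  have hpm : Monotone p := by
    intro a b hab
    simp only [hp]
    apply max_le_max _ le_rfl
    have := min_le_min hab (le_refl K)
    linarith
  have hnm : Monotone n := by
    intro a b hab
    simp only [hn]
    apply min_le_min _ le_rfl
    have := max_le_max hab (le_refl (-K))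
    linarith
  have hpc : Continuous p := by simp only [hp]; fun_prop
  have hnc : Continuous n := by simp only [hn]; fun_prop
  have hgb : ∀ t, |gtr L t| ≤ L := by
    intro t
    rw [abs_le]
    constructor
    · exact le_max_left _ _
    · exact max_le (by linarith) ((min_le_right t L))
  have hgbK : ∀ t, |gtr K t| ≤ K := by
    intro t
    rw [abs_le]
    constructor
    · exact le_max_left _ _
    · exact max_le (by linarith) ((min_le_right t K))
  have hpb : ∀ t, |p t| ≤ K := by
    intro t
    rw [abs_le]
    simp only [hp]
    constructor
    · have : (0:ℝ) ≤ max (min t K - L) 0 := le_max_right _ _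
      linarith
    · apply max_le _ (by linarith)
      have := min_le_right t K
      linarith
  have hnb : ∀ t, |n t| ≤ K := by
    intro t
    rw [abs_le]
    simp only [hn]
    constructor
    · apply le_min _ (by linarith)
      have := le_max_right t (-K)
      linarith
    · have : min (max t (-K) + L) 0 ≤ 0 := min_le_right _ _
      linarith
  -- the key decomposition identities
  have id1 : ∀ t, gtr K t = gtr L t + (p t + n t) := by
    intro t
    simp only [gtr, hp, hn, max_def, min_def]
    split_ifs <;> linarith
  have id2 : ∀ t, htr L K t = p t + -(n t) := by
    intro t
    have h1 : gtr K t - gtr L t = p t + n t := by linarith [id1 t]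
    have hp0 : 0 ≤ p t := le_max_right _ _
    have hn0 : n t ≤ 0 := min_le_right _ _
    have hpn : p t = 0 ∨ n t = 0 := by
      by_cases ht : t ≤ 0
      · left
        simp only [hp]
        apply max_eq_right
        rcases le_total t K with h | h
        · rw [min_eq_left h]; linarith
        · rw [min_eq_right h]; linarith
      · right
        simp only [hn]
        apply min_eq_right
        rcases le_total t (-K) with h | h
        · linarith
        · rw [max_eq_left h]; linarith
    unfold htr
    rw [h1]
    rcases hpn with h | h
    · rw [h, zero_add, abs_of_nonpos hn0]; ring
    · rw [h, add_zero, abs_of_nonneg hp0]; ring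
  -- bounded measurable data
  have bmgX : BM (fun ω => gtr L (X ω)) L := ⟨((hgc L).measurable).comp hX, fun ω => hgb _⟩
  have bmgY : BM (fun ω => gtr L (Y ω)) L := ⟨((hgc L).measurable).comp hY, fun ω => hgb _⟩
  have bmpX : BM (fun ω => p (X ω)) K := ⟨(hpc.measurable).comp hX, fun ω => hpb _⟩
  have bmpY : BM (fun ω => p (Y ω)) K := ⟨(hpc.measurable).comp hY, fun ω => hpb _⟩
  have bmnX : BM (fun ω => n (X ω)) K := ⟨(hnc.measurable).comp hX, fun ω => hnb _⟩
  have bmnY : BM (fun ω => n (Y ω)) K := ⟨(hnc.measurable).comp hY, fun ω => hnb _⟩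
  -- the nine covariances are nonnegative
  have cnn : ∀ (f g : ℝ → ℝ), Monotone f → Continuous f → Monotone g → Continuous g →
      (∀ t, |f t| ≤ K) → (∀ t, |g t| ≤ K) →
      0 ≤ cov μ (fun ω => f (X ω)) (fun ω => g (Y ω)) := by
    intro f g hfm hfc hgm' hgc' hfb hgb'
    exact cov_nonneg μ ⟨hfc.measurable.comp hX, fun ω => hfb _⟩
      ⟨hgc'.measurable.comp hY, fun ω => hgb' _⟩
      (pqd_comp μ hpqd hfm hfc hgm' hgc')
  have hgbK' : ∀ t, |gtr L t| ≤ K := fun t => (hgb t).trans hLK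
  have c11 := cnn (gtr L) (gtr L) (hgm L) (hgc L) (hgm L) (hgc L) hgbK' hgbK'
  have c12 := cnn (gtr L) p (hgm L) (hgc L) hpm hpc hgbK' hpb
  have c13 := cnn (gtr L) n (hgm L) (hgc L) hnm hnc hgbK' hnb
  have c21 := cnn p (gtr L) hpm hpc (hgm L) (hgc L) hpb hgbK'
  have c22 := cnn p p hpm hpc hpm hpc hpb hpb
  have c23 := cnn p n hpm hpc hnm hnc hpb hnb
  have c31 := cnn n (gtr L) hnm hnc (hgm L) (hgc L) hnb hgbK'
  have c32 := cnn n p hnm hnc hpm hpc hnb hpb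
  have c33 := cnn n n hnm hnc hnm hnc hnb hnb
  -- expand Gcov K
  have hGK : Gcov μ X Y K
      = cov μ (fun ω => gtr L (X ω)) (fun ω => gtr L (Y ω))
        + (cov μ (fun ω => gtr L (X ω)) (fun ω => p (Y ω))
          + cov μ (fun ω => gtr L (X ω)) (fun ω => n (Y ω)))
        + (cov μ (fun ω => p (X ω)) (fun ω => gtr L (Y ω))
          + cov μ (fun ω => n (X ω)) (fun ω => gtr L (Y ω)))
        + (cov μ (fun ω => p (X ω)) (fun ω => p (Y ω))
          + cov μ (fun ω => p (X ω)) (fun ω => n (Y ω))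
          + cov μ (fun ω => n (X ω)) (fun ω => p (Y ω))
          + cov μ (fun ω => n (X ω)) (fun ω => n (Y ω))) := by
    have e0 : Gcov μ X Y K = cov μ (fun ω => gtr L (X ω) + (p (X ω) + n (X ω)))
        (fun ω => gtr L (Y ω) + (p (Y ω) + n (Y ω))) := by
      unfold Gcov
      congr 1 <;> funext ω <;> rw [id1]
    rw [e0, cov_add_add μ bmgX (bmpX.add bmnX) bmgY (bmpY.add bmnY),
      cov_add_right μ bmgX bmpY bmnY,
      cov_add_left μ bmpX bmnX bmgY,
      cov_add_add μ bmpX bmnX bmpY bmnY]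
    try ring
  -- expand Hcov
  have hH : Hcov μ X Y L K
      = cov μ (fun ω => p (X ω)) (fun ω => p (Y ω))
        - cov μ (fun ω => p (X ω)) (fun ω => n (Y ω))
        - cov μ (fun ω => n (X ω)) (fun ω => p (Y ω))
        + cov μ (fun ω => n (X ω)) (fun ω => n (Y ω)) := by
    have e0 : Hcov μ X Y L K = cov μ (fun ω => p (X ω) + -(n (X ω)))
        (fun ω => p (Y ω) + -(n (Y ω))) := by
      unfold Hcov
      congr 1 <;> funext ω <;> rw [id2]
    rw [e0, cov_add_add μ bmpX bmnX.neg bmpY bmnY.neg,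
      cov_neg_right μ _ (fun ω => n (Y ω)),
      cov_neg_left μ (fun ω => n (X ω)) _,
      cov_neg_left μ (fun ω => n (X ω)) _,
      cov_neg_right μ _ (fun ω => n (Y ω))]
    ring
  have hGL : Gcov μ X Y L = cov μ (fun ω => gtr L (X ω)) (fun ω => gtr L (Y ω)) := rfl
  refine ⟨by rw [hGL]; exact c11, by rw [hGL, hGK]; linarith, ?_⟩
  rw [hGL, hGK, hH]
  rw [max_eq_left c11]
  have hmax : max (cov μ (fun ω => p (X ω)) (fun ω => p (Y ω))
        - cov μ (fun ω => p (X ω)) (fun ω => n (Y ω))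
        - cov μ (fun ω => n (X ω)) (fun ω => p (Y ω))
        + cov μ (fun ω => n (X ω)) (fun ω => n (Y ω))) 0
      ≤ cov μ (fun ω => p (X ω)) (fun ω => p (Y ω))
        + cov μ (fun ω => p (X ω)) (fun ω => n (Y ω))
        + cov μ (fun ω => n (X ω)) (fun ω => p (Y ω))
        + cov μ (fun ω => n (X ω)) (fun ω => n (Y ω)) := by
    apply max_le <;> linarith
  linarith
end
end
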